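/- arXiv:1003.2124 — 10 statements merged into one kernel-verified Lean document; each statement's English description precedes it below -/
import Mathlib

section
/- The number of inverting compositions of length n equals n!. -/
/-- The largest part of a composition (0 for the empty composition). -/
def maxPart (α : List ℕ) : ℕ := α.foldr max 0

/-- A composition: a list of positive integers. -/
def IsComposition (α : List ℕ) : Prop := ∀ x ∈ α, 0 < x

/-- A composition is inverting if for each `i > 1` not exceeding the largest part,
there are indices `s < t` with `α_s = i` and `α_t = i - 1`. -/
def Inverting (α : List ℕ) : Prop :=
  ∀ i, 1 < i → i ≤ maxPart α →
    ∃ s t, s < t ∧ t < α.length ∧ α.getD s 0 = i ∧ α.getD t 0 = i - 1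

namespace InvertingProof

/-- last element, 0 for empty list -/
def lastI : List ℕ → ℕ
  | [] => 0
  | [a] => a
  | _ :: b :: t => lastI (b :: t)

@[simp] lemma lastI_nil : lastI [] = 0 := rfl
@[simp] lemma lastI_singleton (a : ℕ) : lastI [a] = a := rfl
@[simp] lemma lastI_cons_cons (a b : ℕ) (t : List ℕ) :
    lastI (a :: b :: t) = lastI (b :: t) := rfl

lemma lastI_mem {L : List ℕ} (h : L ≠ []) : lastI L ∈ L := by
  induction L with
  | nil => simp at h
  | cons a t ih =>
    cases t with
    | nil => simp
    | cons b t' => simpa using Or.inr (ih (by simp))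

lemma headI_mem {L : List ℕ} (h : L ≠ []) : L.headI ∈ L := by
  cases L with
  | nil => simp at h
  | cons a t => simp

lemma headI_le_of_sorted {L : List ℕ} (hL : L.Pairwise (· < ·)) {x : ℕ} (hx : x ∈ L) :
    L.headI ≤ x := by
  cases L with
  | nil => simp at hx
  | cons a t =>
    rcases List.mem_cons.mp hx with rfl | hx
    · simp
    · exact le_of_lt ((List.pairwise_cons.mp hL).1 x hx)

lemma le_lastI_of_sorted {L : List ℕ} (hL : L.Pairwise (· < ·)) {x : ℕ} (hx : x ∈ L) :
    x ≤ lastI L := by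
  induction L with
  | nil => simp at hx
  | cons a t ih =>
    cases t with
    | nil =>
      rcases List.mem_cons.mp hx with rfl | hx
      · simp
      · simp at hx
    | cons b t' =>
      rcases List.mem_cons.mp hx with rfl | hx
      · have h1 : x < b := (List.pairwise_cons.mp hL).1 b (by simp)
        have h2 : b ≤ lastI (b :: t') :=
          headI_le_of_sorted (List.pairwise_cons.mp hL).2
            (lastI_mem (by simp))
        simpa using le_of_lt (lt_of_lt_of_le h1 h2)
      · simpa using ih (List.pairwise_cons.mp hL).2 hx

end InvertingProof

namespace InvertingProof

/-- boundary relation between consecutive runs: next run starts lower than current ends -/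
def Bdry (A B : List ℕ) : Prop := B.headI < lastI A

/-- split a list into maximal (strictly) increasing runs -/
def splitRuns : List ℕ → List (List ℕ)
  | [] => []
  | a :: t =>
    match splitRuns t with
    | [] => [[a]]
    | B :: rs => if a < B.headI then (a :: B) :: rs else [a] :: B :: rs

lemma flatten_splitRuns (l : List ℕ) : (splitRuns l).flatten = l := by
  induction l with
  | nil => rfl
  | cons a t ih =>
    rw [splitRuns]
    rcases h : splitRuns t with _ | ⟨B, rs⟩
    · rw [h] at ih; simp at ih; simp [ih]
    · rw [h] at ih
      by_cases hab : a < B.headI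
      · simp only [if_pos hab, List.flatten, List.cons_append]
        simpa using ih
      · simp only [if_neg hab, List.flatten, List.singleton_append]
        simpa using ih

lemma splitRuns_runs (l : List ℕ) :
    ∀ B ∈ splitRuns l, B ≠ [] ∧ List.IsChain (· < ·) B := by
  induction l with
  | nil => simp [splitRuns]
  | cons a t ih =>
    rw [splitRuns]
    rcases h : splitRuns t with _ | ⟨B, rs⟩
    · intro C hC; simp at hC; subst hC; exact ⟨by simp, by simp⟩
    · rw [h] at ih
      by_cases hab : a < B.headI
      · simp only [if_pos hab]
        intro C hC
        rcases List.mem_cons.mp hC with rfl | hC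
        · have hB := ih B (by simp)
          refine ⟨by simp, List.isChain_cons.mpr ⟨?_, hB.2⟩⟩
          intro y hy
          rcases B with _ | ⟨b, B'⟩
          · simp at hy
          · simp at hy; subst hy; simpa using hab
        · exact ih C (List.mem_cons_of_mem _ hC)
      · simp only [if_neg hab]
        intro C hC
        rcases List.mem_cons.mp hC with rfl | hC
        · exact ⟨by simp, by simp⟩
        · exact ih C hC

end InvertingProof

namespace InvertingProof

lemma mem_of_mem_splitRuns {l B : List ℕ} {x : ℕ} (hB : B ∈ splitRuns l) (hx : x ∈ B) :
    x ∈ l := by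
  rw [← flatten_splitRuns l]
  exact List.mem_flatten.mpr ⟨B, hB, hx⟩

lemma splitRuns_bdry {l : List ℕ} (h : l.Nodup) : List.IsChain Bdry (splitRuns l) := by
  induction l with
  | nil => simp [splitRuns]
  | cons a t ih =>
    have ht : t.Nodup := (List.nodup_cons.mp h).2
    have hat : a ∉ t := (List.nodup_cons.mp h).1
    rw [splitRuns]
    rcases hs : splitRuns t with _ | ⟨B, rs⟩
    · simp
    · have ihc := ih ht; rw [hs] at ihc
      by_cases hab : a < B.headI
      · simp only [if_pos hab]
        -- Chain' Bdry ((a :: B) :: rs) from Chain' Bdry (B :: rs)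
        rcases rs with _ | ⟨C, rs'⟩
        · simp
        · refine List.isChain_cons.mpr ⟨?_, (List.isChain_cons.mp ihc).2⟩
          intro y hy
          simp at hy; subst hy
          have hBne : B ≠ [] := (splitRuns_runs t B (by rw [hs]; simp)).1
          have : Bdry B C := (List.isChain_cons_cons.mp ihc).1
          unfold Bdry at this ⊢
          rcases B with _ | ⟨b, B'⟩
          · exact absurd rfl hBne
          · simpa using this
      · simp only [if_neg hab]
        refine List.isChain_cons_cons.mpr ⟨?_, ihc⟩
        have hBne : B ≠ [] := (splitRuns_runs t B (by rw [hs]; simp)).1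
        have hmem : B.headI ∈ t := mem_of_mem_splitRuns (l := t) (by rw [hs]; simp) (headI_mem hBne)
        have hne : B.headI ≠ a := fun hEq => hat (hEq ▸ hmem)
        unfold Bdry
        simp only [lastI_singleton]
        omega

/-- uniqueness: splitRuns of a join of valid runs recovers the runs -/
lemma splitRuns_append {B t : List ℕ} (hne : B ≠ []) (hch : List.IsChain (· < ·) B)
    (hcond : splitRuns t = [] ∨ (splitRuns t).headI.headI < lastI B) :
    splitRuns (B ++ t) = B :: splitRuns t := by
  induction B with
  | nil => exact absurd rfl hne
  | cons a B' ih =>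
    rcases B' with _ | ⟨a', B''⟩
    · -- B = [a]
      simp only [List.singleton_append]
      rw [splitRuns]
      rcases hs : splitRuns t with _ | ⟨C, rs⟩
      · rfl
      · rcases hcond with hc | hc
        · rw [hs] at hc; cases hc
        · rw [hs] at hc; simp at hc
          have : ¬ a < C.headI := by omega
          simp [this]
    · -- B = a :: a' :: B''
      have hch' : List.IsChain (· < ·) (a' :: B'') := (List.isChain_cons_cons.mp hch).2
      have haa' : a < a' := (List.isChain_cons_cons.mp hch).1
      have hcond' : splitRuns t = [] ∨ (splitRuns t).headI.headI < lastI (a' :: B'') := by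
        simpa using hcond
      have ih' := ih (by simp) hch' hcond'
      simp only [List.cons_append]
      rw [splitRuns, List.cons_append] at *
      rw [ih']
      simp [haa']

lemma splitRuns_flatten {bs : List (List ℕ)}
    (hne : ∀ B ∈ bs, B ≠ []) (hch : ∀ B ∈ bs, List.IsChain (· < ·) B)
    (hb : List.IsChain Bdry bs) : splitRuns bs.flatten = bs := by
  induction bs with
  | nil => rfl
  | cons B bs ih =>
    have ih' := ih (fun C hC => hne C (List.mem_cons_of_mem _ hC))
      (fun C hC => hch C (List.mem_cons_of_mem _ hC)) (List.isChain_cons.mp hb).2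
    rw [show (B :: bs).flatten = B ++ bs.flatten from rfl,
      splitRuns_append (hne B (by simp)) (hch B (by simp)) ?_, ih']
    rw [ih']
    rcases bs with _ | ⟨C, bs'⟩
    · exact Or.inl rfl
    · right
      have : Bdry B C := (List.isChain_cons_cons.mp hb).1
      simpa [Bdry] using this

end InvertingProof

namespace InvertingProof

def runIdx : List (List ℕ) → ℕ → ℕ
  | [], _ => 0
  | B :: bs, v => if v ∈ B then 0 else runIdx bs v + 1

lemma runIdx_spec {bs : List (List ℕ)} {v : ℕ} (h : v ∈ bs.flatten) :
    runIdx bs v < bs.length ∧ v ∈ bs.getD (runIdx bs v) [] := by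
  induction bs with
  | nil => simp at h
  | cons B bs ih =>
    by_cases hv : v ∈ B
    · simp [runIdx, hv]
    · have hj : v ∈ bs.flatten := by
        rcases List.mem_flatten.mp h with ⟨C, hC, hvC⟩
        rcases List.mem_cons.mp hC with rfl | hC
        · exact absurd hvC hv
        · exact List.mem_flatten.mpr ⟨C, hC, hvC⟩
      have := ih hj
      simp only [runIdx, if_neg hv]
      exact ⟨by simpa using this.1, by simpa using this.2⟩

lemma runIdx_eq {bs : List (List ℕ)} (hd : List.Pairwise List.Disjoint bs)
    {i v : ℕ} (hi : i < bs.length) (hv : v ∈ bs.getD i []) : runIdx bs v = i := by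
  induction bs generalizing i with
  | nil => simp at hi
  | cons B bs ih =>
    rcases i with _ | i
    · simp at hv; simp [runIdx, hv]
    · have hvB : v ∉ B := by
        intro hvB
        have hilt : i < bs.length := by simpa using hi
        have hmem : bs.getD i [] ∈ bs := by
          rw [List.getD_eq_getElem _ _ hilt]
          exact List.getElem_mem hilt
        exact (List.pairwise_cons.mp hd).1 _ hmem hvB (by simpa using hv)
      simp only [runIdx, if_neg hvB]
      have := ih (List.pairwise_cons.mp hd).2 (by simpa using hi) (by simpa using hv)
      omega

lemma le_maxPart {α : List ℕ} {x : ℕ} (h : x ∈ α) : x ≤ maxPart α := by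
  induction α with
  | nil => simp at h
  | cons a t ih =>
    rcases List.mem_cons.mp h with rfl | h
    · simp [maxPart]
    · exact le_trans (ih h) (by simp [maxPart])

lemma maxPart_le {α : List ℕ} {k : ℕ} (h : ∀ x ∈ α, x ≤ k) : maxPart α ≤ k := by
  induction α with
  | nil => simp [maxPart]
  | cons a t ih =>
    simp only [maxPart, List.foldr] at *
    exact max_le (h a (by simp)) (ih fun x hx => h x (List.mem_cons_of_mem _ hx))

end InvertingProof

namespace InvertingProof

def blk (n : ℕ) (α : List ℕ) (i : ℕ) : List ℕ :=
  (List.range n).filter (fun v => α.getD v 0 = i + 1)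

def blocksList (n : ℕ) (α : List ℕ) : List (List ℕ) :=
  (List.range (maxPart α)).map (blk n α)

def gword (n : ℕ) (α : List ℕ) : List ℕ := (blocksList n α).flatten

lemma letter_pos {n : ℕ} {α : List ℕ} (hlen : α.length = n) (hc : IsComposition α)
    {v : ℕ} (hv : v < n) : 0 < α.getD v 0 := by
  have hvl : v < α.length := by omega
  rw [List.getD_eq_getElem _ _ hvl]
  exact hc _ (List.getElem_mem hvl)

lemma letter_le_maxPart {n : ℕ} {α : List ℕ} (hlen : α.length = n)
    {v : ℕ} (hv : v < n) : α.getD v 0 ≤ maxPart α := by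
  have hvl : v < α.length := by omega
  rw [List.getD_eq_getElem _ _ hvl]
  exact le_maxPart (List.getElem_mem hvl)

lemma gword_perm {n : ℕ} {α : List ℕ} (hlen : α.length = n) (hc : IsComposition α) :
    (gword n α).Perm (List.range n) := by
  have key : ∀ m : ℕ,
      (((List.range m).map (blk n α)).flatten).Perm
        ((List.range n).filter (fun v => α.getD v 0 ≤ m)) := by
    intro m
    induction m with
    | zero =>
      simp only [List.range_zero, List.map_nil, List.flatten]
      have : (List.range n).filter (fun v => α.getD v 0 ≤ 0) = [] := by
        apply List.filter_eq_nil_iff.mpr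
        intro v hv
        have := letter_pos hlen hc (List.mem_range.mp hv)
        simp only [decide_eq_true_eq]
        omega
      rw [this]
    | succ m ih =>
      rw [List.range_succ, List.map_append, List.flatten_append]
      have hA : ((List.range n).filter (fun v => α.getD v 0 ≤ m + 1)).filter
          (fun v => α.getD v 0 ≤ m) = (List.range n).filter (fun v => α.getD v 0 ≤ m) := by
        rw [List.filter_filter]
        apply List.filter_congr
        intro v hv
        rw [show (decide (α.getD v 0 ≤ m) && decide (α.getD v 0 ≤ m + 1)) =
          decide (α.getD v 0 ≤ m ∧ α.getD v 0 ≤ m + 1) from (Bool.decide_and _ _).symm]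
        apply decide_eq_decide.mpr
        omega
      have hB : ((List.range n).filter (fun v => α.getD v 0 ≤ m + 1)).filter
          (fun v => !decide (α.getD v 0 ≤ m)) = blk n α m := by
        rw [List.filter_filter]
        unfold blk
        apply List.filter_congr
        intro v hv
        rw [show (!decide (α.getD v 0 ≤ m) && decide (α.getD v 0 ≤ m + 1)) =
          decide (¬(α.getD v 0 ≤ m) ∧ α.getD v 0 ≤ m + 1) from
            by rw [Bool.decide_and, decide_not]]
        apply decide_eq_decide.mpr
        omega
      have hp := List.filter_append_perm (fun v => decide (α.getD v 0 ≤ m))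
        ((List.range n).filter (fun v => α.getD v 0 ≤ m + 1))
      rw [hA, hB] at hp
      have hj : (List.map (blk n α) [m]).flatten = blk n α m := by simp
      rw [hj]
      exact (ih.append (List.Perm.refl _)).trans hp
  have h2 : (List.range n).filter (fun v => α.getD v 0 ≤ maxPart α) = List.range n := by
    apply List.filter_eq_self.mpr
    intro v hv
    exact decide_eq_true (letter_le_maxPart hlen (List.mem_range.mp hv))
  have := key (maxPart α)
  rw [h2] at this
  exact this

end InvertingProof

namespace InvertingProof

lemma mem_blk {n : ℕ} {α : List ℕ} {i v : ℕ} :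
    v ∈ blk n α i ↔ v < n ∧ α.getD v 0 = i + 1 := by
  simp [blk, List.mem_filter, List.mem_range]

lemma blk_sorted (n : ℕ) (α : List ℕ) (i : ℕ) : (blk n α i).Pairwise (· < ·) :=
  List.pairwise_lt_range.sublist List.filter_sublist

lemma blk_nodup (n : ℕ) (α : List ℕ) (i : ℕ) : (blk n α i).Nodup :=
  List.nodup_range.sublist List.filter_sublist

lemma blocks_props {n : ℕ} {α : List ℕ} (hlen : α.length = n) (hc : IsComposition α)
    (hinv : Inverting α) :
    (∀ B ∈ blocksList n α, B ≠ []) ∧ (∀ B ∈ blocksList n α, List.IsChain (· < ·) B) ∧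
      List.IsChain Bdry (blocksList n α) := by
  refine ⟨?_, ?_, ?_⟩
  · intro B hB
    rcases List.mem_map.mp hB with ⟨i, hi, rfl⟩
    have hi' : i < maxPart α := List.mem_range.mp hi
    rcases Nat.eq_zero_or_pos i with rfl | hipos
    · -- letter 1 occurs
      rcases Nat.lt_or_ge (maxPart α) 2 with hm | hm
      · -- maxPart = 1
        have hn : 0 < n := by
          rcases n with _ | n
          · have : α = [] := List.length_eq_zero_iff.mp hlen
            subst this; simp [maxPart] at hi'
          · omega
        have h1 : α.getD 0 0 = 1 := by
          have := letter_pos hlen hc hn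
          have := letter_le_maxPart (v := 0) hlen hn
          omega
        exact List.ne_nil_of_mem (mem_blk.mpr ⟨hn, h1⟩)
      · rcases hinv 2 (by omega) hm with ⟨s, t, hst, htl, hs, ht⟩
        exact List.ne_nil_of_mem ((mem_blk (v := t)).mpr ⟨by omega, by simpa using ht⟩)
    · have h2 : 1 < i + 1 := by omega
      rcases hinv (i + 1) h2 (by omega) with ⟨s, t, hst, htl, hs, ht⟩
      refine List.ne_nil_of_mem ((mem_blk (v := s)).mpr ⟨?_, ?_⟩)
      · omega
      · simpa using hs
  · intro B hB
    rcases List.mem_map.mp hB with ⟨i, hi, rfl⟩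
    exact List.isChain_iff_pairwise.mpr (blk_sorted n α i)
  · rw [List.isChain_iff_getElem]
    intro i hlt
    have hlen2 : (blocksList n α).length = maxPart α := by simp [blocksList]
    rw [hlen2] at hlt
    have hget : ∀ (j : ℕ) (hj : j < maxPart α),
        (blocksList n α)[j]'(by simp [blocksList]; omega) = blk n α j := by
      intro j hj
      simp [blocksList]
    rw [hget i (by omega), hget (i+1) (by omega)]
    -- Bdry (blk i) (blk (i+1)) : headI (blk (i+1)) < lastI (blk i)
    rcases hinv (i + 2) (by omega) (by omega) with ⟨s, t, hst, htl, hs, ht⟩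
    rw [hlen] at htl
    have hsn : s < n := by omega
    have htn : t < n := by omega
    have hsmem : s ∈ blk n α (i + 1) := mem_blk.mpr ⟨hsn, by simpa using hs⟩
    have htmem : t ∈ blk n α i := mem_blk.mpr ⟨htn, by simpa using ht⟩
    unfold Bdry
    have h1 := headI_le_of_sorted (blk_sorted n α (i+1)) hsmem
    have h2 := le_lastI_of_sorted (blk_sorted n α i) htmem
    omega

lemma gword_inj {n : ℕ} {α α' : List ℕ}
    (hlen : α.length = n) (hc : IsComposition α) (hinv : Inverting α)
    (hlen' : α'.length = n) (hc' : IsComposition α') (hinv' : Inverting α')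
    (h : gword n α = gword n α') : α = α' := by
  obtain ⟨p1, p2, p3⟩ := blocks_props hlen hc hinv
  obtain ⟨q1, q2, q3⟩ := blocks_props hlen' hc' hinv'
  have e1 : splitRuns (gword n α) = blocksList n α := splitRuns_flatten p1 p2 p3
  have e2 : splitRuns (gword n α') = blocksList n α' := splitRuns_flatten q1 q2 q3
  have hb : blocksList n α = blocksList n α' := by rw [← e1, ← e2, h]
  have hm : maxPart α = maxPart α' := by
    have := congrArg List.length hb
    simpa [blocksList] using this
  apply List.ext_getElem (by omega)
  intro v h₁ h₂
  have hvn : v < n := by omega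
  set j := α[v] with hj
  have hj1 : 0 < j := hc _ (List.getElem_mem h₁)
  have hj2 : j ≤ maxPart α := le_maxPart (List.getElem_mem h₁)
  have hvb : v ∈ blk n α (j - 1) := by
    refine mem_blk.mpr ⟨hvn, ?_⟩
    rw [List.getD_eq_getElem _ _ h₁]
    omega
  have hblk : blk n α (j - 1) = blk n α' (j - 1) := by
    have h3 : (blocksList n α).getD (j-1) [] = (blocksList n α').getD (j-1) [] := by rw [hb]
    have g1 : (blocksList n α).getD (j-1) [] = blk n α (j-1) := by
      have hlt : j - 1 < (blocksList n α).length := by simp [blocksList]; omega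
      rw [List.getD_eq_getElem _ _ hlt]
      simp [blocksList]
    have g2 : (blocksList n α').getD (j-1) [] = blk n α' (j-1) := by
      have hlt : j - 1 < (blocksList n α').length := by simp [blocksList]; omega
      rw [List.getD_eq_getElem _ _ hlt]
      simp [blocksList]
    rw [← g1, ← g2, h3]
  have hvb' : v ∈ blk n α' (j - 1) := hblk ▸ hvb
  have := (mem_blk.mp hvb').2
  rw [List.getD_eq_getElem _ _ h₂] at this
  omega

end InvertingProof

namespace InvertingProof

lemma gword_surj {n : ℕ} {l : List ℕ} (hl : l.Perm (List.range n)) :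
    ∃ α : List ℕ, α.length = n ∧ IsComposition α ∧ Inverting α ∧ gword n α = l := by
  classical
  set rs := splitRuns l with hrs
  set r := rs.length with hr
  set α := (List.range n).map (fun v => runIdx rs v + 1) with hα
  have hnd : l.Nodup := hl.symm.nodup List.nodup_range
  have hjoin : rs.flatten = l := flatten_splitRuns l
  have hmemiff : ∀ v : ℕ, v ∈ l ↔ v < n := by
    intro v; rw [hl.mem_iff, List.mem_range]
  have hndj := List.nodup_flatten.mp (by rw [hjoin]; exact hnd)
  have hdisj : List.Pairwise List.Disjoint rs := hndj.2
  have hlenα : α.length = n := by simp [hα]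
  have hletter : ∀ v, v < n → α.getD v 0 = runIdx rs v + 1 := by
    intro v hv
    have hvl : v < α.length := by omega
    rw [List.getD_eq_getElem _ _ hvl]
    simp [hα]
  have hcomp : IsComposition α := by
    intro x hx
    rcases List.mem_map.mp hx with ⟨v, _, rfl⟩
    omega
  have hrunIdx_lt : ∀ v, v < n → runIdx rs v < r := by
    intro v hv
    exact (runIdx_spec (by rw [hjoin]; exact (hmemiff v).mpr hv)).1
  have hmem_run : ∀ v, v < n → v ∈ rs.getD (runIdx rs v) [] := by
    intro v hv
    exact (runIdx_spec (by rw [hjoin]; exact (hmemiff v).mpr hv)).2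
  have hrun_mem_l : ∀ (i : ℕ), i < r → ∀ x ∈ rs.getD i [], x < n := by
    intro i hi x hx
    have hB : rs.getD i [] ∈ rs := by
      rw [List.getD_eq_getElem _ _ hi]; exact List.getElem_mem hi
    exact (hmemiff x).mp (by rw [← hjoin]; exact List.mem_flatten.mpr ⟨_, hB, hx⟩)
  have hrun_ne : ∀ (i : ℕ), i < r → rs.getD i [] ≠ [] := by
    intro i hi
    have hB : rs.getD i [] ∈ rs := by
      rw [List.getD_eq_getElem _ _ hi]; exact List.getElem_mem hi
    exact (splitRuns_runs l _ hB).1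
  have hrun_chain : ∀ (i : ℕ), i < r → List.IsChain (· < ·) (rs.getD i []) := by
    intro i hi
    have hB : rs.getD i [] ∈ rs := by
      rw [List.getD_eq_getElem _ _ hi]; exact List.getElem_mem hi
    exact (splitRuns_runs l _ hB).2
  have hrunIdx_eq : ∀ (i : ℕ), i < r → ∀ v ∈ rs.getD i [], runIdx rs v = i := by
    intro i hi v hv
    exact runIdx_eq hdisj hi hv
  have hmax : maxPart α = r := by
    apply le_antisymm
    · apply maxPart_le
      intro x hx
      rcases List.mem_map.mp hx with ⟨v, hv, rfl⟩
      exact hrunIdx_lt v (List.mem_range.mp hv)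
    · rcases Nat.eq_zero_or_pos r with hr0 | hrpos
      · omega
      · obtain ⟨w, hw⟩ := List.exists_mem_of_ne_nil _ (hrun_ne (r-1) (by omega))
        have hwn : w < n := hrun_mem_l (r-1) (by omega) w hw
        have hidx : runIdx rs w = r - 1 := hrunIdx_eq (r-1) (by omega) w hw
        have : runIdx rs w + 1 ∈ α := by
          apply List.mem_map.mpr ⟨w, List.mem_range.mpr hwn, rfl⟩
        have := le_maxPart this
        omega
  have hbdry : List.IsChain Bdry rs := splitRuns_bdry hnd
  have hinv : Inverting α := by
    intro i h1 h2
    rw [hmax] at h2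
    -- i ≥ 2, i ≤ r; runs (i-2) and (i-1)
    have hbd : Bdry (rs.getD (i-2) []) (rs.getD (i-1) []) := by
      have := List.isChain_iff_getElem.mp hbdry (i-2) (by omega)
      have e1 : rs[i-2]'(by omega) = rs.getD (i-2) [] := by
        rw [List.getD_eq_getElem _ _ (by omega : i - 2 < rs.length)]
      have e2 : rs[i-2+1]'(by omega) = rs.getD (i-1) [] := by
        rw [List.getD_eq_getElem _ _ (by omega : i - 1 < rs.length)]
        congr 1
        omega
      rw [e1, e2] at this
      exact this
    set s := (rs.getD (i-1) []).headI with hs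
    set t := lastI (rs.getD (i-2) []) with ht
    have hsmem : s ∈ rs.getD (i-1) [] := headI_mem (hrun_ne (i-1) (by omega))
    have htmem : t ∈ rs.getD (i-2) [] := lastI_mem (hrun_ne (i-2) (by omega))
    have hsn : s < n := hrun_mem_l (i-1) (by omega) s hsmem
    have htn : t < n := hrun_mem_l (i-2) (by omega) t htmem
    refine ⟨s, t, hbd, by omega, ?_, ?_⟩
    · rw [hletter s hsn, hrunIdx_eq (i-1) (by omega) s hsmem]
      omega
    · rw [hletter t htn, hrunIdx_eq (i-2) (by omega) t htmem]
      omega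
  refine ⟨α, hlenα, hcomp, hinv, ?_⟩
  -- gword n α = l
  have hblocks : blocksList n α = rs := by
    apply List.ext_getElem (by simp [blocksList, hmax, hr])
    intro i h₁ h₂
    have hir : i < r := by simpa using h₂
    have hgb : (blocksList n α)[i] = blk n α i := by simp [blocksList]
    rw [hgb]
    have hrsget : rs[i] = rs.getD i [] := by
      rw [List.getD_eq_getElem _ _ hir]
    rw [hrsget]
    -- blk n α i = rs.getD i []
    haveI : IsAntisymm ℕ (· < ·) := ⟨fun a b h1 h2 => absurd h2 (lt_asymm h1)⟩
    have hsort1 : (blk n α i).Pairwise (· < ·) := blk_sorted n α i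
    have hsort2 : (rs.getD i []).Pairwise (· < ·) :=
      List.isChain_iff_pairwise.mp (hrun_chain i hir)
    have hnd2 : (rs.getD i []).Nodup := by
      apply hndj.1
      rw [List.getD_eq_getElem _ _ hir]; exact List.getElem_mem hir
    apply List.Perm.eq_of_pairwise' hsort1 hsort2
    apply (List.perm_ext_iff_of_nodup (blk_nodup n α i) hnd2).mpr
    intro v
    constructor
    · intro hv
      obtain ⟨hvn, hvl⟩ := mem_blk.mp hv
      rw [hletter v hvn] at hvl
      have heq : runIdx rs v = i := by omega
      have hmr := hmem_run v hvn
      rwa [heq] at hmr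
    · intro hv
      have hvn : v < n := hrun_mem_l i hir v hv
      refine mem_blk.mpr ⟨hvn, ?_⟩
      rw [hletter v hvn, hrunIdx_eq i hir v hv]
  unfold gword
  rw [hblocks, hjoin]

end InvertingProof


open InvertingProof in
/-- The number of inverting compositions of length `n` equals `n!`. -/
theorem inverting_card (n : ℕ) :
    Nat.card {α : List ℕ // α.length = n ∧ IsComposition α ∧ Inverting α} =
      Nat.factorial n := by
  classical
  have hG : Function.Bijective
      (fun (a : {α : List ℕ // α.length = n ∧ IsComposition α ∧ Inverting α}) =>
        (⟨gword n a.1, gword_perm a.2.1 a.2.2.1⟩ :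
          {l : List ℕ // l.Perm (List.range n)})) := by
    constructor
    · rintro ⟨α, h1, h2, h3⟩ ⟨α', h1', h2', h3'⟩ h
      have := congrArg Subtype.val h
      exact Subtype.ext (gword_inj h1 h2 h3 h1' h2' h3' this)
    · rintro ⟨l, hl⟩
      obtain ⟨α, ha1, ha2, ha3, ha4⟩ := gword_surj hl
      exact ⟨⟨α, ha1, ha2, ha3⟩, Subtype.ext ha4⟩
  rw [Nat.card_eq_of_bijective _ hG]
  have e1 : {l : List ℕ // l.Perm (List.range n)} ≃
      {l : List ℕ // l ∈ (List.range n).permutations} :=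
    Equiv.subtypeEquivRight (fun l => List.mem_permutations.symm)
  have e2 : {l : List ℕ // l ∈ (List.range n).permutations} ≃
      {l : List ℕ // l ∈ (List.range n).permutations.toFinset} :=
    Equiv.subtypeEquivRight (fun l => (List.mem_toFinset).symm)
  rw [Nat.card_congr (e1.trans e2), Nat.card_eq_fintype_card, Fintype.card_coe,
    List.toFinset_card_of_nodup (List.nodup_permutations _ List.nodup_range),
    List.length_permutations, List.length_range]
end

section
/- For every permutation σ ∈ S_k, the destandardization d(σ) is an inverting composition of length k; that is, for each i > 1 not exceeding the largest part of d(σ), there exist indices s < t with d(σ)_s = i and d(σ)_t = i−1. -/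
/-- `σ` is the standardization of the word `w`: `σ` orders the positions of `w` by value,
ties broken left to right. -/
def IsStd {k : ℕ} (w : List ℕ) (σ : Equiv.Perm (Fin k)) : Prop :=
  w.length = k ∧ ∀ a b : Fin k,
    (σ a < σ b ↔ (w.getD (↑a) 0 < w.getD (↑b) 0 ∨ (w.getD (↑a) 0 = w.getD (↑b) 0 ∧ a < b)))

/-- `w` is the destandardization of `σ`: the lexicographically least word of positive
integers whose standardization is `σ`. -/
def IsDestd {k : ℕ} (σ : Equiv.Perm (Fin k)) (w : List ℕ) : Prop :=
  IsComposition w ∧ IsStd w σ ∧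
  ∀ v : List ℕ, IsComposition v → IsStd v σ → w = v ∨ List.Lex (· < ·) w v

lemma exists_ge_of_le_maxPart (α : List ℕ) (i : ℕ) (hi : 0 < i) (h : i ≤ maxPart α) :
    ∃ x ∈ α, i ≤ x := by
  induction α with
  | nil => simp [maxPart] at h; omega
  | cons a l ih =>
    simp only [maxPart, List.foldr] at h
    rcases le_max_iff.mp h with h1 | h2
    · exact ⟨a, List.mem_cons_self, h1⟩
    · obtain ⟨x, hx, hx2⟩ := ih h2
      exact ⟨x, List.mem_cons_of_mem a hx, hx2⟩

lemma lex_map_lt (f : ℕ → ℕ) : ∀ (w : List ℕ), (∀ x ∈ w, f x ≤ x) →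
    (∃ x ∈ w, f x < x) → List.Lex (· < ·) (w.map f) w := by
  intro w
  induction w with
  | nil => intro _ h; simp at h
  | cons a l ih =>
    intro hle hlt
    rcases lt_or_eq_of_le (hle a (List.mem_cons_self)) with h | h
    · exact List.Lex.rel h
    · rw [List.map_cons, h]
      apply List.Lex.cons
      apply ih (fun x hx => hle x (List.mem_cons_of_mem a hx))
      obtain ⟨x, hx, hx2⟩ := hlt
      rcases List.mem_cons.mp hx with rfl | hx
      · omega
      · exact ⟨x, hx, hx2⟩

/-- For every permutation `σ ∈ S_k`, the destandardization `d(σ)` is an inverting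
composition of length `k`. -/
theorem destd_inverting (k : ℕ) (σ : Equiv.Perm (Fin k)) (w : List ℕ)
    (h : IsDestd σ w) : w.length = k ∧ IsComposition w ∧ Inverting w := by
  obtain ⟨hcomp, ⟨hlen, hstd⟩, hmin⟩ := h
  refine ⟨hlen, hcomp, ?_⟩
  intro i hi1 hi2
  by_contra hc
  push_neg at hc
  -- hc : ∀ s t, s < t → t < w.length → w.getD s 0 = i → w.getD t 0 ≠ i - 1
  set f : ℕ → ℕ := fun x => if i ≤ x then x - 1 else x with hf
  set v : List ℕ := w.map f with hv
  have hvlen : v.length = k := by rw [hv, List.length_map, hlen]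
  have hgetD : ∀ n : ℕ, n < w.length → v.getD n 0 = f (w.getD n 0) := by
    intro n hn
    rw [List.getD_eq_getElem w 0 hn, List.getD_eq_getElem v 0 (by rwa [hv, List.length_map])]
    simp [hv]
  have hvcomp : IsComposition v := by
    intro x hx
    obtain ⟨y, hy, rfl⟩ := List.mem_map.mp hx
    have := hcomp y hy
    simp only [hf]
    split <;> omega
  -- no (i, then i-1) pattern means: forward direction of standardization for v
  have hfwd : ∀ a b : Fin k, σ a < σ b →
      (v.getD (↑a) 0 < v.getD (↑b) 0 ∨ (v.getD (↑a) 0 = v.getD (↑b) 0 ∧ a < b)) := by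
    intro a b hab
    have ha : (a : ℕ) < w.length := by rw [hlen]; exact a.isLt
    have hb : (b : ℕ) < w.length := by rw [hlen]; exact b.isLt
    rw [hgetD a ha, hgetD b hb]
    rcases (hstd a b).mp hab with hlt | ⟨heq, hab'⟩
    · by_cases hcase : w.getD (↑a) 0 = i - 1 ∧ w.getD (↑b) 0 = i
      · -- equal after mapping; need a < b
        obtain ⟨ha1, hb1⟩ := hcase
        have haltb : a < b := by
          rcases lt_trichotomy a b with h' | h' | h'
          · exact h'
          · exfalso; rw [h'] at hlt; omega
          · exact absurd hb1 (hc (↑b) (↑a) h' ha · ha1)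
        right
        constructor
        · simp only [hf, ha1, hb1]
          split <;> split <;> omega
        · exact haltb
      · left
        simp only [hf]
        split <;> split <;> omega
    · right
      rw [heq]
      exact ⟨rfl, hab'⟩
  have hvstd : IsStd v σ := by
    refine ⟨hvlen, fun a b => ⟨fun hab => hfwd a b hab, fun hR => ?_⟩⟩
    rcases lt_trichotomy (σ a) (σ b) with h' | h' | h'
    · exact h'
    · exfalso
      have : a = b := σ.injective (Fin.ext (by omega) : σ a = σ b)
      subst this
      rcases hR with h1 | ⟨_, h2⟩
      · exact lt_irrefl _ h1
      · exact lt_irrefl _ h2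
    · exfalso
      have hR2 := hfwd b a h'
      rcases hR with h1 | ⟨h1, h1'⟩ <;> rcases hR2 with h2 | ⟨h2, h2'⟩ <;> omega
  -- v is lexicographically smaller than w
  have hvlt : List.Lex (· < ·) v w := by
    apply lex_map_lt
    · intro x _; simp only [hf]; split <;> omega
    · obtain ⟨x, hx, hx2⟩ := exists_ge_of_le_maxPart w i (by omega) hi2
      exact ⟨x, hx, by simp only [hf]; split <;> omega⟩
  rcases hmin v hvcomp hvstd with heq | hlex
  · rw [heq] at hvlt
    exact irrefl_of (List.Lex (· < ·)) v hvlt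
  · exact irrefl_of (List.Lex (· < ·)) w (List.lex_trans (fun h₁ h₂ => Nat.lt_trans h₁ h₂) hlex hvlt)
end

section
/- The map σ ↦ d(σ) is a bijection between the symmetric group S_n and the set of inverting compositions of length n. -/
theorem Equiv.Perm.apply_inv_self {α : Type*} (f : Equiv.Perm α) (x : α) : f (f⁻¹ x) = x :=
  f.apply_symm_apply x

namespace DestdProof

variable {n : ℕ}

/-- Position of rank `j`: `σ⁻¹ j`, extended by the identity above `n`. -/
def P (σ : Equiv.Perm (Fin n)) (j : ℕ) : ℕ :=
  if h : j < n then ((σ⁻¹ ⟨j, h⟩ : Fin n) : ℕ) else j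

/-- Descent indicator between ranks `j` and `j+1`. -/
def D (σ : Equiv.Perm (Fin n)) (j : ℕ) : ℕ :=
  if P σ (j + 1) < P σ j then 1 else 0

/-- Value assigned to rank `j` in the destandardization. -/
def val (σ : Equiv.Perm (Fin n)) (j : ℕ) : ℕ :=
  1 + ∑ i ∈ Finset.range j, D σ i

/-- The destandardization word. -/
def d (σ : Equiv.Perm (Fin n)) : List ℕ :=
  List.ofFn fun a : Fin n => val σ (σ a)

lemma D_le_one (σ : Equiv.Perm (Fin n)) (j : ℕ) : D σ j ≤ 1 := by
  unfold D; split <;> omega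

lemma val_succ (σ : Equiv.Perm (Fin n)) (j : ℕ) :
    val σ (j + 1) = val σ j + D σ j := by
  simp [val, Finset.sum_range_succ, Nat.add_assoc]

lemma one_le_val (σ : Equiv.Perm (Fin n)) (j : ℕ) : 1 ≤ val σ j :=
  Nat.le_add_right 1 _

lemma val_zero (σ : Equiv.Perm (Fin n)) : val σ 0 = 1 := by simp [val]

lemma val_mono (σ : Equiv.Perm (Fin n)) : Monotone (val σ) := by
  intro j k hjk
  unfold val
  exact Nat.add_le_add_left (Finset.sum_le_sum_of_subset (Finset.range_subset_range.2 hjk)) 1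

lemma P_lt_n {σ : Equiv.Perm (Fin n)} {j : ℕ} (h : j < n) : P σ j < n := by
  simp only [P, dif_pos h]; exact (σ⁻¹ ⟨j, h⟩).isLt

lemma P_sigma (σ : Equiv.Perm (Fin n)) (a : Fin n) : P σ (σ a) = a := by
  simp [P]

/-- If there is a descent at `j`, then `j+1 < n`. -/
lemma lt_of_desc {σ : Equiv.Perm (Fin n)} {j : ℕ} (h : P σ (j + 1) < P σ j) :
    j + 1 < n := by
  by_contra hc
  push_neg at hc
  have h2 : P σ (j + 1) = j + 1 := by simp [P, Nat.not_lt.2 hc]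
  by_cases hj : j < n
  · have := P_lt_n (σ := σ) hj
    omega
  · have : P σ j = j := by simp [P, hj]
    omega

lemma P_lt_succ_of_not_desc {σ : Equiv.Perm (Fin n)} {j : ℕ}
    (h : ¬ P σ (j + 1) < P σ j) : P σ j < P σ (j + 1) := by
  rcases Nat.lt_or_ge (P σ j) (P σ (j+1)) with h1 | h1
  · exact h1
  -- show they can't be equal
  have heq : P σ j = P σ (j+1) := le_antisymm (Nat.le_of_not_lt h) h1
  exfalso
  by_cases h2 : j + 1 < n
  · have hj : j < n := by omega
    simp only [P, dif_pos h2, dif_pos hj] at heq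
    have : (σ⁻¹ ⟨j, hj⟩ : Fin n) = σ⁻¹ ⟨j+1, h2⟩ := Fin.val_injective heq
    have := σ⁻¹.injective this
    simp at this
  · by_cases hj : j < n
    · have := P_lt_n (σ := σ) hj
      have : P σ (j+1) = j + 1 := by simp [P, Nat.not_lt.2 (Nat.le_of_not_lt h2)]
      omega
    · have ha : P σ j = j := by simp [P, hj]
      have hb : P σ (j+1) = j+1 := by simp [P, show ¬ (j+1<n) by omega]
      omega

lemma P_lt_of_val_eq {σ : Equiv.Perm (Fin n)} :
    ∀ {k j}, j < k → val σ j = val σ k → P σ j < P σ k := by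
  intro k
  induction k with
  | zero => omega
  | succ m ih =>
    intro j hjk hval
    have hmono1 : val σ j ≤ val σ m := val_mono σ (by omega)
    have hs := val_succ σ m
    have hD : D σ m = 0 := by omega
    have hPm : P σ m < P σ (m + 1) := by
      apply P_lt_succ_of_not_desc
      intro hc
      simp [D, if_pos hc] at hD
    rcases Nat.lt_or_ge j m with h1 | h1
    · exact lt_trans (ih h1 (by omega)) hPm
    · have : j = m := by omega
      subst this; exact hPm



lemma length_d (σ : Equiv.Perm (Fin n)) : (d σ).length = n := by simp [d]

lemma getD_d (σ : Equiv.Perm (Fin n)) (a : Fin n) :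
    (d σ).getD (↑a) 0 = val σ (σ a) := by
  rw [List.getD_eq_getElem _ _ (by simp [d])]
  simp [d]

lemma isStd_d (σ : Equiv.Perm (Fin n)) : IsStd (d σ) σ := by
  refine ⟨length_d σ, ?_⟩
  intro a b
  rw [getD_d, getD_d]
  constructor
  · intro hab
    have hle : val σ (σ a) ≤ val σ (σ b) := val_mono σ (le_of_lt hab)
    rcases eq_or_lt_of_le hle with heq | hlt
    · refine Or.inr ⟨heq, ?_⟩
      have hP := P_lt_of_val_eq (σ := σ) (k := (σ b : ℕ)) (j := (σ a : ℕ)) hab heq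
      rw [P_sigma, P_sigma] at hP
      exact hP
    · exact Or.inl hlt
  · rintro (hlt | ⟨heq, hab⟩)
    · by_contra hc
      push_neg at hc
      exact absurd (val_mono σ (show (σ b : ℕ) ≤ σ a from hc)) (by omega)
    · rcases lt_trichotomy (σ a) (σ b) with h1 | h1 | h1
      · exact h1
      · exact absurd (σ.injective h1) (ne_of_lt hab)
      · exfalso
        have hP := P_lt_of_val_eq (σ := σ) (k := (σ a : ℕ)) (j := (σ b : ℕ)) h1 heq.symm
        rw [P_sigma, P_sigma] at hP
        exact absurd hP (by omega)



lemma getD_pos {v : List ℕ} (hc : IsComposition v) {p : ℕ} (hp : p < v.length) :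
    0 < v.getD p 0 := by
  rw [List.getD_eq_getElem _ _ hp]
  exact hc _ (List.getElem_mem hp)

lemma val_le_of_std {σ : Equiv.Perm (Fin n)} {v : List ℕ} (hc : IsComposition v)
    (hs : IsStd v σ) : ∀ j, j < n → val σ j ≤ v.getD (P σ j) 0 := by
  intro j
  induction j with
  | zero =>
    intro h0
    rw [val_zero]
    exact getD_pos hc (by rw [hs.1]; exact P_lt_n h0)
  | succ m ih =>
    intro hm1
    have hm : m < n := by omega
    have h1 := ih hm
    set a : Fin n := σ⁻¹ ⟨m, hm⟩ with ha
    set b : Fin n := σ⁻¹ ⟨m + 1, hm1⟩ with hb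
    have hPa : P σ m = (a : ℕ) := by simp [P, dif_pos hm, ha]
    have hPb : P σ (m + 1) = (b : ℕ) := by simp [P, dif_pos hm1, hb]
    have hab : σ a < σ b := by
      simp only [ha, hb, Equiv.Perm.apply_inv_self]
      exact Fin.mk_lt_mk.2 (Nat.lt_succ_self m)
    have hstd := (hs.2 a b).1 hab
    rw [val_succ]
    by_cases hD : P σ (m + 1) < P σ m
    · -- descent: b < a, so strict value increase
      have hDval : D σ m = 1 := by simp [D, if_pos hD]
      have hba : b < a := by rw [Fin.lt_def]; omega
      rcases hstd with h | ⟨_, h⟩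
      · rw [hPa] at h1; rw [hPb]; omega
      · exact absurd h (by omega)

    · have hDval : D σ m = 0 := by simp [D, if_neg hD]
      have : v.getD (↑a) 0 ≤ v.getD (↑b) 0 := by rcases hstd with h | ⟨h, _⟩ <;> omega
      rw [hPa] at h1; rw [hPb]; omega

lemma lex_of_le : ∀ (w v : List ℕ), w.length = v.length →
    (∀ i, w.getD i 0 ≤ v.getD i 0) → w = v ∨ List.Lex (· < ·) w v := by
  intro w
  induction w with
  | nil =>
    intro v h _
    left
    exact (List.length_eq_zero_iff.mp h.symm).symm
  | cons a w ih =>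
    intro v hlen hle
    cases v with
    | nil => simp at hlen
    | cons b v =>
      have h0 : a ≤ b := by simpa using hle 0
      rcases lt_or_eq_of_le h0 with h | h
      · exact Or.inr (List.Lex.rel h)
      · subst h
        rcases ih v (by simpa using hlen) (fun i => by simpa using hle (i + 1)) with h2 | h2
        · left; rw [h2]
        · exact Or.inr (List.Lex.cons h2)

lemma isDestd_d (σ : Equiv.Perm (Fin n)) : IsDestd σ (d σ) := by
  refine ⟨?_, isStd_d σ, ?_⟩
  · intro x hx
    rw [d, List.mem_ofFn] at hx
    obtain ⟨a, rfl⟩ := hx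
    exact one_le_val σ _
  · intro v hc hs
    apply lex_of_le
    · rw [length_d, hs.1]
    · intro i
      by_cases hi : i < n
      · have : (d σ).getD i 0 = val σ (σ ⟨i, hi⟩) := getD_d σ ⟨i, hi⟩
        rw [this]
        have := val_le_of_std hc hs (σ ⟨i, hi⟩) (σ ⟨i, hi⟩).isLt
        rwa [P_sigma] at this
      · rw [List.getD_eq_default _ _ (by rw [length_d]; omega),
          List.getD_eq_default _ _ (by rw [hs.1]; omega)]


lemma maxPart_mem {α : List ℕ} (h : 0 < maxPart α) : maxPart α ∈ α := by
  induction α with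
  | nil => simp [maxPart] at h
  | cons a l ih =>
    have hm : maxPart (a :: l) = max a (maxPart l) := rfl
    rcases max_choice a (maxPart l) with hc | hc
    · rw [hm, hc]; exact List.mem_cons_self
    · rw [hm, hc] at h ⊢
      exact List.mem_cons_of_mem a (ih h)

lemma le_maxPart {α : List ℕ} {x : ℕ} (h : x ∈ α) : x ≤ maxPart α := by
  induction α with
  | nil => simp at h
  | cons a l ih =>
    have hm : maxPart (a :: l) = max a (maxPart l) := rfl
    rcases List.mem_cons.1 h with rfl | h
    · rw [hm]; exact le_max_left _ _
    · rw [hm]; exact le_trans (ih h) (le_max_right _ _)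

lemma exists_desc {σ : Equiv.Perm (Fin n)} {i : ℕ} (hi : 1 < i) :
    ∀ J, i ≤ val σ J → ∃ j, val σ j = i - 1 ∧ val σ (j + 1) = i ∧ D σ j = 1 := by
  intro J
  induction J with
  | zero => rw [val_zero]; omega
  | succ m ih =>
    intro hJ
    rcases le_or_gt i (val σ m) with h | h
    · exact ih h
    · have hs := val_succ σ m
      have hD := D_le_one σ m
      exact ⟨m, by omega, by omega, by omega⟩

lemma inverting_d (σ : Equiv.Perm (Fin n)) : Inverting (d σ) := by
  intro i hi hmax
  have hmp : 0 < maxPart (d σ) := by omega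
  have hmem := maxPart_mem hmp
  rw [d, List.mem_ofFn] at hmem
  obtain ⟨a, ha⟩ := hmem
  have ha' : i ≤ val σ (σ a) := le_trans hmax (le_of_eq ha.symm)
  obtain ⟨j, hj1, hj2, hj3⟩ := exists_desc (σ := σ) hi (σ a) ha'
  have hdesc : P σ (j + 1) < P σ j := by
    by_contra hc
    simp [D, if_neg hc] at hj3
  have hjn : j + 1 < n := lt_of_desc hdesc
  have hjn' : j < n := by omega
  refine ⟨P σ (j + 1), P σ j, hdesc, by rw [length_d]; exact P_lt_n hjn', ?_, ?_⟩
  · have hb : (⟨P σ (j + 1), P_lt_n hjn⟩ : Fin n) = σ⁻¹ ⟨j + 1, hjn⟩ := by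
      apply Fin.val_injective; simp [P, dif_pos hjn]
    have := getD_d σ ⟨P σ (j + 1), P_lt_n hjn⟩
    rw [this, hb, Equiv.Perm.apply_inv_self]
    exact hj2
  · have hb : (⟨P σ j, P_lt_n hjn'⟩ : Fin n) = σ⁻¹ ⟨j, hjn'⟩ := by
      apply Fin.val_injective; simp [P, dif_pos hjn']
    have := getD_d σ ⟨P σ j, P_lt_n hjn'⟩
    rw [this, hb, Equiv.Perm.apply_inv_self]
    exact hj1

lemma d_inj {σ τ : Equiv.Perm (Fin n)} (h : d σ = d τ) : σ = τ := by
  have h1 := isStd_d σ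
  have h2 : IsStd (d σ) τ := h ▸ isStd_d τ
  have key : ∀ a b, σ a < σ b ↔ τ a < τ b := fun a b =>
    (h1.2 a b).trans (h2.2 a b).symm
  have hm : StrictMono (fun x => τ (σ.symm x)) := by
    intro x y hxy
    exact (key (σ.symm x) (σ.symm y)).1 (by simpa using hxy)
  have hrange : Set.range (fun x => τ (σ.symm x)) = Set.range (id : Fin n → Fin n) := by
    rw [Set.range_id]
    apply Set.eq_univ_of_forall
    intro x
    exact ⟨σ (τ.symm x), by simp⟩
  have i2 : WellFoundedLT (Fin n) := inferInstance
  have hid := (@StrictMono.range_inj (Fin n) (Fin n) _ _ i2 _ id hm strictMono_id).1 hrange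
  ext x
  have h3 := congrFun hid (σ x)
  simp only [Function.comp_apply, Equiv.symm_apply_apply, id_eq] at h3
  exact congrArg Fin.val h3.symm


lemma key_lt {x y a b N : ℕ} (ha : a < N) (hb : b < N) :
    x * N + a < y * N + b ↔ (x < y ∨ (x = y ∧ a < b)) := by
  constructor
  · intro h
    rcases lt_trichotomy x y with h1 | h1 | h1
    · exact Or.inl h1
    · subst h1; exact Or.inr ⟨rfl, by omega⟩
    · exfalso
      have h2 : (y + 1) * N ≤ x * N := Nat.mul_le_mul_right N h1
      rw [Nat.succ_mul] at h2
      omega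
  · rintro (h1 | ⟨rfl, h2⟩)
    · have h2 : (x + 1) * N ≤ y * N := Nat.mul_le_mul_right N h1
      rw [Nat.succ_mul] at h2
      omega
    · omega

lemma d_eq_of_std {σ : Equiv.Perm (Fin n)} {w : List ℕ} (hlen : w.length = n)
    (hcomp : IsComposition w) (hinv : Inverting w) (hstd : IsStd w σ) : d σ = w := by
  -- monotonicity of values along ranks
  have hu_mono : ∀ j k : ℕ, j ≤ k → k < n → w.getD (P σ j) 0 ≤ w.getD (P σ k) 0 := by
    intro j k hjk hk
    rcases eq_or_lt_of_le hjk with rfl | hjk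
    · exact le_refl _
    · have hj : j < n := by omega
      have hPa : P σ j = ((σ⁻¹ ⟨j, hj⟩ : Fin n) : ℕ) := dif_pos hj
      have hPb : P σ k = ((σ⁻¹ ⟨k, hk⟩ : Fin n) : ℕ) := dif_pos hk
      have hab : σ (σ⁻¹ ⟨j, hj⟩) < σ (σ⁻¹ ⟨k, hk⟩) := by
        rw [Equiv.Perm.apply_inv_self, Equiv.Perm.apply_inv_self]
        exact Fin.mk_lt_mk.2 hjk
      rcases (hstd.2 _ _).1 hab with h | ⟨h, _⟩
      · rw [hPa, hPb]; omega
      · rw [hPa, hPb]; omega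
  have hu_mem : ∀ j, j < n → w.getD (P σ j) 0 ∈ w := by
    intro j hj
    rw [List.getD_eq_getElem _ _ (by rw [hlen]; exact P_lt_n hj)]
    exact List.getElem_mem _
  -- strict increase at descents
  have hu_strict : ∀ j, P σ (j + 1) < P σ j →
      w.getD (P σ j) 0 < w.getD (P σ (j + 1)) 0 := by
    intro j hd
    have hj1 : j + 1 < n := lt_of_desc hd
    have hj : j < n := by omega
    have hPa : P σ j = ((σ⁻¹ ⟨j, hj⟩ : Fin n) : ℕ) := dif_pos hj
    have hPb : P σ (j + 1) = ((σ⁻¹ ⟨j + 1, hj1⟩ : Fin n) : ℕ) := dif_pos hj1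
    have hab : σ (σ⁻¹ ⟨j, hj⟩) < σ (σ⁻¹ ⟨j + 1, hj1⟩) := by
      rw [Equiv.Perm.apply_inv_self, Equiv.Perm.apply_inv_self]
      exact Fin.mk_lt_mk.2 (by omega)
    rcases (hstd.2 _ _).1 hab with h | ⟨h, hlt⟩
    · rw [hPa, hPb]; exact h
    · exfalso
      rw [Fin.lt_def] at hlt
      omega
  -- step at most one
  have hu_step : ∀ j, j + 1 < n →
      w.getD (P σ (j + 1)) 0 ≤ w.getD (P σ j) 0 + 1 := by
    intro j hj1
    by_contra hc
    push_neg at hc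
    have hi1 : 1 < w.getD (P σ j) 0 + 1 := by
      have := getD_pos hcomp (p := P σ j) (by rw [hlen]; exact P_lt_n (by omega : j < n))
      omega
    have hile : w.getD (P σ j) 0 + 1 ≤ maxPart w :=
      le_trans (by omega) (le_maxPart (hu_mem (j + 1) hj1))
    obtain ⟨s, t, hst, htlen, hsv, htv⟩ := hinv _ hi1 hile
    have hsn : s < n := by rw [hlen] at htlen; omega
    have hur : w.getD (P σ ↑(σ ⟨s, hsn⟩)) 0 = w.getD (P σ j) 0 + 1 := by
      rw [P_sigma]; exact hsv
    rcases le_or_gt (↑(σ ⟨s, hsn⟩) : ℕ) j with h | h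
    · have := hu_mono _ j h (by omega)
      omega
    · have := hu_mono (j + 1) _ h (σ ⟨s, hsn⟩).isLt
      omega
  -- no increase at ascents
  have hu_asc : ∀ j, j + 1 < n → ¬ P σ (j + 1) < P σ j →
      w.getD (P σ (j + 1)) 0 = w.getD (P σ j) 0 := by
    intro j hj1 hnd
    have hPlt := P_lt_succ_of_not_desc (σ := σ) hnd
    have hle := hu_mono j (j + 1) (by omega) hj1
    rcases eq_or_lt_of_le hle with h | h
    · exact h.symm
    exfalso
    have hstep := hu_step j hj1
    have hieq : w.getD (P σ j) 0 + 1 = w.getD (P σ (j + 1)) 0 := by omega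
    have hi1 : 1 < w.getD (P σ (j + 1)) 0 := by
      have := getD_pos hcomp (p := P σ j) (by rw [hlen]; exact P_lt_n (by omega : j < n))
      omega
    obtain ⟨s, t, hst, htlen, hsv, htv⟩ := hinv _ hi1 (le_maxPart (hu_mem (j + 1) hj1))
    have htn : t < n := by rw [hlen] at htlen; omega
    have hsn : s < n := by omega
    have hurs : w.getD (P σ ↑(σ ⟨s, hsn⟩)) 0 = w.getD (P σ (j + 1)) 0 := by
      rw [P_sigma]; exact hsv
    have hurt : w.getD (P σ ↑(σ ⟨t, htn⟩)) 0 = w.getD (P σ (j + 1)) 0 - 1 := by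
      rw [P_sigma]; exact htv
    have hrs_ge : j + 1 ≤ ↑(σ ⟨s, hsn⟩) := by
      by_contra hcc
      push_neg at hcc
      have := hu_mono (↑(σ ⟨s, hsn⟩)) j (by omega) (by omega)
      omega
    have hrt_le : (↑(σ ⟨t, htn⟩) : ℕ) ≤ j := by
      by_contra hcc
      push_neg at hcc
      have := hu_mono (j + 1) (↑(σ ⟨t, htn⟩)) (by omega) (σ ⟨t, htn⟩).isLt
      omega
    -- positions compare
    have hPs : P σ (j + 1) ≤ s := by
      by_contra hcc
      push_neg at hcc
      have hPa : P σ (j + 1) = ((σ⁻¹ ⟨j + 1, hj1⟩ : Fin n) : ℕ) := dif_pos hj1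
      have hval_a : w.getD ((σ⁻¹ ⟨j + 1, hj1⟩ : Fin n) : ℕ) 0 = w.getD (P σ (j + 1)) 0 := by
        rw [hPa]
      have hba : (⟨s, hsn⟩ : Fin n) < σ⁻¹ ⟨j + 1, hj1⟩ := by
        rw [Fin.lt_def]
        show s < ((σ⁻¹ ⟨j + 1, hj1⟩ : Fin n) : ℕ)
        omega
      have hσlt : σ ⟨s, hsn⟩ < σ (σ⁻¹ ⟨j + 1, hj1⟩) :=
        (hstd.2 _ _).2 (Or.inr ⟨by rw [hsv, hval_a], hba⟩)
      rw [Equiv.Perm.apply_inv_self, Fin.lt_def] at hσlt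
      simp only [Fin.val_mk] at hσlt  -- hσlt : ↑(σ ⟨s,hsn⟩) < j+1
      omega
    have hPt : t ≤ P σ j := by
      by_contra hcc
      push_neg at hcc
      have hj : j < n := by omega
      have hPc : P σ j = ((σ⁻¹ ⟨j, hj⟩ : Fin n) : ℕ) := dif_pos hj
      have hval_c : w.getD ((σ⁻¹ ⟨j, hj⟩ : Fin n) : ℕ) 0 = w.getD (P σ j) 0 := by
        rw [hPc]
      have hce : σ⁻¹ ⟨j, hj⟩ < (⟨t, htn⟩ : Fin n) := by
        rw [Fin.lt_def]
        show ((σ⁻¹ ⟨j, hj⟩ : Fin n) : ℕ) < t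
        omega
      have hσlt : σ (σ⁻¹ ⟨j, hj⟩) < σ ⟨t, htn⟩ :=
        (hstd.2 _ _).2 (Or.inr ⟨by rw [hval_c, htv]; omega, hce⟩)
      rw [Equiv.Perm.apply_inv_self, Fin.lt_def] at hσlt
      simp only [Fin.val_mk] at hσlt  -- hσlt : j < ↑(σ ⟨t,htn⟩)
      omega
    omega
  -- minimum value is 1
  have hu_zero : 0 < n → w.getD (P σ 0) 0 = 1 := by
    intro hn
    have h1 : 0 < w.getD (P σ 0) 0 := getD_pos hcomp (by rw [hlen]; exact P_lt_n hn)
    by_contra hc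
    have hi1 : 1 < w.getD (P σ 0) 0 := by omega
    obtain ⟨s, t, hst, htlen, hsv, htv⟩ := hinv _ hi1 (le_maxPart (hu_mem 0 hn))
    have htn : t < n := by rw [hlen] at htlen; omega
    have h2 : w.getD (P σ 0) 0 ≤ w.getD (P σ ↑(σ ⟨t, htn⟩)) 0 :=
      hu_mono 0 _ (Nat.zero_le _) (σ ⟨t, htn⟩).isLt
    rw [P_sigma] at h2
    have h3 : w.getD (↑(⟨t, htn⟩ : Fin n)) 0 = w.getD t 0 := rfl
    omega
  -- identify values
  have hval_u : ∀ j, j < n → val σ j = w.getD (P σ j) 0 := by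
    intro j
    induction j with
    | zero => intro h; rw [val_zero, hu_zero h]
    | succ m ih =>
      intro hm1
      have hm := ih (by omega)
      rw [val_succ]
      by_cases hD : P σ (m + 1) < P σ m
      · have h1 := hu_strict m hD
        have h2 := hu_step m hm1
        have h3 : D σ m = 1 := by unfold D; rw [if_pos hD]
        omega
      · have h1 := hu_asc m hm1 hD
        have h3 : D σ m = 0 := by unfold D; rw [if_neg hD]
        omega
  -- conclude
  apply List.ext_getElem (by rw [length_d, hlen])
  intro p h1 h2
  have hp : p < n := by rw [length_d] at h1; exact h1
  have hd : (d σ)[p] = val σ (σ ⟨p, hp⟩) := by simp [d]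
  rw [hd, hval_u _ (σ ⟨p, hp⟩).isLt]
  rw [P_sigma]
  rw [List.getD_eq_getElem _ _ (by omega : (↑(⟨p, hp⟩ : Fin n)) < w.length)]

lemma d_surj {w : List ℕ} (hlen : w.length = n) (hcomp : IsComposition w)
    (hinv : Inverting w) : ∃ σ : Equiv.Perm (Fin n), d σ = w := by
  classical
  set g : Fin n → ℕ := fun a => w.getD (↑a) 0 * n + ↑a with hg
  have hglt : ∀ a b : Fin n, g a < g b ↔
      (w.getD (↑a) 0 < w.getD (↑b) 0 ∨ (w.getD (↑a) 0 = w.getD (↑b) 0 ∧ a < b)) := by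
    intro a b
    rw [show (a < b) = ((a : ℕ) < (b : ℕ)) from rfl]
    exact key_lt a.isLt b.isLt
  have hginj : Function.Injective g := by
    intro a b hab
    rcases lt_trichotomy (w.getD (↑a) 0) (w.getD (↑b) 0) with h | h | h
    · have := (hglt a b).2 (Or.inl h); omega
    · have hab' : w.getD (↑a) 0 * n + (↑a : ℕ) = w.getD (↑b) 0 * n + ↑b := hab
      rw [h] at hab'
      exact Fin.val_injective (by omega)
    · have := (hglt b a).2 (Or.inl h); omega
  have hsm : StrictMono (g ∘ (Tuple.sort g)) :=
    (Tuple.monotone_sort g).strictMono_of_injective (hginj.comp (Tuple.sort g).injective)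
  refine ⟨(Tuple.sort g)⁻¹, d_eq_of_std hlen hcomp hinv ⟨hlen, ?_⟩⟩
  intro a b
  rw [← hglt]
  have ha : g a = (g ∘ (Tuple.sort g)) ((Tuple.sort g)⁻¹ a) := by
    simp [Equiv.Perm.apply_inv_self]
  have hb : g b = (g ∘ (Tuple.sort g)) ((Tuple.sort g)⁻¹ b) := by
    simp [Equiv.Perm.apply_inv_self]
  rw [ha, hb, hsm.lt_iff_lt]

end DestdProof


/-- The map `σ ↦ d(σ)` is a bijection between `S_n` and the inverting compositions of
length `n`. -/
theorem destd_bijection (n : ℕ) :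
    ∃ d : Equiv.Perm (Fin n) → List ℕ,
      (∀ σ, IsDestd σ (d σ)) ∧
      Set.BijOn d Set.univ {w : List ℕ | w.length = n ∧ IsComposition w ∧ Inverting w} := by
  refine ⟨DestdProof.d, fun σ => DestdProof.isDestd_d σ, ?_, ?_, ?_⟩
  · intro σ _
    exact ⟨DestdProof.length_d σ, (DestdProof.isDestd_d σ).1, DestdProof.inverting_d σ⟩
  · intro σ _ τ _ h
    exact DestdProof.d_inj h
  · intro w hw
    obtain ⟨hlen, hcomp, hinv⟩ := hw
    obtain ⟨σ, hσ⟩ := DestdProof.d_surj hlen hcomp hinv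
    exact ⟨σ, Set.mem_univ σ, hσ⟩
end

section
/- The number of pure and inverting compositions of length at most n (including the empty composition) is n!. -/
/-- The word `k^{e_{k-1}} ⋯ 2^{e_1} 1^{e_0}`, where `e_j` is the exponent of the value `j+1`. -/
def suffixWord (k : ℕ) (e : List ℕ) : List ℕ :=
  ((List.range k).reverse.map (fun j => List.replicate (e.getD j 0) (j + 1))).flatten

/-- `α = γ · k^{i_k} ⋯ 2^{i_2} 1^{i_1}` with all exponents `≥ 1` and `γ` containing
none of the values `1, …, k`. -/
def IsFactorization (α : List ℕ) (k : ℕ) (γ e : List ℕ) : Prop :=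
  e.length = k ∧ (∀ x ∈ e, 1 ≤ x) ∧ (∀ v ∈ γ, ¬(1 ≤ v ∧ v ≤ k)) ∧
  α = γ ++ suffixWord k e

/-- A factorization as above in which `k` is maximal. -/
def MaxFactorization (α : List ℕ) (k : ℕ) (γ e : List ℕ) : Prop :=
  IsFactorization α k γ e ∧ ∀ k' γ' e', IsFactorization α k' γ' e' → k' ≤ k

/-- A composition is pure if the maximal `k` in its factorization is even. -/
def PureComp (α : List ℕ) : Prop := ∃ k γ e, MaxFactorization α k γ e ∧ Even k

-- maxPart lemmas
lemma le_maxPart {α : List ℕ} {x : ℕ} (hx : x ∈ α) : x ≤ maxPart α := by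
  induction α with
  | nil => simp at hx
  | cons a l ih =>
    rcases List.mem_cons.mp hx with h | h
    · simp [maxPart, h]
    · exact le_trans (ih h) (by simp [maxPart])

lemma maxPart_cons (a : ℕ) (l : List ℕ) : maxPart (a :: l) = max a (maxPart l) := rfl

lemma maxPart_mem_or_zero (α : List ℕ) : maxPart α = 0 ∨ maxPart α ∈ α := by
  induction α with
  | nil => left; rfl
  | cons a l ih =>
    rw [maxPart_cons]
    rcases Nat.le_total a (maxPart l) with h' | h'
    · rw [max_eq_right h']
      rcases ih with h | h
      · left; exact h
      · right; exact List.mem_cons_of_mem _ h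
    · rw [max_eq_left h']; right; exact List.mem_cons_self

-- getD
lemma getD_eq {α : List ℕ} {s : ℕ} (h : s < α.length) : α.getD s 0 = α[s] :=
  List.getD_eq_getElem α 0 h

-- suffixWord lemmas
lemma suffixWord_zero (e : List ℕ) : suffixWord 0 e = [] := rfl

lemma suffixWord_succ (K : ℕ) (e0 : ℕ) (t : List ℕ) :
    suffixWord (K+1) (e0 :: t) = ((suffixWord K t).map (· + 1)) ++ List.replicate e0 1 := by
  unfold suffixWord
  rw [List.range_succ_eq_map, List.map_flatten, List.map_map]
  simp only [List.reverse_cons, List.map_reverse, List.map_map, List.map_cons]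
  rw [List.map_append, List.flatten_append]
  congr 1
  · rw [List.map_reverse, List.map_map]
    congr 2
    apply List.map_congr_left
    intro j _
    simp only [Function.comp_apply, Function.comp, List.getD_cons_succ]
    rw [List.map_replicate]
  · simp

lemma mem_suffixWord {K : ℕ} {e : List ℕ} {v : ℕ} (hv : v ∈ suffixWord K e) :
    1 ≤ v ∧ v ≤ K := by
  unfold suffixWord at hv
  rw [List.mem_flatten] at hv
  obtain ⟨l, hl, hvl⟩ := hv
  rw [List.mem_map] at hl
  obtain ⟨j, hj, rfl⟩ := hl
  rw [List.mem_reverse, List.mem_range] at hj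
  rw [List.eq_of_mem_replicate hvl]
  omega

lemma mem_suffixWord_of_le {K : ℕ} {e : List ℕ} (he : ∀ x ∈ e, 1 ≤ x) (hlen : e.length = K)
    {v : ℕ} (h1 : 1 ≤ v) (h2 : v ≤ K) : v ∈ suffixWord K e := by
  unfold suffixWord
  rw [List.mem_flatten]
  refine ⟨List.replicate (e.getD (v-1) 0) v, ?_, ?_⟩
  · rw [List.mem_map]
    refine ⟨v-1, ?_, by congr 1; omega⟩
    rw [List.mem_reverse, List.mem_range]; omega
  · apply List.mem_replicate.mpr
    have : e.getD (v-1) 0 = e[v-1]'(by omega) := List.getD_eq_getElem e 0 (by omega)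
    have := he (e[v-1]'(by omega)) (List.getElem_mem _)
    omega

lemma le_length_suffixWord {K : ℕ} {e : List ℕ} (he : ∀ x ∈ e, 1 ≤ x) (hlen : e.length = K) :
    K ≤ (suffixWord K e).length := by
  induction K generalizing e with
  | zero => simp
  | succ K ih =>
    obtain ⟨e0, t, rfl⟩ : ∃ e0 t, e = e0 :: t := by
      cases e with
      | nil => simp at hlen
      | cons a b => exact ⟨a, b, rfl⟩
    rw [suffixWord_succ]
    have h0 : 1 ≤ e0 := he e0 (by simp)
    have ht : K ≤ (suffixWord K t).length :=
      ih (fun x hx => he x (by simp [hx])) (by simpa using hlen)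
    simp only [List.length_append, List.length_map, List.length_replicate]
    omega

lemma fact_le_length {α : List ℕ} {K : ℕ} {γ e : List ℕ} (h : IsFactorization α K γ e) :
    K ≤ α.length := by
  obtain ⟨hlen, he, hγ, rfl⟩ := h
  have := le_length_suffixWord he hlen
  simp only [List.length_append]
  omega

lemma fact_zero (α : List ℕ) : IsFactorization α 0 α [] := by
  exact ⟨rfl, by simp, by intro v _ h; omega, by simp [suffixWord_zero]⟩

-- maxk
open Classical in
noncomputable def maxk (α : List ℕ) : ℕ :=
  Nat.findGreatest (fun K => ∃ γ e, IsFactorization α K γ e) α.length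

open Classical in
lemma maxk_spec (α : List ℕ) : ∃ γ e, IsFactorization α (maxk α) γ e := by
  have h0 : (fun K => ∃ γ e, IsFactorization α K γ e) 0 := ⟨α, [], fact_zero α⟩
  exact Nat.findGreatest_spec (P := fun K => ∃ γ e, IsFactorization α K γ e)
    (Nat.zero_le _) h0

open Classical in
lemma le_maxk {α : List ℕ} {K : ℕ} {γ e : List ℕ} (h : IsFactorization α K γ e) :
    K ≤ maxk α := by
  exact Nat.le_findGreatest (P := fun K => ∃ γ e, IsFactorization α K γ e)
    (fact_le_length h) ⟨γ, e, h⟩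

lemma maxFactorization_maxk (α : List ℕ) : ∃ γ e, MaxFactorization α (maxk α) γ e := by
  obtain ⟨γ, e, h⟩ := maxk_spec α
  exact ⟨γ, e, h, fun k' γ' e' h' => le_trans (le_maxk h') (le_refl _)⟩

lemma maxFactorization_eq_maxk {α : List ℕ} {K : ℕ} {γ e : List ℕ}
    (h : MaxFactorization α K γ e) : K = maxk α := by
  obtain ⟨γ', e', h'⟩ := maxFactorization_maxk α
  exact le_antisymm (le_maxk h.1) (h.2 _ _ _ h'.1)

lemma pureComp_iff (α : List ℕ) : PureComp α ↔ Even (maxk α) := by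
  constructor
  · rintro ⟨k, γ, e, hk, hev⟩
    obtain ⟨γ', e', h'⟩ := maxFactorization_maxk α
    have : k = maxk α := le_antisymm (le_maxk hk.1) (hk.2 _ _ _ h'.1)
    exact this ▸ hev
  · intro hev
    obtain ⟨γ, e, h⟩ := maxFactorization_maxk α
    exact ⟨maxk α, γ, e, h, hev⟩

-- padding
def padW (β : List ℕ) (j : ℕ) : List ℕ := β.map (· + 1) ++ List.replicate j 1

lemma padW_length (β : List ℕ) (j : ℕ) : (padW β j).length = β.length + j := by
  simp [padW]

lemma padW_getD_left {β : List ℕ} {j s : ℕ} (h : s < β.length) :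
    (padW β j).getD s 0 = β.getD s 0 + 1 := by
  rw [getD_eq (by rw [padW_length]; omega), getD_eq h]
  unfold padW
  rw [List.getElem_append_left (by simpa using h), List.getElem_map]

lemma padW_getD_right {β : List ℕ} {j s : ℕ} (h1 : β.length ≤ s) (h2 : s < β.length + j) :
    (padW β j).getD s 0 = 1 := by
  rw [getD_eq (by rw [padW_length]; omega)]
  unfold padW
  rw [List.getElem_append_right (by simpa using h1)]
  simp

lemma append_replicate_one_inj {A B : List ℕ} {a b : ℕ}
    (hA : ∀ x ∈ A, x ≠ 1) (hB : ∀ x ∈ B, x ≠ 1)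
    (h : A ++ List.replicate a 1 = B ++ List.replicate b 1) : A = B ∧ a = b := by
  have hcA : (A ++ List.replicate a 1).count 1 = a := by
    rw [List.count_append, List.count_eq_zero_of_not_mem (fun hmem => hA 1 hmem rfl),
      List.count_replicate]
    simp
  have hcB : (B ++ List.replicate b 1).count 1 = b := by
    rw [List.count_append, List.count_eq_zero_of_not_mem (fun hmem => hB 1 hmem rfl),
      List.count_replicate]
    simp
  have hab : a = b := by rw [← hcA, ← hcB, h]
  subst hab
  refine ⟨List.append_inj_left h (?_), rfl⟩
  have := congrArg List.length h
  simp only [List.length_append, List.length_replicate] at this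
  omega

lemma fact_pad_forward {β : List ℕ} (hβ : ∀ x ∈ β, 1 ≤ x) {j : ℕ} (hj : 1 ≤ j) {K : ℕ}
    {γ e : List ℕ} (h : IsFactorization (padW β j) (K+1) γ e) :
    ∃ γ₀ t, IsFactorization β K γ₀ t ∧ γ = γ₀.map (· + 1) ∧ e = j :: t := by
  obtain ⟨hlen, he, hγ, heq⟩ := h
  obtain ⟨e0, t, rfl⟩ : ∃ e0 t, e = e0 :: t := by
    cases e with
    | nil => simp at hlen
    | cons a b => exact ⟨a, b, rfl⟩
  rw [suffixWord_succ] at heq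
  unfold padW at heq
  rw [← List.append_assoc] at heq
  have huniq := append_replicate_one_inj (A := γ ++ (suffixWord K t).map (· + 1))
    (B := β.map (· + 1)) ?_ ?_ heq.symm
  · obtain ⟨hAB, hab⟩ := huniq
    subst hab
    -- β.map (+1) = γ ++ (suffixWord K t).map (+1)
    rw [eq_comm, List.map_eq_append_iff] at hAB
    obtain ⟨b1, b2, hsplit, hb1, hb2⟩ := hAB
    have hinj : Function.Injective (· + 1 : ℕ → ℕ) := fun x y h => by simpa using h
    have hb2' : b2 = suffixWord K t := List.map_injective_iff.mpr hinj hb2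
    refine ⟨b1, t, ⟨by simpa using hlen, fun x hx => he x (by simp [hx]), ?_, by
      rw [hsplit, hb2']⟩, hb1.symm, rfl⟩
    intro v hv hcon
    have hmem : v + 1 ∈ γ := by rw [← hb1]; exact List.mem_map_of_mem hv
    have h2 := hγ _ hmem
    omega
  · intro x hx
    rcases List.mem_append.mp hx with h' | h'
    · intro hx1; exact hγ x h' ⟨by omega, by omega⟩
    · obtain ⟨y, hy, rfl⟩ := List.mem_map.mp h'
      have := (mem_suffixWord hy).1
      show y + 1 ≠ 1
      omega
  · intro x hx
    obtain ⟨y, hy, rfl⟩ := List.mem_map.mp hx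
    have := hβ y hy
    show y + 1 ≠ 1
    omega

lemma fact_pad_backward {β : List ℕ} (hβ : ∀ x ∈ β, 1 ≤ x) {j : ℕ} (hj : 1 ≤ j) {K : ℕ}
    {γ₀ t : List ℕ} (h : IsFactorization β K γ₀ t) :
    IsFactorization (padW β j) (K+1) (γ₀.map (· + 1)) (j :: t) := by
  obtain ⟨hlen, he, hγ, heq⟩ := h
  refine ⟨by simpa using hlen, ?_, ?_, ?_⟩
  · intro x hx
    rcases List.mem_cons.mp hx with h' | h'
    · omega
    · exact he x h'
  · intro v hv hcon
    obtain ⟨y, hy, rfl⟩ := List.mem_map.mp hv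
    have h1 : 1 ≤ y := hβ y (by rw [heq]; exact List.mem_append_left _ hy)
    have h2 := hγ y hy
    have hcon' : 1 ≤ y + 1 ∧ y + 1 ≤ K + 1 := hcon
    omega
  · rw [suffixWord_succ, heq]
    unfold padW
    simp [List.map_append]

lemma maxk_pad {β : List ℕ} (hβ : ∀ x ∈ β, 1 ≤ x) {j : ℕ} (hj : 1 ≤ j) :
    maxk (padW β j) = maxk β + 1 := by
  obtain ⟨γ, e, hfact⟩ := maxk_spec β
  have h1 : maxk β + 1 ≤ maxk (padW β j) := le_maxk (fact_pad_backward hβ hj hfact)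
  have h2 : maxk (padW β j) ≤ maxk β + 1 := by
    obtain ⟨γ', e', hfact'⟩ := maxk_spec (padW β j)
    rcases Nat.eq_zero_or_pos (maxk (padW β j)) with h0 | h0
    · omega
    · obtain ⟨M, hM⟩ : ∃ M, maxk (padW β j) = M + 1 := ⟨maxk (padW β j) - 1, by omega⟩
      rw [hM] at hfact'
      obtain ⟨γ₀, t, hft, _, _⟩ := fact_pad_forward hβ hj hfact'
      have := le_maxk hft
      omega
  omega

lemma one_mem_of_inverting {β : List ℕ} (hc : IsComposition β) (hi : Inverting β)
    (hne : β ≠ []) : 1 ∈ β := by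
  obtain ⟨x, hx⟩ := List.exists_mem_of_ne_nil β hne
  have hx1 : 1 ≤ x := hc x hx
  have hmax1 : 1 ≤ maxPart β := le_trans hx1 (le_maxPart hx)
  rcases maxPart_mem_or_zero β with h0 | hmem
  · omega
  · rcases Nat.lt_or_ge (maxPart β) 2 with h | h
    · have : maxPart β = 1 := by omega
      rwa [this] at hmem
    · obtain ⟨s, t, hst, ht, hs', ht'⟩ := hi 2 (by omega) h
      have heq : β.getD t 0 = β[t] := getD_eq ht
      have h2 : β[t] = 1 := by omega
      exact h2 ▸ List.getElem_mem _

lemma maxPart_pad_le (β : List ℕ) (j : ℕ) : maxPart (padW β j) ≤ maxPart β + 1 := by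
  rcases maxPart_mem_or_zero (padW β j) with h0 | hmem
  · omega
  · have hmem' : maxPart (padW β j) ∈ β.map (· + 1) ++ List.replicate j 1 := hmem
    rcases List.mem_append.mp hmem' with h | h
    · obtain ⟨y, hy, hy'⟩ := List.mem_map.mp h
      have h1 := le_maxPart hy
      have h2 : y + 1 = maxPart (padW β j) := hy'
      omega
    · have := List.eq_of_mem_replicate h
      omega

lemma inverting_pad {β : List ℕ} (hc : IsComposition β) (hinv : Inverting β) {j : ℕ}
    (hj : 1 ≤ j) : Inverting (padW β j) := by
  intro i hi1 hile
  have hbound : i ≤ maxPart β + 1 := le_trans hile (maxPart_pad_le β j)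
  have hne : β ≠ [] := by
    rintro rfl
    have h0 : maxPart ([] : List ℕ) = 0 := rfl
    omega
  rcases Nat.lt_or_ge i 3 with h3 | h3
  · -- i = 2
    have hi2 : i = 2 := by omega
    subst hi2
    obtain ⟨s0, hs0, hval⟩ := List.getElem_of_mem (one_mem_of_inverting hc hinv hne)
    refine ⟨s0, β.length, hs0, by rw [padW_length]; omega, ?_, ?_⟩
    · rw [padW_getD_left hs0, getD_eq hs0, hval]
    · rw [padW_getD_right (le_refl _) (by omega)]
  · -- i ≥ 3
    obtain ⟨s, t, hst, ht, hs', ht'⟩ := hinv (i-1) (by omega) (by omega)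
    have hs : s < β.length := by omega
    refine ⟨s, t, hst, by rw [padW_length]; omega, ?_, ?_⟩
    · rw [padW_getD_left hs, hs']; omega
    · rw [padW_getD_left ht, ht']; omega

lemma inverting_unpad {β : List ℕ} {j : ℕ} (hw : Inverting (padW β j))
    : Inverting β := by
  intro i hi1 hile
  have hmem : maxPart β ∈ β := by
    rcases maxPart_mem_or_zero β with h0 | h
    · omega
    · exact h
  have hmax : maxPart β + 1 ≤ maxPart (padW β j) := by
    apply le_maxPart
    unfold padW
    exact List.mem_append_left _ (List.mem_map_of_mem hmem)
  obtain ⟨s, t, hst, ht, hs', ht'⟩ := hw (i+1) (by omega) (by omega)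
  rw [padW_length] at ht
  have htb : t < β.length := by
    by_contra hcon
    rw [padW_getD_right (by omega) (by omega)] at ht'
    omega
  have hsb : s < β.length := by omega
  rw [padW_getD_left hsb] at hs'
  rw [padW_getD_left htb] at ht'
  exact ⟨s, t, hst, htb, by omega, by omega⟩

lemma comp_pad {β : List ℕ} (hc : IsComposition β) (j : ℕ) : IsComposition (padW β j) := by
  intro x hx
  rcases List.mem_append.mp hx with h | h
  · obtain ⟨y, hy, rfl⟩ := List.mem_map.mp h
    have := hc y hy
    show 0 < y + 1
    omega
  · have := List.eq_of_mem_replicate h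
    omega

abbrev Sset (n : ℕ) : Type :=
  {α : List ℕ // α.length ≤ n ∧ IsComposition α ∧ Inverting α ∧ PureComp α}
abbrev Iset (n : ℕ) : Type := {α : List ℕ // α.length = n ∧ IsComposition α ∧ Inverting α}

def padMap (n : ℕ) (b : Sset n) : Iset n :=
  if h : b.1.length = n then ⟨b.1, h, b.2.2.1, b.2.2.2.1⟩
  else
    ⟨padW b.1 (n - b.1.length), by have := b.2.1; rw [padW_length]; omega,
      comp_pad b.2.2.1 _, inverting_pad b.2.2.1 b.2.2.2.1 (by have := b.2.1; omega)⟩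

lemma pad_decomp {w : List ℕ} (hcomp : IsComposition w) {M : ℕ} (hM : maxk w = M + 1) :
    ∃ β j, 1 ≤ j ∧ w = padW β j ∧ IsComposition β ∧ maxk β = M := by
  obtain ⟨γ, e, hfact⟩ := maxk_spec w
  rw [hM] at hfact
  obtain ⟨hlen, he, hγ, heq⟩ := hfact
  obtain ⟨e0, t, rfl⟩ : ∃ e0 t, e = e0 :: t := by
    cases e with
    | nil => simp at hlen
    | cons a b => exact ⟨a, b, rfl⟩
  have hγpos : ∀ x ∈ γ, 2 ≤ x := by
    intro x hx
    have h1 : 0 < x := hcomp x (by rw [heq]; exact List.mem_append_left _ hx)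
    have h2 := hγ x hx
    omega
  have hmap : (γ.map (· - 1)).map (· + 1) = γ := by
    rw [List.map_map]
    conv_rhs => rw [← List.map_id γ]
    apply List.map_congr_left
    intro a ha
    have := hγpos a ha
    simp only [Function.comp_apply, id_eq]
    omega
  set β := γ.map (· - 1) ++ suffixWord M t with hβ
  have hcompβ : IsComposition β := by
    intro x hx
    rcases List.mem_append.mp hx with h | h
    · obtain ⟨y, hy, rfl⟩ := List.mem_map.mp h
      have := hγpos y hy
      show 0 < y - 1
      omega
    · have := (mem_suffixWord h).1
      omega
  have hj : 1 ≤ e0 := he e0 List.mem_cons_self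
  have hw : w = padW β e0 := by
    rw [heq, suffixWord_succ, hβ]
    unfold padW
    rw [List.map_append, hmap, List.append_assoc]
  have hmk : maxk (padW β e0) = maxk β + 1 :=
    maxk_pad (fun x hx => hcompβ x hx) hj
  rw [← hw, hM] at hmk
  exact ⟨β, e0, hj, hw, hcompβ, by omega⟩

lemma padMap_bijective (n : ℕ) : Function.Bijective (padMap n) := by
  constructor
  · rintro ⟨β, hβlen, hβc, hβi, hβp⟩ ⟨β', hβ'len, hβ'c, hβ'i, hβ'p⟩ heq
    have hev : Even (maxk β) := (pureComp_iff β).mp hβp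
    have hev' : Even (maxk β') := (pureComp_iff β').mp hβ'p
    unfold padMap at heq
    by_cases h1 : β.length = n <;> by_cases h2 : β'.length = n <;>
      simp only [h1, h2, dif_pos, dif_neg, not_false_iff] at heq
    · refine Subtype.ext ?_
      injection heq
    · exfalso
      have hval : β = padW β' (n - β'.length) := by injection heq
      have : maxk β = maxk β' + 1 := by
        rw [hval]; exact maxk_pad (fun x hx => hβ'c x hx) (by omega)
      rw [this] at hev
      exact (Nat.even_add_one.mp hev) hev'
    · exfalso
      have hval : padW β (n - β.length) = β' := by injection heq
      have : maxk β' = maxk β + 1 := by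
        rw [← hval]; exact maxk_pad (fun x hx => hβc x hx) (by omega)
      rw [this] at hev'
      exact (Nat.even_add_one.mp hev') hev
    · have hval : padW β (n - β.length) = padW β' (n - β'.length) :=
        congrArg Subtype.val heq
      unfold padW at hval
      have hfree : ∀ (δ : List ℕ), IsComposition δ → ∀ x ∈ δ.map (· + 1), x ≠ 1 := by
        intro δ hδ x hx
        obtain ⟨y, hy, rfl⟩ := List.mem_map.mp hx
        show y + 1 ≠ 1
        have := hδ y hy
        omega
      obtain ⟨hAB, _⟩ := append_replicate_one_inj (hfree β hβc) (hfree β' hβ'c) hval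
      have : β = β' := List.map_injective_iff.mpr (fun x y h => by simpa using h) hAB
      exact Subtype.ext this
  · rintro ⟨w, hwlen, hwc, hwi⟩
    by_cases hev : Even (maxk w)
    · refine ⟨⟨w, le_of_eq hwlen, hwc, hwi, (pureComp_iff w).mpr hev⟩, ?_⟩
      unfold padMap
      simp only [hwlen, dif_pos]
    · have hpos : 0 < maxk w := by
        rcases Nat.eq_zero_or_pos (maxk w) with h | h
        · exact absurd (h ▸ Even.zero) hev
        · exact h
      obtain ⟨β, j, hj, hw, hcompβ, hmkβ⟩ := pad_decomp hwc
        (M := maxk w - 1) (by omega)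
      have hevβ : Even (maxk β) := by
        rw [hmkβ]
        rcases Nat.even_or_odd (maxk w) with h | h
        · exact absurd h hev
        · obtain ⟨c, hc⟩ := h; exact ⟨c, by omega⟩
      have hlenβ : β.length + j = n := by
        have := congrArg List.length hw
        rw [padW_length] at this
        omega
      refine ⟨⟨β, by omega, hcompβ, inverting_unpad (hw ▸ hwi), (pureComp_iff β).mpr hevβ⟩, ?_⟩
      unfold padMap
      have hne : ¬ β.length = n := by omega
      simp only [hne, dif_neg, not_false_iff]
      apply Subtype.ext
      show padW β (n - β.length) = w
      rw [hw]
      congr 1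
      omega

lemma card_S_eq_card_I (n : ℕ) : Nat.card (Sset n) = Nat.card (Iset n) :=
  Nat.card_eq_of_bijective (padMap n) (padMap_bijective n)

-- Part II : inverting words of length n ↔ permutations
def qf (n : ℕ) (σ : Equiv.Perm (Fin n)) (l : ℕ) : ℕ :=
  if h : l < n then (σ ⟨l, h⟩ : ℕ) else l

def dval (n : ℕ) (σ : Equiv.Perm (Fin n)) (r : ℕ) : ℕ :=
  1 + ((Finset.range r).filter (fun l => qf n σ (l+1) < qf n σ l)).card

lemma dval_zero (n : ℕ) (σ : Equiv.Perm (Fin n)) : dval n σ 0 = 1 := by simp [dval]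

lemma dval_mono (n : ℕ) (σ : Equiv.Perm (Fin n)) {r r' : ℕ} (h : r ≤ r') :
    dval n σ r ≤ dval n σ r' := by
  unfold dval
  have : (Finset.range r).filter (fun l => qf n σ (l+1) < qf n σ l) ⊆
      (Finset.range r').filter (fun l => qf n σ (l+1) < qf n σ l) :=
    Finset.filter_subset_filter _ (Finset.range_subset_range.mpr h)
  have := Finset.card_le_card this
  omega

lemma dval_succ (n : ℕ) (σ : Equiv.Perm (Fin n)) (r : ℕ) :
    dval n σ (r+1) = dval n σ r + (if qf n σ (r+1) < qf n σ r then 1 else 0) := by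
  unfold dval
  rw [Finset.range_add_one, Finset.filter_insert]
  by_cases h : qf n σ (r+1) < qf n σ r
  · rw [if_pos h, if_pos h, Finset.card_insert_of_notMem (by simp)]
    omega
  · rw [if_neg h, if_neg h]
    omega

lemma exists_jump (n : ℕ) (σ : Equiv.Perm (Fin n)) {i R : ℕ} (h1 : 2 ≤ i)
    (h2 : i ≤ dval n σ R) :
    ∃ r, 0 < r ∧ r ≤ R ∧ dval n σ r = i ∧ dval n σ (r-1) = i - 1 ∧
      qf n σ r < qf n σ (r-1) := by
  induction R with
  | zero => rw [dval_zero] at h2; omega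
  | succ R ih =>
    by_cases h : i ≤ dval n σ R
    · obtain ⟨r, hr⟩ := ih h
      exact ⟨r, hr.1, by omega, hr.2.2⟩
    · have hs := dval_succ n σ R
      by_cases hd : qf n σ (R+1) < qf n σ R
      · rw [if_pos hd] at hs
        refine ⟨R+1, by omega, le_refl _, by omega, by simpa using (by omega : dval n σ R = i - 1), by simpa using hd⟩
      · rw [if_neg hd] at hs
        omega

def dword (n : ℕ) (σ : Equiv.Perm (Fin n)) : List ℕ :=
  List.ofFn (fun p : Fin n => dval n σ (σ.symm p))

lemma dword_length (n : ℕ) (σ : Equiv.Perm (Fin n)) : (dword n σ).length = n := by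
  simp [dword]

lemma dword_getD (n : ℕ) (σ : Equiv.Perm (Fin n)) (p : Fin n) :
    (dword n σ).getD p.val 0 = dval n σ (σ.symm p) := by
  rw [getD_eq (by rw [dword_length]; exact p.isLt)]
  unfold dword
  rw [List.getElem_ofFn]

lemma qf_lt (n : ℕ) (σ : Equiv.Perm (Fin n)) {l : ℕ} (h : l < n) :
    qf n σ l = (σ ⟨l, h⟩ : ℕ) := dif_pos h

lemma dword_comp (n : ℕ) (σ : Equiv.Perm (Fin n)) : IsComposition (dword n σ) := by
  intro x hx
  unfold dword at hx
  rw [List.mem_ofFn] at hx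
  obtain ⟨p, rfl⟩ := hx
  show 0 < dval n σ (σ.symm p)
  unfold dval
  omega

lemma dword_inverting (n : ℕ) (σ : Equiv.Perm (Fin n)) : Inverting (dword n σ) := by
  intro i hi1 hile
  rcases maxPart_mem_or_zero (dword n σ) with h0 | hmem
  · omega
  · have hmem' : maxPart (dword n σ) ∈ List.ofFn (fun p : Fin n => dval n σ (σ.symm p)) :=
      hmem
    rw [List.mem_ofFn] at hmem'
    obtain ⟨p, hp⟩ := hmem'
    have hp' : dval n σ (σ.symm p) = maxPart (dword n σ) := hp
    have hn : 0 < n := lt_of_le_of_lt (Nat.zero_le p.val) p.isLt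
    have hbound : i ≤ dval n σ (n-1) := by
      have h1 : ((σ.symm p : Fin n) : ℕ) ≤ n - 1 := by
        have := (σ.symm p).isLt; omega
      have := dval_mono n σ h1
      omega
    obtain ⟨r, hr0, hrle, hri, hri', hdesc⟩ := exists_jump n σ hi1 hbound
    have hrlt : r < n := by omega
    have hr1lt : r - 1 < n := by omega
    rw [qf_lt n σ hrlt, qf_lt n σ hr1lt] at hdesc
    refine ⟨(σ ⟨r, hrlt⟩ : ℕ), (σ ⟨r-1, hr1lt⟩ : ℕ), hdesc, by rw [dword_length]; exact (σ ⟨r-1,hr1lt⟩).isLt, ?_, ?_⟩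
    · have h := dword_getD n σ (σ ⟨r, hrlt⟩)
      rw [Equiv.symm_apply_apply] at h
      rw [h]
      exact hri
    · have h := dword_getD n σ (σ ⟨r-1, hr1lt⟩)
      rw [Equiv.symm_apply_apply] at h
      rw [h]
      exact hri'

lemma one_le_dval (n : ℕ) (σ : Equiv.Perm (Fin n)) (r : ℕ) : 1 ≤ dval n σ r := by
  unfold dval; omega

lemma ascent_chain (n : ℕ) (σ : Equiv.Perm (Fin n)) :
    ∀ b a, a < b → b < n → dval n σ a = dval n σ b → qf n σ a < qf n σ b := by
  intro b
  induction b with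
  | zero => omega
  | succ b ih =>
    intro a hab hb hdv
    have hstep := dval_succ n σ b
    have hmono1 : dval n σ a ≤ dval n σ b := dval_mono n σ (by omega)
    have hnd : ¬ qf n σ (b+1) < qf n σ b := by
      intro hd
      rw [if_pos hd] at hstep
      omega
    have hne : qf n σ b ≠ qf n σ (b+1) := by
      rw [qf_lt n σ (by omega : b < n), qf_lt n σ hb]
      intro hcon
      have : (⟨b, by omega⟩ : Fin n) = ⟨b+1, hb⟩ :=
        σ.injective (Fin.val_injective hcon)
      simp at this
    rcases Nat.eq_or_lt_of_le (Nat.le_of_lt_succ (Nat.lt_succ_of_lt hab) |>.trans (le_refl _)) with h | h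
    · omega
    · by_cases hab' : a = b
      · subst hab'
        omega
      · have hltb : a < b := by omega
        rw [if_neg hnd] at hstep
        have := ih a hltb (by omega) (by omega)
        omega

lemma sort_dword (n : ℕ) (σ : Equiv.Perm (Fin n)) :
    σ = Tuple.sort (fun p : Fin n => dval n σ ((σ.symm p) : ℕ)) := by
  rw [Tuple.eq_sort_iff]
  constructor
  · intro r r' hrr'
    simp only [Function.comp_apply, Equiv.symm_apply_apply]
    exact dval_mono n σ hrr'
  · intro r r' hrr' hval
    simp only [Equiv.symm_apply_apply] at hval
    have := ascent_chain n σ r'.val r.val hrr' r'.isLt hval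
    rw [qf_lt n σ r.isLt, qf_lt n σ r'.isLt] at this
    rw [Fin.lt_def]
    simpa using this

lemma dword_injective (n : ℕ) : Function.Injective (dword n) := by
  intro σ τ h
  unfold dword at h
  have hf : (fun p : Fin n => dval n σ ((σ.symm p) : ℕ)) =
      (fun p : Fin n => dval n τ ((τ.symm p) : ℕ)) := List.ofFn_injective h
  rw [sort_dword n σ, sort_dword n τ, hf]

lemma recover {n : ℕ} {w : List ℕ} (hlen : w.length = n) (hc : IsComposition w)
    (hi : Inverting w) :
    ∀ m (hm : m < n),
      w.getD ((Tuple.sort (fun p : Fin n => w.getD p.val 0)) ⟨m, hm⟩ : Fin n).val 0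
        = dval n (Tuple.sort (fun p : Fin n => w.getD p.val 0)) m := by
  set u : Fin n → ℕ := fun p : Fin n => w.getD p.val 0 with hu
  set σ : Equiv.Perm (Fin n) := Tuple.sort u with hσ
  obtain ⟨hmono, hties⟩ := (Tuple.eq_sort_iff (f := u) (σ := σ)).mp hσ
  have hmem : ∀ p : Fin n, u p ∈ w := by
    intro p
    have hp : p.val < w.length := by rw [hlen]; exact p.isLt
    have : u p = w[p.val] := getD_eq hp
    rw [this]
    exact List.getElem_mem _
  have hmax : ∀ p : Fin n, u p ≤ maxPart w := fun p => le_maxPart (hmem p)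
  have hpos : ∀ p : Fin n, 1 ≤ u p := fun p => hc _ (hmem p)
  intro m
  induction m with
  | zero =>
    intro hm
    rw [dval_zero]
    show u (σ ⟨0, hm⟩) = 1
    by_contra hcon
    have h2 : 2 ≤ u (σ ⟨0, hm⟩) := by
      have := hpos (σ ⟨0, hm⟩)
      omega
    obtain ⟨s, t, hst, ht, hs', ht'⟩ := hi (u (σ ⟨0, hm⟩)) (by omega)
      (hmax (σ ⟨0, hm⟩))
    rw [hlen] at ht
    have htval : u ⟨t, ht⟩ = u (σ ⟨0, hm⟩) - 1 := ht'
    have hle : u (σ ⟨0, hm⟩) ≤ u ⟨t, ht⟩ := by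
      have h3 : u (σ ⟨0, hm⟩) ≤ u (σ (σ.symm ⟨t, ht⟩)) :=
        hmono (by rw [Fin.le_def]; exact Nat.zero_le _)
      rwa [Equiv.apply_symm_apply] at h3
    omega
  | succ m ihm =>
    intro hm
    have hm' : m < n := by omega
    have IH : u (σ ⟨m, hm'⟩) = dval n σ m := ihm hm'
    show u (σ ⟨m+1, hm⟩) = dval n σ (m+1)
    set A := dval n σ m with hA
    have hA1 : 1 ≤ A := one_le_dval n σ m
    have h1 : A ≤ u (σ ⟨m+1, hm⟩) := by
      rw [← IH]
      exact hmono (by rw [Fin.le_def]; show m ≤ m + 1; omega)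
    have h2 : u (σ ⟨m+1, hm⟩) ≤ A + 1 := by
      by_contra hcon
      obtain ⟨s, t, hst, ht, hs', ht'⟩ := hi (A+1) (by omega)
        (le_trans (by omega) (hmax (σ ⟨m+1, hm⟩)))
      rw [hlen] at ht
      have hsn : s < n := by omega
      have hus : u ⟨s, hsn⟩ = A + 1 := hs'
      set ρ := σ.symm ⟨s, hsn⟩ with hρ
      have hσρ : u (σ ρ) = A + 1 := by rw [hρ, Equiv.apply_symm_apply]; exact hus
      rcases Nat.lt_or_ge ρ.val (m+1) with hlt | hge
      · have h3 : u (σ ρ) ≤ u (σ ⟨m, hm'⟩) :=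
          hmono (by rw [Fin.le_def]; show ρ.val ≤ m; omega)
        rw [IH, hσρ] at h3
        omega
      · have h3 : u (σ ⟨m+1, hm⟩) ≤ u (σ ρ) :=
          hmono (by rw [Fin.le_def]; show m + 1 ≤ ρ.val; omega)
        rw [hσρ] at h3
        omega
    have hqm1 : qf n σ (m+1) = ((σ ⟨m+1, hm⟩ : Fin n) : ℕ) := qf_lt n σ hm
    have hqm : qf n σ m = ((σ ⟨m, hm'⟩ : Fin n) : ℕ) := qf_lt n σ hm'
    have hstep := dval_succ n σ m
    by_cases hd : qf n σ (m+1) < qf n σ m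
    · rw [if_pos hd] at hstep
      have hne : u (σ ⟨m+1, hm⟩) ≠ A := by
        intro hcon
        have h4 := hties ⟨m, hm'⟩ ⟨m+1, hm⟩ (by rw [Fin.lt_def]; show m < m + 1; omega)
          (by rw [IH, hcon])
        rw [Fin.lt_def] at h4
        rw [hqm1, hqm] at hd
        omega
      rw [hstep]
      omega
    · rw [if_neg hd] at hstep
      have heq : u (σ ⟨m+1, hm⟩) = A := by
        by_contra hcon
        have hval : u (σ ⟨m+1, hm⟩) = A + 1 := by omega
        obtain ⟨s, t, hst, ht, hs', ht'⟩ := hi (A+1) (by omega)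
          (by rw [← hval]; exact hmax _)
        rw [hlen] at ht
        have hsn : s < n := by omega
        have hus : u ⟨s, hsn⟩ = A + 1 := hs'
        have hut : u ⟨t, ht⟩ = A := by
          have h5 : u ⟨t, ht⟩ = A + 1 - 1 := ht'
          omega
        set ρs := σ.symm ⟨s, hsn⟩ with hρs
        set ρt := σ.symm ⟨t, ht⟩ with hρt
        have hσρs : u (σ ρs) = A + 1 := by rw [hρs, Equiv.apply_symm_apply]; exact hus
        have hσρt : u (σ ρt) = A := by rw [hρt, Equiv.apply_symm_apply]; exact hut
        have hρsge : m + 1 ≤ ρs.val := by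
          by_contra hcon2
          have h3 : u (σ ρs) ≤ u (σ ⟨m, hm'⟩) :=
            hmono (by rw [Fin.le_def]; show ρs.val ≤ m; omega)
          rw [IH, hσρs] at h3
          omega
        have hρtle : ρt.val ≤ m := by
          by_contra hcon2
          have h3 : u (σ ⟨m+1, hm⟩) ≤ u (σ ρt) :=
            hmono (by rw [Fin.le_def]; show m + 1 ≤ ρt.val; omega)
          rw [hσρt, hval] at h3
          omega
        have hρsval : (σ ρs : Fin n).val = s := by rw [hρs, Equiv.apply_symm_apply]
        have hρtval : (σ ρt : Fin n).val = t := by rw [hρt, Equiv.apply_symm_apply]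
        have hle1 : ((σ ⟨m+1, hm⟩ : Fin n) : ℕ) ≤ s := by
          rcases Nat.eq_or_lt_of_le hρsge with hcase | hcase
          · have hfe : (⟨m+1, hm⟩ : Fin n) = ρs := Fin.ext hcase
            rw [hfe, hρsval]
          · have h4 := hties ⟨m+1, hm⟩ ρs (by rw [Fin.lt_def]; exact hcase)
              (by rw [hval, hσρs])
            rw [Fin.lt_def, hρsval] at h4
            exact le_of_lt h4
        have hle2 : t ≤ ((σ ⟨m, hm'⟩ : Fin n) : ℕ) := by
          rcases Nat.eq_or_lt_of_le hρtle with hcase | hcase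
          · have hfe : ρt = (⟨m, hm'⟩ : Fin n) := Fin.ext hcase
            rw [← hfe, hρtval]
          · have h4 := hties ρt ⟨m, hm'⟩ (by rw [Fin.lt_def]; exact hcase)
              (by rw [hσρt, IH])
            rw [Fin.lt_def, hρtval] at h4
            exact le_of_lt h4
        rw [hqm1, hqm] at hd
        omega
      rw [hstep, heq]
      omega

lemma dword_sort_eq {n : ℕ} {w : List ℕ} (hlen : w.length = n) (hc : IsComposition w)
    (hi : Inverting w) :
    dword n (Tuple.sort (fun p : Fin n => w.getD p.val 0)) = w := by
  set σ := Tuple.sort (fun p : Fin n => w.getD p.val 0) with hσ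
  apply List.ext_getElem (by rw [dword_length, hlen])
  intro p h1 h2
  have hp : p < n := by rwa [dword_length] at h1
  have hgd : (dword n σ)[p] = dval n σ ((σ.symm ⟨p, hp⟩ : Fin n) : ℕ) := by
    have h := dword_getD n σ ⟨p, hp⟩
    rwa [getD_eq h1] at h
  set r := σ.symm ⟨p, hp⟩ with hr
  have hrec := recover hlen hc hi r.val r.isLt
  have hmk : (⟨r.val, r.isLt⟩ : Fin n) = r := Fin.eta r r.isLt
  rw [hmk] at hrec
  have hsr : σ r = ⟨p, hp⟩ := by rw [hr]; exact Equiv.apply_symm_apply σ _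
  rw [hsr] at hrec
  have hw : w.getD p 0 = w[p] := getD_eq h2
  show (dword n σ)[p] = w[p]
  rw [hgd, ← hw]
  exact hrec.symm

def dwordMap (n : ℕ) (σ : Equiv.Perm (Fin n)) : Iset n :=
  ⟨dword n σ, dword_length n σ, dword_comp n σ, dword_inverting n σ⟩

lemma dwordMap_bijective (n : ℕ) : Function.Bijective (dwordMap n) := by
  constructor
  · intro σ τ h
    apply dword_injective n
    have : (dwordMap n σ).val = (dwordMap n τ).val := by rw [h]
    exact this
  · rintro ⟨w, hlen, hc, hi⟩
    exact ⟨Tuple.sort (fun p : Fin n => w.getD p.val 0),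
      Subtype.ext (dword_sort_eq hlen hc hi)⟩

theorem pure_inverting_card_aux (n : ℕ) :
    Nat.card {α : List ℕ // α.length ≤ n ∧ IsComposition α ∧ Inverting α ∧ PureComp α} =
      Nat.factorial n := by
  have h1 : Nat.card (Sset n) = Nat.card (Iset n) := card_S_eq_card_I n
  have h2 : Nat.card (Equiv.Perm (Fin n)) = Nat.card (Iset n) :=
    Nat.card_eq_of_bijective _ (dwordMap_bijective n)
  have h3 : Nat.card (Equiv.Perm (Fin n)) = Nat.factorial n := by
    rw [Nat.card_eq_fintype_card, Fintype.card_perm, Fintype.card_fin]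
  show Nat.card (Sset n) = Nat.factorial n
  omega

/-- The number of pure and inverting compositions of length at most `n` (including the
empty composition) is `n!`. -/
theorem pure_inverting_card (n : ℕ) :
    Nat.card {α : List ℕ // α.length ≤ n ∧ IsComposition α ∧ Inverting α ∧ PureComp α} =
      Nat.factorial n := by
  exact pure_inverting_card_aux n
end

section
/- Define P_n(q) = (∑_{i=0}^{n} q^i/(1−q)^i) / (∏_{i=1}^{n} 1/(1−q^i)). Then P_n(q) = ∏_{i=1}^{n−1}(1+q+⋯+q^i) · ∑_{i=0}^{n} q^i (1−q)^{n−i}, and in particular P_n(q) is a polynomial in q with P_n(1) = n!. -/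
/-- The Bergeron–Reutenauer polynomial
`P_n(q) = ∏_{i=1}^{n-1}(1+q+⋯+q^i) · ∑_{i=0}^{n} q^i (1-q)^{n-i}`. -/
noncomputable def Ppoly (n : ℕ) : Polynomial ℚ :=
  (∏ i ∈ Finset.Icc 1 (n - 1), ∑ j ∈ Finset.range (i + 1), Polynomial.X ^ j) *
    ∑ i ∈ Finset.range (n + 1), Polynomial.X ^ i * (1 - Polynomial.X) ^ (n - i)

/-- The quotient of Hilbert series `(∑_{i=0}^{n} q^i/(1-q)^i) / (∏_{i=1}^{n} 1/(1-q^i))`. -/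
noncomputable def PRat (n : ℕ) : RatFunc ℚ :=
  (∑ i ∈ Finset.range (n + 1), (RatFunc.X : RatFunc ℚ) ^ i / (1 - RatFunc.X) ^ i) /
    ∏ i ∈ Finset.Icc 1 n, (1 - (RatFunc.X : RatFunc ℚ) ^ i)⁻¹

open Polynomial Finset

lemma aux_geom (i : ℕ) :
    (1 - X : Polynomial ℚ) * ∑ j ∈ range (i + 1), X ^ j = 1 - X ^ (i + 1) := by
  have h := geom_sum_mul (X : Polynomial ℚ) (i + 1)
  linear_combination -h

lemma prodA (n : ℕ) :
    ∏ i ∈ Icc 1 n, (1 - X ^ i : Polynomial ℚ)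
      = (1 - X) ^ n * ∏ i ∈ Icc 1 (n - 1), ∑ j ∈ range (i + 1), X ^ j := by
  induction n with
  | zero => simp
  | succ n ih =>
    rw [Finset.prod_Icc_succ_top (Nat.le_add_left 1 n), ih]
    cases n with
    | zero => simp
    | succ m =>
      simp only [Nat.add_sub_cancel] at *
      rw [Finset.prod_Icc_succ_top (Nat.le_add_left 1 m)]
      have hg := aux_geom (m + 1)
      linear_combination -((1 - X : Polynomial ℚ)) ^ (m + 1) *
        (∏ i ∈ Icc 1 m, ∑ j ∈ range (i + 1), (X : Polynomial ℚ) ^ j) * hg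

lemma sumB {K : Type*} [Field K] (n : ℕ) (x u : K) (hu : u ≠ 0) :
    (∑ i ∈ range (n + 1), x ^ i / u ^ i) * u ^ n
      = ∑ i ∈ range (n + 1), x ^ i * u ^ (n - i) := by
  rw [Finset.sum_mul]
  refine Finset.sum_congr rfl fun i hi => ?_
  have hin : i ≤ n := Nat.lt_succ_iff.mp (Finset.mem_range.mp hi)
  have hui : u ^ i ≠ 0 := pow_ne_zero _ hu
  field_simp
  rw [mul_assoc, ← pow_add, Nat.add_sub_cancel' hin]

lemma one_sub_x_ne : (1 - RatFunc.X : RatFunc ℚ) ≠ 0 := by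
  have h : (1 - X : Polynomial ℚ) ≠ 0 := by
    intro h
    have := congrArg (Polynomial.eval 0) h
    simp at this
  have := RatFunc.algebraMap_ne_zero h
  simpa using this

lemma prodfact (n : ℕ) : ∏ i ∈ Icc 1 n, ((i : ℚ) + 1) = Nat.factorial (n + 1) := by
  induction n with
  | zero => simp
  | succ n ih =>
    rw [Finset.prod_Icc_succ_top (Nat.le_add_left 1 n), ih, Nat.factorial_succ (n+1)]
    push_cast
    ring

/-- `P_n(q) = ∏_{i=1}^{n-1}(1+q+⋯+q^i) · ∑_{i=0}^{n} q^i (1-q)^{n-i}`; in particular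
`P_n` is a polynomial with `P_n(1) = n!`. -/
theorem P_eq_poly_and_value (n : ℕ) :
    PRat n = algebraMap (Polynomial ℚ) (RatFunc ℚ) (Ppoly n) ∧
    (Ppoly n).eval 1 = Nat.factorial n := by
  constructor
  · set φ := algebraMap (Polynomial ℚ) (RatFunc ℚ)
    have hx : φ Polynomial.X = RatFunc.X := RatFunc.algebraMap_X
    have hE : ∏ i ∈ Icc 1 n, (1 - (RatFunc.X : RatFunc ℚ) ^ i)
        = φ (∏ i ∈ Icc 1 n, (1 - X ^ i : Polynomial ℚ)) := by
      simp [map_prod, map_sub, map_pow, hx]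
    have hS : φ (∑ i ∈ Finset.range (n + 1), Polynomial.X ^ i * (1 - Polynomial.X) ^ (n - i))
        = ∑ i ∈ range (n + 1), (RatFunc.X : RatFunc ℚ) ^ i * (1 - RatFunc.X) ^ (n - i) := by
      simp [map_sum, map_mul, map_pow, map_sub, map_one, hx]
    rw [PRat, Finset.prod_inv_distrib, div_inv_eq_mul, hE, prodA, map_mul, map_pow,
      map_sub, map_one, hx, Ppoly, map_mul, hS, ← sumB n RatFunc.X (1 - RatFunc.X) one_sub_x_ne]
    ring
  · rw [Ppoly]
    simp only [Polynomial.eval_mul, Polynomial.eval_prod, Polynomial.eval_finset_sum,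
      Polynomial.eval_pow, Polynomial.eval_X, Polynomial.eval_mul, Polynomial.eval_sub,
      Polynomial.eval_one, one_pow, sub_self, Finset.sum_const, Finset.card_range,
      nsmul_eq_mul, mul_one, one_mul]
    have h2 : ∑ i ∈ range (n + 1), (0 : ℚ) ^ (n - i) = 1 := by
      rw [Finset.sum_eq_single n]
      · simp
      · intro b hb hbn
        have : n - b ≠ 0 := Nat.sub_ne_zero_of_lt
          (lt_of_le_of_ne (Nat.lt_succ_iff.mp (Finset.mem_range.mp hb)) hbn)
        exact zero_pow this
      · simp
    rw [h2, mul_one]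
    cases n with
    | zero => simp
    | succ m =>
      have h := prodfact m
      simp only [Nat.add_sub_cancel]
      convert h using 2 with i hi
      push_cast
      ring
end

section
/- The polynomials P_n(q) = ∏_{i=1}^{n−1}(1+q+⋯+q^i) · ∑_{i=0}^{n} q^i(1−q)^{n−i} satisfy the recurrence P_n(q) = P_{n−1}(q) + q^n([n]_q! − P_{n−1}(q)), where [n]_q! = ∏_{i=1}^{n}(1+q+⋯+q^{i−1}). -/
/-- The `q`-factorial `[n]_q! = ∏_{i=1}^{n}(1+q+⋯+q^{i-1})`. -/
noncomputable def qFact (n : ℕ) : Polynomial ℚ :=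
  ∏ i ∈ Finset.Icc 1 n, ∑ j ∈ Finset.range i, Polynomial.X ^ j

noncomputable def Spoly (n : ℕ) : Polynomial ℚ :=
  ∑ i ∈ Finset.range (n + 1), Polynomial.X ^ i * (1 - Polynomial.X) ^ (n - i)

lemma qFact_succ (n : ℕ) :
    qFact (n + 1) = qFact n * ∑ j ∈ Finset.range (n + 1), Polynomial.X ^ j := by
  rw [qFact, Finset.prod_Icc_succ_top (by omega : 1 ≤ n + 1), ← qFact]

lemma prod_eq_qFact (n : ℕ) :
    (∏ i ∈ Finset.Icc 1 n, ∑ j ∈ Finset.range (i + 1), (Polynomial.X : Polynomial ℚ) ^ j)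
      = qFact (n + 1) := by
  induction n with
  | zero => simp [qFact]
  | succ n ih =>
      rw [Finset.prod_Icc_succ_top (by omega), ih, ← qFact_succ]

lemma Ppoly_eq (n : ℕ) : Ppoly n = qFact n * Spoly n := by
  cases n with
  | zero => simp [Ppoly, qFact, Spoly]
  | succ n => rw [Ppoly, Nat.add_sub_cancel, prod_eq_qFact, Spoly]

lemma Spoly_succ (n : ℕ) :
    Spoly (n + 1) = (1 - Polynomial.X) * Spoly n + Polynomial.X ^ (n + 1) := by
  rw [Spoly, Finset.sum_range_succ, Nat.sub_self, pow_zero, mul_one, Spoly, Finset.mul_sum]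
  congr 1
  refine Finset.sum_congr rfl fun i hi => ?_
  have h : n + 1 - i = (n - i) + 1 := by
    have := Finset.mem_range.mp hi; omega
  rw [h, pow_succ]
  ring

lemma one_sub_geom (n : ℕ) :
    (1 - Polynomial.X) * ∑ j ∈ Finset.range (n + 1), (Polynomial.X : Polynomial ℚ) ^ j
      = 1 - Polynomial.X ^ (n + 1) := by
  have := geom_sum_mul (Polynomial.X : Polynomial ℚ) (n + 1)
  linear_combination -this

/-- The recurrence `P_n(q) = P_{n-1}(q) + q^n([n]_q! − P_{n-1}(q))` (stated with
`n` replaced by `n+1` so that it covers all `n ≥ 1`). -/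
theorem P_recurrence (n : ℕ) :
    Ppoly (n + 1) = Ppoly n + Polynomial.X ^ (n + 1) * (qFact (n + 1) - Ppoly n) := by
  rw [Ppoly_eq, Ppoly_eq, qFact_succ, Spoly_succ]
  have h := one_sub_geom n
  linear_combination qFact n * Spoly n * h
end

section
/- Let T be a composition tableau of shape α and content γ such that the sorted parts of α and γ coincide as partitions (λ(α) = λ(γ)). Then α = γ. -/
/-- (CT1) Rows of the filling weakly decrease from left to right. -/
def RowsDecrease (α : List ℕ) (T : ℕ → ℕ → ℕ) : Prop :=
  ∀ i j, i < α.length → j + 1 < α.getD i 0 → T i (j + 1) ≤ T i j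

/-- (CT2) The leftmost column strictly increases from top to bottom. -/
def FirstColIncr (α : List ℕ) (T : ℕ → ℕ → ℕ) : Prop :=
  ∀ i₁ i₂, i₁ < i₂ → i₂ < α.length → T i₁ 0 < T i₂ 0

/-- (CT3) The triple rule, for cells `(i,c)` and `(j,c)` in the same column with `i < j`
(rows and columns 0-indexed). -/
def TripleRule (α : List ℕ) (T : ℕ → ℕ → ℕ) : Prop :=
  ∀ i j c, i < j → j < α.length → c < α.getD i 0 → c < α.getD j 0 →
    (α.getD j 0 ≤ α.getD i 0 → 1 ≤ c → (T j c < T i c ∨ T i (c - 1) < T j c)) ∧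
    (α.getD i 0 < α.getD j 0 → (T j c < T i c ∨ T i c < T j (c + 1)))

/-- A composition tableau of shape `α`: positive entries in the cells of the diagram of `α`
(and `0` outside), satisfying (CT1), (CT2) and the triple rule (CT3). -/
def IsCompTableau (α : List ℕ) (T : ℕ → ℕ → ℕ) : Prop :=
  (∀ i j, i < α.length → j < α.getD i 0 → 0 < T i j) ∧
  (∀ i j, α.length ≤ i ∨ α.getD i 0 ≤ j → T i j = 0) ∧
  RowsDecrease α T ∧ FirstColIncr α T ∧ TripleRule α T

/-- The number of cells of the tableau containing the value `v`. -/
def contentCount (α : List ℕ) (T : ℕ → ℕ → ℕ) (v : ℕ) : ℕ :=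
  ∑ i ∈ Finset.range α.length, ((Finset.range (α.getD i 0)).filter (fun j => T i j = v)).card

/-- The tableau has content `γ`: each value `v ≥ 1` occurs `γ_v` times. -/
def HasContent (α : List ℕ) (T : ℕ → ℕ → ℕ) (γ : List ℕ) : Prop :=
  ∀ v, 1 ≤ v → contentCount α T v = γ.getD (v - 1) 0

namespace CTaux

lemma getD_mem (L : List ℕ) (i : ℕ) (h : i < L.length) : L.getD i 0 ∈ L := by
  rw [List.getD_eq_getElem L 0 h]; exact List.getElem_mem h

lemma row_mono {α : List ℕ} {T : ℕ → ℕ → ℕ} (hrd : RowsDecrease α T) {i : ℕ}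
    (hi : i < α.length) : ∀ j j', j ≤ j' → j' < α.getD i 0 → T i j' ≤ T i j := by
  have key : ∀ d j, j + d < α.getD i 0 → T i (j + d) ≤ T i j := by
    intro d
    induction d with
    | zero => intro j _; simp
    | succ n ihd =>
      intro j hjd
      have h1 : T i (j + n + 1) ≤ T i (j + n) := hrd i (j + n) hi (by omega)
      have h2 : T i (j + n) ≤ T i j := ihd j (by omega)
      have e : j + (n + 1) = j + n + 1 := by omega
      rw [e]; omega
  intro j j' hle hj'
  have e : j + (j' - j) = j' := by omega
  have := key (j' - j) j (by rw [e]; exact hj')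
  rwa [e] at this

lemma first_col_ge {α : List ℕ} {T : ℕ → ℕ → ℕ} (hfc : FirstColIncr α T) :
    ∀ i, i < α.length → T 0 0 + i ≤ T i 0 := by
  intro i
  induction i with
  | zero => intro _; omega
  | succ n ih =>
    intro h
    have h1 := hfc n (n + 1) (by omega) h
    have h2 := ih (by omega)
    omega

lemma entry_le {α γ : List ℕ} {T : ℕ → ℕ → ℕ} (hT : IsCompTableau α T)
    (hc : HasContent α T γ) {i j : ℕ} (hi : i < α.length) (hj : j < α.getD i 0) :
    T i j ≤ γ.length := by
  by_contra hgt
  push_neg at hgt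
  have hv1 : 1 ≤ T i j := hT.1 i j hi hj
  have hcc := hc (T i j) hv1
  have hz : γ.getD (T i j - 1) 0 = 0 := List.getD_eq_default _ _ (by omega)
  rw [hz] at hcc
  have hpos : 0 < contentCount α T (T i j) := by
    unfold contentCount
    have h1 : 0 < ((Finset.range (α.getD i 0)).filter (fun j' => T i j' = T i j)).card := by
      rw [Finset.card_pos]
      exact ⟨j, Finset.mem_filter.mpr ⟨Finset.mem_range.mpr hj, rfl⟩⟩
    calc 0 < _ := h1
    _ ≤ _ := Finset.single_le_sum (f := fun i' => ((Finset.range (α.getD i' 0)).filter (fun j' => T i' j' = T i j)).card) (fun _ _ => Nat.zero_le _) (Finset.mem_range.mpr hi)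
  omega

lemma col_distinct {α : List ℕ} {T : ℕ → ℕ → ℕ} (hT : IsCompTableau α T)
    {i j c : ℕ} (hij : i < j) (hj : j < α.length) (hci : c < α.getD i 0)
    (hcj : c < α.getD j 0) : T i c ≠ T j c := by
  obtain ⟨hpos, hzero, hrd, hfc, htr⟩ := hT
  rcases Nat.eq_zero_or_pos c with rfl | hcpos
  · exact (hfc i j hij hj).ne
  · intro heq
    have htr' := htr i j c hij hj hci hcj
    have hdown : T j (c + 1) ≤ T j c := by
      by_cases hcc : c + 1 < α.getD j 0
      · exact hrd j c hj hcc
      · rw [hzero j (c + 1) (Or.inr (by omega))]; exact Nat.zero_le _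
    have hup : T i c ≤ T i (c - 1) :=
      row_mono hrd (by omega) (c - 1) c (by omega) hci
    rcases le_or_gt (α.getD j 0) (α.getD i 0) with hle | hlt
    · rcases htr'.1 hle hcpos with h' | h' <;> omega
    · rcases htr'.2 hlt with h' | h' <;> omega

lemma sum_range_getD (L : List ℕ) (f : ℕ → ℕ) :
    ∑ i ∈ Finset.range L.length, f (L.getD i 0) = (L.map f).sum := by
  induction L with
  | nil => simp
  | cons x xs ih =>
    rw [List.length_cons, Finset.sum_range_succ']
    simp only [List.getD_cons_succ, List.getD_cons_zero, List.map_cons, List.sum_cons]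
    omega
    
lemma filter_range_lt (k m : ℕ) : ((Finset.range k).filter (fun c => c < m)).card = min m k := by
  have he : (Finset.range k).filter (fun c => c < m) = Finset.range (min m k) := by
    ext x
    simp only [Finset.mem_filter, Finset.mem_range]
    omega
  rw [he, Finset.card_range]


/-- The set of rows having a cell in column `c`. -/
def cellsCol (α : List ℕ) (c : ℕ) : Finset ℕ :=
  (Finset.range α.length).filter (fun i => c < α.getD i 0)

/-- The set of values appearing in column `c`. -/
def valsCol (α : List ℕ) (T : ℕ → ℕ → ℕ) (c : ℕ) : Finset ℕ :=
  (cellsCol α c).image (fun i => T i c)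

/-- The number of columns `c < k` containing the value `v`. -/
def colCount (α : List ℕ) (T : ℕ → ℕ → ℕ) (k v : ℕ) : ℕ :=
  ((Finset.range k).filter (fun c => v ∈ valsCol α T c)).card

lemma vals_card {α : List ℕ} {T : ℕ → ℕ → ℕ} (hT : IsCompTableau α T) (c : ℕ) :
    (valsCol α T c).card = (cellsCol α c).card := by
  apply Finset.card_image_of_injOn
  intro i hi i' hi' heq
  simp only [cellsCol, Finset.mem_coe, Finset.mem_filter, Finset.mem_range] at hi hi'
  rcases lt_trichotomy i i' with hlt | he | hgt
  · exact absurd heq (col_distinct hT hlt hi'.1 hi.2 hi'.2)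
  · exact he
  · exact absurd heq.symm (col_distinct hT hgt hi.1 hi'.2 hi.2)

lemma sum_cells (α : List ℕ) (k : ℕ) :
    ∑ c ∈ Finset.range k, (cellsCol α c).card
      = ∑ i ∈ Finset.range α.length, min (α.getD i 0) k := by
  unfold cellsCol
  simp only [Finset.card_filter]
  rw [Finset.sum_comm]
  refine Finset.sum_congr rfl fun i _ => ?_
  rw [← Finset.card_filter]
  exact filter_range_lt k (α.getD i 0)

lemma sum_vals {α : List ℕ} {T : ℕ → ℕ → ℕ} (n k : ℕ)
    (hsub : ∀ c, valsCol α T c ⊆ Finset.Ico 1 (n + 1)) :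
    ∑ c ∈ Finset.range k, (valsCol α T c).card
      = ∑ v ∈ Finset.Ico 1 (n + 1), colCount α T k v := by
  have hcard : ∀ c, (valsCol α T c).card
      = ((Finset.Ico 1 (n + 1)).filter (fun v => v ∈ valsCol α T c)).card := by
    intro c
    congr 1
    rw [Finset.filter_mem_eq_inter, Finset.inter_eq_right.mpr (hsub c)]
  simp only [hcard, colCount, Finset.card_filter]
  rw [Finset.sum_comm]

lemma colCount_le_content (α : List ℕ) (T : ℕ → ℕ → ℕ) (k v : ℕ) :
    colCount α T k v ≤ contentCount α T v := by
  unfold colCount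
  have h1 : ∀ c ∈ Finset.range k, (if v ∈ valsCol α T c then 1 else 0)
      ≤ ((cellsCol α c).filter (fun i => T i c = v)).card := by
    intro c _
    by_cases hm : v ∈ valsCol α T c
    · simp only [hm, if_true]
      rw [Nat.succ_le_iff, Finset.card_pos]
      obtain ⟨i, hi, he⟩ := Finset.mem_image.mp hm
      exact ⟨i, Finset.mem_filter.mpr ⟨hi, he⟩⟩
    · simp [hm]
  calc ((Finset.range k).filter (fun c => v ∈ valsCol α T c)).card
      = ∑ c ∈ Finset.range k, (if v ∈ valsCol α T c then 1 else 0) := Finset.card_filter _ _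
    _ ≤ ∑ c ∈ Finset.range k, ((cellsCol α c).filter (fun i => T i c = v)).card :=
        Finset.sum_le_sum h1
    _ = ∑ c ∈ Finset.range k, ∑ i ∈ Finset.range α.length,
          (if c < α.getD i 0 ∧ T i c = v then 1 else 0) := by
        refine Finset.sum_congr rfl fun c _ => ?_
        rw [cellsCol, Finset.filter_filter, Finset.card_filter]
    _ = ∑ i ∈ Finset.range α.length, ∑ c ∈ Finset.range k,
          (if c < α.getD i 0 ∧ T i c = v then 1 else 0) := Finset.sum_comm
    _ ≤ ∑ i ∈ Finset.range α.length,
          ((Finset.range (α.getD i 0)).filter (fun j => T i j = v)).card := by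
        refine Finset.sum_le_sum fun i _ => ?_
        rw [← Finset.card_filter]
        apply Finset.card_le_card
        intro c hcmem
        simp only [Finset.mem_filter, Finset.mem_range] at hcmem ⊢
        exact ⟨hcmem.2.1, hcmem.2.2⟩
    _ = contentCount α T v := rfl

lemma colCount_le_k (α : List ℕ) (T : ℕ → ℕ → ℕ) (k v : ℕ) : colCount α T k v ≤ k := by
  calc colCount α T k v ≤ (Finset.range k).card := Finset.card_filter_le _ _
    _ = k := Finset.card_range k


lemma head_eq (a : ℕ) (α' γ : List ℕ) (T : ℕ → ℕ → ℕ)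
    (hα : IsComposition (a :: α')) (hγ : IsComposition γ)
    (hT : IsCompTableau (a :: α') T) (hc : HasContent (a :: α') T γ)
    (h : ((a :: α' : List ℕ) : Multiset ℕ) = (γ : Multiset ℕ)) :
    γ.getD 0 0 = a := by
  have hpos := hT.1
  have hzero := hT.2.1
  have hrd := hT.2.2.1
  have hfc := hT.2.2.2.1
  have htr := hT.2.2.2.2
  have hlen : γ.length = α'.length + 1 := by
    have := congrArg Multiset.card h
    simpa using this.symm
  have ha : 0 < a := hα a List.mem_cons_self
  -- the top-left entry is 1
  have hT00 : T 0 0 = 1 := by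
    have hb := first_col_ge hfc α'.length (by simp)
    have hlast : 0 < (a :: α').getD α'.length 0 :=
      hα _ (getD_mem _ _ (by simp))
    have hle := entry_le hT hc (i := α'.length) (j := 0) (by simp) hlast
    have hp := hpos 0 0 (by simp) (by simpa using ha)
    omega
  -- the whole first row consists of 1's
  have row0 : ∀ j, j < a → T 0 j = 1 := by
    intro j hj
    have h1 := row_mono hrd (i := 0) (by simp) 0 j (Nat.zero_le j) (by simpa using hj)
    have h2 := hpos 0 j (by simp) (by simpa using hj)
    omega
  -- column `a` contains no 1
  have hno : ∀ i, i < (a :: α').length → a < (a :: α').getD i 0 → T i a ≠ 1 := by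
    intro i hi hai h1
    have hi0 : 0 < i := by
      rcases Nat.eq_zero_or_pos i with rfl | hp
      · simp at hai
      · exact hp
    have htr' := htr 0 i (a - 1) hi0 hi (by simp; omega) (by omega)
    have hcl := htr'.2 (by simpa using hai)
    have e : a - 1 + 1 = a := by omega
    rw [e] at hcl
    have hT0 : T 0 (a - 1) = 1 := row0 _ (by omega)
    have hTi : 0 < T i (a - 1) := hpos i (a - 1) hi (by omega)
    rcases hcl with h' | h' <;> omega
  -- values appearing in columns are between 1 and γ.length
  have hsub : ∀ c, valsCol (a :: α') T c ⊆ Finset.Ico 1 (γ.length + 1) := by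
    intro c v hv
    obtain ⟨i, hi, rfl⟩ := Finset.mem_image.mp hv
    simp only [cellsCol, Finset.mem_filter, Finset.mem_range] at hi
    rw [Finset.mem_Ico]
    exact ⟨hpos i c hi.1 hi.2, by have := entry_le hT hc hi.1 hi.2; omega⟩
  set k := a + 1 with hk
  -- the chain of counting identities
  have S2 : ∑ c ∈ Finset.range k, (valsCol (a :: α') T c).card
      = ∑ i ∈ Finset.range (a :: α').length, min ((a :: α').getD i 0) k := by
    rw [← sum_cells]
    exact Finset.sum_congr rfl fun c _ => vals_card hT c
  have S3 : ∑ i ∈ Finset.range (a :: α').length, min ((a :: α').getD i 0) k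
      = ∑ i ∈ Finset.range γ.length, min (γ.getD i 0) k := by
    rw [sum_range_getD (a :: α') (fun x => min x k), sum_range_getD γ (fun x => min x k)]
    have := congrArg (fun s : Multiset ℕ => (s.map (fun x => min x k)).sum) h
    simpa using this
  have S3' : ∑ i ∈ Finset.range γ.length, min (γ.getD i 0) k
      = ∑ v ∈ Finset.Ico 1 (γ.length + 1), min (γ.getD (v - 1) 0) k := by
    rw [Finset.sum_Ico_eq_sum_range]
    simp
  have S1 := sum_vals (α := a :: α') (T := T) γ.length k hsub
  have S4 : ∀ v ∈ Finset.Ico 1 (γ.length + 1),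
      colCount (a :: α') T k v ≤ min (γ.getD (v - 1) 0) k := by
    intro v hv
    rw [Finset.mem_Ico] at hv
    refine le_min ?_ (colCount_le_k _ _ _ _)
    exact (colCount_le_content (a :: α') T k v).trans_eq (hc v hv.1)
  have heq : ∑ v ∈ Finset.Ico 1 (γ.length + 1), colCount (a :: α') T k v
      = ∑ v ∈ Finset.Ico 1 (γ.length + 1), min (γ.getD (v - 1) 0) k :=
    S1.symm.trans (S2.trans (S3.trans S3'))
  have key := (Finset.sum_eq_sum_iff_of_le S4).mp heq 1 (by rw [Finset.mem_Ico]; omega)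
  simp only [Nat.sub_self] at key
  -- colCount at value 1 is at most a
  have hfa : colCount (a :: α') T k 1 ≤ a := by
    unfold colCount
    have hss : (Finset.range k).filter (fun c => 1 ∈ valsCol (a :: α') T c)
        ⊆ Finset.range a := by
      intro c hcm
      simp only [Finset.mem_filter, Finset.mem_range] at hcm ⊢
      obtain ⟨hck, hmem⟩ := hcm
      obtain ⟨i, hi, he⟩ := Finset.mem_image.mp hmem
      simp only [cellsCol, Finset.mem_filter, Finset.mem_range] at hi
      by_contra hca
      have hce : c = a := by omega
      subst hce
      exact hno i hi.1 hi.2 he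
    calc _ ≤ (Finset.range a).card := Finset.card_le_card hss
      _ = a := Finset.card_range a
  -- content of value 1 is at least a
  have hga : a ≤ γ.getD 0 0 := by
    have hc1 := hc 1 le_rfl
    simp only [Nat.sub_self] at hc1
    rw [← hc1]
    unfold contentCount
    have hterm : ((Finset.range ((a :: α').getD 0 0)).filter (fun j => T 0 j = 1)).card = a := by
      have : (Finset.range ((a :: α').getD 0 0)).filter (fun j => T 0 j = 1)
          = Finset.range a := by
        simp only [List.getD_cons_zero]
        exact Finset.filter_true_of_mem fun j hj => row0 j (Finset.mem_range.mp hj)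
      rw [this, Finset.card_range]
    calc a = _ := hterm.symm
      _ ≤ _ := Finset.single_le_sum
          (f := fun i => ((Finset.range ((a :: α').getD i 0)).filter (fun j => T i j = 1)).card)
          (fun _ _ => Nat.zero_le _) (Finset.mem_range.mpr (by simp))
  omega


lemma row0_one (a : ℕ) (α' γ : List ℕ) (T : ℕ → ℕ → ℕ)
    (hα : IsComposition (a :: α'))
    (hT : IsCompTableau (a :: α') T) (hc : HasContent (a :: α') T γ)
    (hlen : γ.length = α'.length + 1) : ∀ j, j < a → T 0 j = 1 := by
  have hpos := hT.1
  have hrd := hT.2.2.1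
  have hfc := hT.2.2.2.1
  have ha : 0 < a := hα a List.mem_cons_self
  have hT00 : T 0 0 = 1 := by
    have hb := first_col_ge hfc α'.length (by simp)
    have hlast : 0 < (a :: α').getD α'.length 0 :=
      hα _ (getD_mem _ _ (by simp))
    have hle := entry_le hT hc (i := α'.length) (j := 0) (by simp) hlast
    have hp := hpos 0 0 (by simp) (by simpa using ha)
    omega
  intro j hj
  have h1 := row_mono hrd (i := 0) (by simp) 0 j (Nat.zero_le j) (by simpa using hj)
  have h2 := hpos 0 j (by simp) (by simpa using hj)
  omega

lemma tail_tableau (a : ℕ) (α' : List ℕ) (T : ℕ → ℕ → ℕ)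
    (hα' : IsComposition α')
    (hT : IsCompTableau (a :: α') T)
    (hge2 : ∀ i j, i < α'.length → j < α'.getD i 0 → 2 ≤ T (i + 1) j) :
    IsCompTableau α' (fun i j => T (i + 1) j - 1) := by
  have hpos := hT.1
  have hzero := hT.2.1
  have hrd := hT.2.2.1
  have hfc := hT.2.2.2.1
  have htr := hT.2.2.2.2
  refine ⟨?_, ?_, ?_, ?_, ?_⟩
  · intro i j hi hj
    have := hge2 i j hi hj
    show 0 < T (i + 1) j - 1
    omega
  · intro i j hcond
    have hz : T (i + 1) j = 0 := by
      apply hzero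
      rcases hcond with hl | hr
      · exact Or.inl (by simp; omega)
      · exact Or.inr (by simpa using hr)
    simp [hz]
  · intro i j hi hj
    exact Nat.sub_le_sub_right (hrd (i + 1) j (by simp; omega) (by simpa using hj)) 1
  · intro i₁ i₂ h12 h2
    have hlt := hfc (i₁ + 1) (i₂ + 1) (by omega) (by simp; omega)
    have hcell : 0 < α'.getD i₁ 0 := hα' _ (getD_mem _ _ (by omega))
    have hb := hge2 i₁ 0 (by omega) hcell
    simp only
    omega
  · intro i j c hij hj hci hcj
    have horig := htr (i + 1) (j + 1) c (by omega) (by simp; omega)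
      (by simpa using hci) (by simpa using hcj)
    have hTjc := hge2 j c hj hcj
    have hTic := hge2 i c (by omega) hci
    constructor
    · intro hle hc1
      have h1 := horig.1 (by simpa using hle) hc1
      have hTic1 := hge2 i (c - 1) (by omega) (by omega)
      simp only
      rcases h1 with h' | h' <;> omega
    · intro hlt
      have h1 := horig.2 (by simpa using hlt)
      simp only
      rcases h1 with h' | h' <;> omega

lemma tail_content (a : ℕ) (α' γ' : List ℕ) (T : ℕ → ℕ → ℕ)
    (hc : HasContent (a :: α') T (a :: γ'))
    (hrow0 : ∀ j, j < a → T 0 j = 1)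
    (hge2 : ∀ i j, i < α'.length → j < α'.getD i 0 → 2 ≤ T (i + 1) j) :
    HasContent α' (fun i j => T (i + 1) j - 1) γ' := by
  intro v hv
  have hcv := hc (v + 1) (by omega)
  have hgetD : (a :: γ').getD (v + 1 - 1) 0 = γ'.getD (v - 1) 0 := by
    have e : v + 1 - 1 = (v - 1) + 1 := by omega
    rw [e, List.getD_cons_succ]
  rw [hgetD] at hcv
  rw [← hcv]
  unfold contentCount
  rw [List.length_cons, Finset.sum_range_succ']
  have hzero0 : ((Finset.range ((a :: α').getD 0 0)).filter (fun j => T 0 j = v + 1)).card = 0 := by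
    rw [Finset.card_eq_zero, Finset.filter_eq_empty_iff]
    intro j hjm
    rw [List.getD_cons_zero] at hjm
    have := hrow0 j (Finset.mem_range.mp hjm)
    omega
  rw [hzero0, Nat.add_zero]
  refine Finset.sum_congr rfl fun i hi => ?_
  rw [List.getD_cons_succ]
  congr 1
  apply Finset.filter_congr
  intro j hjm
  have h2 := hge2 i j (Finset.mem_range.mp hi) (Finset.mem_range.mp hjm)
  simp only
  omega

end CTaux

/-- If `T` is a composition tableau of shape `α` and content `γ` with `λ(α) = λ(γ)`
(i.e. the parts of `α` and `γ` agree as multisets), then `α = γ`. -/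
theorem shape_eq_content (α γ : List ℕ) (T : ℕ → ℕ → ℕ)
    (hα : IsComposition α) (hγ : IsComposition γ)
    (hT : IsCompTableau α T) (hc : HasContent α T γ)
    (h : (α : Multiset ℕ) = (γ : Multiset ℕ)) : α = γ := by

  induction α generalizing γ T with
  | nil =>
    have hγn : γ = [] := by simpa using h.symm
    simp [hγn]
  | cons a α' ih =>
    cases γ with
    | nil =>
      exfalso
      have := congrArg Multiset.card h
      simp at this
    | cons g γ' =>
      have hg : g = a := by
        have := CTaux.head_eq a α' (g :: γ') T hα hγ hT hc h
        simpa using this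
      subst hg
      have hlen : (g :: γ').length = α'.length + 1 := by
        have := congrArg Multiset.card h
        simpa using this.symm
      have hrow0 := CTaux.row0_one g α' (g :: γ') T hα hT hc hlen
      have hpos := hT.1
      -- no 1's outside row 0
      have hge2 : ∀ i j, i < α'.length → j < α'.getD i 0 → 2 ≤ T (i + 1) j := by
        have hc1 := hc 1 le_rfl
        simp only [Nat.sub_self, List.getD_cons_zero] at hc1
        unfold contentCount at hc1
        rw [List.length_cons, Finset.sum_range_succ'] at hc1
        have hF0 : ((Finset.range ((g :: α').getD 0 0)).filter (fun j => T 0 j = 1)).card = g := by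
          have he : (Finset.range ((g :: α').getD 0 0)).filter (fun j => T 0 j = 1)
              = Finset.range g := by
            simp only [List.getD_cons_zero]
            exact Finset.filter_true_of_mem fun j hj => hrow0 j (Finset.mem_range.mp hj)
          rw [he, Finset.card_range]
        rw [hF0] at hc1
        have hrest : ∀ i ∈ Finset.range α'.length,
            ((Finset.range ((g :: α').getD (i + 1) 0)).filter (fun j => T (i + 1) j = 1)).card = 0 := by
          rw [← Finset.sum_eq_zero_iff]
          omega
        intro i j hi hj
        have h1 : 0 < T (i + 1) j := hpos (i + 1) j (by simp; omega) (by simpa using hj)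
        have h2 : T (i + 1) j ≠ 1 := by
          intro he1
          have hcard := hrest i (Finset.mem_range.mpr hi)
          rw [Finset.card_eq_zero, Finset.filter_eq_empty_iff] at hcard
          exact hcard (Finset.mem_range.mpr (by simpa using hj)) he1
        omega
      have hα' : IsComposition α' := fun x hx => hα x (List.mem_cons_of_mem g hx)
      have hγ' : IsComposition γ' := fun x hx => hγ x (List.mem_cons_of_mem g hx)
      have hT' := CTaux.tail_tableau g α' T hα' hT hge2
      have hc' := CTaux.tail_content g α' γ' T hc hrow0 hge2
      have h' : (α' : Multiset ℕ) = (γ' : Multiset ℕ) := by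
        have hcons : (g ::ₘ (α' : Multiset ℕ)) = (g ::ₘ (γ' : Multiset ℕ)) := by
          simpa using h
        exact (Multiset.cons_inj_right g).mp hcons
      rw [ih γ' (fun i j => T (i + 1) j - 1) hα' hγ' hT' hc' h']
end

section
/- In a composition tableau T of shape α whose content γ satisfies λ(α) = λ(γ), every row i of maximal length l is filled entirely with the entry i. -/
lemma count_filter_card (L : List ℕ) (l : ℕ) :
    ((Finset.range L.length).filter (fun k => L.getD k 0 = l)).card = L.count l := by
  rw [Finset.card_filter]
  induction L with
  | nil => simp
  | cons a L ih =>
    rw [List.length_cons, Finset.sum_range_succ']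
    simp only [List.getD_cons_succ, List.getD_cons_zero, List.count_cons]
    rw [ih]
    by_cases hh : a = l <;> simp [hh]

/-- In a composition tableau of shape `α` with content `γ` satisfying `λ(α) = λ(γ)`,
every row of maximal length is filled entirely with its (1-indexed) row number. -/
theorem max_row_filled (α γ : List ℕ) (T : ℕ → ℕ → ℕ)
    (hα : IsComposition α) (hγ : IsComposition γ)
    (hT : IsCompTableau α T) (hc : HasContent α T γ)
    (h : (α : Multiset ℕ) = (γ : Multiset ℕ)) :
    ∀ i, i < α.length → α.getD i 0 = maxPart α →
      ∀ j, j < α.getD i 0 → T i j = i + 1 := by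
  classical
  obtain ⟨hpos, hzero, hrow, hcol, htri⟩ := hT
  have hlen : γ.length = α.length := by
    have := congrArg Multiset.card h
    simpa using this.symm
  have hαpos : ∀ i, i < α.length → 0 < α.getD i 0 := by
    intro i hi
    rw [α.getD_eq_getElem 0 hi]
    exact hα _ (List.getElem_mem hi)
  have hαle : ∀ i, i < α.length → α.getD i 0 ≤ maxPart α := by
    intro i hi
    rw [α.getD_eq_getElem 0 hi]
    exact le_maxPart (List.getElem_mem hi)
  -- every entry is at most the number of rows
  have hval : ∀ i j, i < α.length → j < α.getD i 0 → T i j ≤ α.length := by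
    intro i j hi hj
    have h1 : 0 < T i j := hpos i j hi hj
    have hcc : 0 < contentCount α T (T i j) := by
      unfold contentCount
      refine Finset.sum_pos' (fun k _ => Nat.zero_le _) ⟨i, Finset.mem_range.mpr hi, ?_⟩
      exact Finset.card_pos.mpr ⟨j, Finset.mem_filter.mpr ⟨Finset.mem_range.mpr hj, rfl⟩⟩
    rw [hc (T i j) h1] at hcc
    by_contra hlt
    rw [List.getD_eq_default _ _ (by omega : γ.length ≤ T i j - 1)] at hcc
    omega
  -- the first column is `1, 2, …, n` from top to bottom
  have hfc_lb : ∀ i, i < α.length → i + 1 ≤ T i 0 := by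
    intro i
    induction i with
    | zero => intro hi; exact hpos 0 0 hi (hαpos 0 hi)
    | succ i ih =>
      intro hi
      have h1 := ih (by omega)
      have h2 := hcol i (i + 1) (by omega) hi
      omega
  have hfc_gap : ∀ d i, i + d < α.length → T i 0 + d ≤ T (i + d) 0 := by
    intro d
    induction d with
    | zero => intro i hi; simp
    | succ d ih =>
      intro i hi
      have h1 := ih i (by omega)
      have h2 := hcol (i + d) (i + d + 1) (by omega) (by omega)
      have he : i + (d + 1) = i + d + 1 := by omega
      rw [he]
      omega
  have hfc : ∀ i, i < α.length → T i 0 = i + 1 := by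
    intro i hi
    have lb := hfc_lb i hi
    have hn1 : α.length - 1 < α.length := by omega
    have g := hfc_gap (α.length - 1 - i) i (by omega)
    have ub := hval (α.length - 1) 0 hn1 (hαpos _ hn1)
    have he : i + (α.length - 1 - i) = α.length - 1 := by omega
    rw [he] at g
    omega
  -- entries in row `i` are at most `i + 1`
  have hrowb : ∀ i, i < α.length → ∀ j, j < α.getD i 0 → T i j ≤ i + 1 := by
    intro i hi j
    induction j with
    | zero => intro _; rw [hfc i hi]
    | succ j ih =>
      intro hj
      have h1 := hrow i j hi hj
      have h2 := ih (by omega)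
      omega
  -- entries in a column are pairwise distinct
  have hdist : ∀ i j c, i < j → j < α.length → c < α.getD i 0 → c < α.getD j 0 →
      T i c ≠ T j c := by
    intro i j c hij hj hci hcj heq
    have hi : i < α.length := lt_trans hij hj
    rcases Nat.eq_zero_or_pos c with rfl | hcpos
    · exact absurd heq (Nat.ne_of_lt (hcol i j hij hj))
    · obtain ⟨h1, h2⟩ := htri i j c hij hj hci hcj
      rcases le_or_gt (α.getD j 0) (α.getD i 0) with hle | hlt
      · rcases h1 hle hcpos with hx | hx
        · omega
        · have hcc : c - 1 + 1 = c := by omega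
          have hd := hrow i (c - 1) hi (by omega)
          rw [hcc] at hd
          omega
      · rcases h2 hlt with hx | hx
        · omega
        · have hTj : T j (c + 1) ≤ T j c := by
            rcases lt_or_ge (c + 1) (α.getD j 0) with hc1 | hc1
            · exact hrow j c hj hc1
            · rw [hzero j (c + 1) (Or.inr hc1)]; exact Nat.zero_le _
          omega
  -- counting per column
  have hswap : ∀ v, contentCount α T v =
      ∑ c ∈ Finset.range (maxPart α),
        ((Finset.range α.length).filter (fun i => c < α.getD i 0 ∧ T i c = v)).card := by
    intro v
    unfold contentCount
    have hstep : ∀ i ∈ Finset.range α.length,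
        ((Finset.range (α.getD i 0)).filter (fun j => T i j = v)).card
          = ∑ c ∈ Finset.range (maxPart α), if c < α.getD i 0 ∧ T i c = v then 1 else 0 := by
      intro i hi
      rw [← Finset.card_filter]
      congr 1
      ext c
      simp only [Finset.mem_filter, Finset.mem_range]
      constructor
      · rintro ⟨h1, h2⟩
        exact ⟨lt_of_lt_of_le h1 (hαle i (Finset.mem_range.mp hi)), h1, h2⟩
      · rintro ⟨_, h2, h3⟩
        exact ⟨h2, h3⟩
    rw [Finset.sum_congr rfl hstep, Finset.sum_comm]
    refine Finset.sum_congr rfl ?_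
    intro c _
    rw [Finset.card_filter]
  -- each value appears at most once in each column
  have hocc1 : ∀ v c,
      ((Finset.range α.length).filter (fun i => c < α.getD i 0 ∧ T i c = v)).card ≤ 1 := by
    intro v c
    apply Finset.card_le_one.mpr
    intro a ha b hb
    simp only [Finset.mem_filter, Finset.mem_range] at ha hb
    by_contra hne
    rcases lt_or_gt_of_ne hne with hab | hab
    · exact hdist a b c hab hb.1 ha.2.1 hb.2.1 (by rw [ha.2.2, hb.2.2])
    · exact hdist b a c hab ha.1 hb.2.1 ha.2.1 (by rw [ha.2.2, hb.2.2])
  -- a value of maximal multiplicity appears exactly once in every column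
  have hfull_occ : ∀ v, contentCount α T v = maxPart α → ∀ c, c < maxPart α →
      ((Finset.range α.length).filter (fun i => c < α.getD i 0 ∧ T i c = v)).card = 1 := by
    intro v hv c hcl
    have hs := hswap v
    rw [hv] at hs
    by_contra hne
    have h0 : ((Finset.range α.length).filter (fun i => c < α.getD i 0 ∧ T i c = v)).card = 0 := by
      have := hocc1 v c; omega
    rw [← Finset.add_sum_erase _ _ (Finset.mem_range.mpr hcl)] at hs
    have hb : ∑ x ∈ (Finset.range (maxPart α)).erase c,
        ((Finset.range α.length).filter (fun i => x < α.getD i 0 ∧ T i x = v)).card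
          ≤ ((Finset.range (maxPart α)).erase c).card • 1 :=
      Finset.sum_le_card_nsmul _ _ 1 (fun x _ => hocc1 v x)
    have hcard : ((Finset.range (maxPart α)).erase c).card = maxPart α - 1 := by
      rw [Finset.card_erase_of_mem (Finset.mem_range.mpr hcl), Finset.card_range]
    rw [hcard] at hb
    simp only [smul_eq_mul, mul_one] at hb
    omega
  -- the unique row where a full value sits in a given column
  have hrowOf : ∀ v c, contentCount α T v = maxPart α → c < maxPart α →
      ∃ r, (r < α.length ∧ c < α.getD r 0 ∧ T r c = v) ∧
        ∀ r', r' < α.length → c < α.getD r' 0 → T r' c = v → r' = r := by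
    intro v c hv hcl
    obtain ⟨a, ha⟩ := Finset.card_eq_one.mp (hfull_occ v hv c hcl)
    have hamem : a ∈ (Finset.range α.length).filter (fun i => c < α.getD i 0 ∧ T i c = v) := by
      rw [ha]; exact Finset.mem_singleton_self a
    simp only [Finset.mem_filter, Finset.mem_range] at hamem
    refine ⟨a, ⟨hamem.1, hamem.2.1, hamem.2.2⟩, ?_⟩
    intro r' h1 h2 h3
    have hm : r' ∈ (Finset.range α.length).filter (fun i => c < α.getD i 0 ∧ T i c = v) := by
      simp only [Finset.mem_filter, Finset.mem_range]
      exact ⟨h1, h2, h3⟩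
    rw [ha, Finset.mem_singleton] at hm
    exact hm
  -- occurrences of a value move weakly upward as the column index grows
  have hstep1 : ∀ v c r j, c + 1 < maxPart α →
      r < α.length → c < α.getD r 0 → T r c = v →
      j < α.length → c + 1 < α.getD j 0 → T j (c + 1) = v → j ≤ r := by
    intro v c r j _ hr hcr hTr hj hcj hTj
    by_contra hgt
    push_neg at hgt
    have hcj' : c < α.getD j 0 := by omega
    have hne := hdist r j c hgt hj hcr hcj'
    have hge : T j (c + 1) ≤ T j c := hrow j c hj hcj
    rcases le_or_gt (α.getD j 0) (α.getD r 0) with hle | hlt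
    · have hcr1 : c + 1 < α.getD r 0 := by omega
      obtain ⟨h1, _⟩ := htri r j (c + 1) hgt hj hcr1 hcj
      rcases h1 hle (by omega) with hx | hx
      · have hd := hrow r c hr hcr1
        omega
      · simp only [Nat.add_sub_cancel] at hx
        omega
    · obtain ⟨_, h2⟩ := htri r j c hgt hj hcr hcj'
      rcases h2 hlt with hx | hx
      · omega
      · omega
  -- chain the previous step across columns
  have hchain : ∀ v, contentCount α T v = maxPart α → ∀ c c', c ≤ c' → c' < maxPart α →
      ∀ r r', r < α.length → c < α.getD r 0 → T r c = v →
        r' < α.length → c' < α.getD r' 0 → T r' c' = v → r' ≤ r := by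
    intro v hv c c' hcc'
    refine Nat.le_induction ?_ ?_ c' hcc'
    · intro _ r r' hr hcr hTr hr' hcr' hTr'
      by_contra hgt
      push_neg at hgt
      exact hdist r r' c hgt hr' hcr hcr' (by rw [hTr, hTr'])
    · intro m _ ih hml r r' hr hcr hTr hr' hcr' hTr'
      obtain ⟨s, ⟨hs, hcs, hTs⟩, _⟩ := hrowOf v m hv (by omega)
      have h1 : s ≤ r := ih (by omega) r s hr hcr hTr hs hcs hTs
      have h2 : r' ≤ s := hstep1 v m s r' (by omega) hs hcs hTs hr' hcr' hTr'
      omega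
  -- number of full values equals the number of rows of maximal length
  have hperm : α.Perm γ := Multiset.coe_eq_coe.mp h
  have hcount : ((Finset.range α.length).filter (fun k => γ.getD k 0 = maxPart α)).card
      = ((Finset.range α.length).filter (fun i => α.getD i 0 = maxPart α)).card := by
    have h1 := count_filter_card γ (maxPart α)
    have h2 := count_filter_card α (maxPart α)
    rw [hlen] at h1
    rw [h1, h2]
    exact (hperm.count_eq _).symm
  -- main argument
  intro i hin hmax j hj
  have hl1 : 0 < maxPart α := by
    have := hαpos i hin
    omega
  have hlm : maxPart α - 1 < maxPart α := by omega
  have hfullcc : ∀ k, k ∈ (Finset.range α.length).filter (fun k => γ.getD k 0 = maxPart α) →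
      contentCount α T (k + 1) = maxPart α := by
    intro k hk
    simp only [Finset.mem_filter, Finset.mem_range] at hk
    rw [hc (k + 1) (by omega)]
    simpa using hk.2
  obtain ⟨k, hkFull, hik⟩ := Finset.surj_on_of_inj_on_of_card_le
    (s := (Finset.range α.length).filter (fun k => γ.getD k 0 = maxPart α))
    (t := (Finset.range α.length).filter (fun i => α.getD i 0 = maxPart α))
    (fun k hk => (hrowOf (k + 1) (maxPart α - 1) (hfullcc k hk) hlm).choose)
    (fun k hk => by
      have hsp := (hrowOf (k + 1) (maxPart α - 1) (hfullcc k hk) hlm).choose_spec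
      simp only [Finset.mem_filter, Finset.mem_range]
      refine ⟨hsp.1.1, ?_⟩
      have hle := hαle _ hsp.1.1
      have := hsp.1.2.1
      omega)
    (fun k1 k2 hk1 hk2 heq => by
      have hsp1 := (hrowOf (k1 + 1) (maxPart α - 1) (hfullcc k1 hk1) hlm).choose_spec
      have hsp2 := (hrowOf (k2 + 1) (maxPart α - 1) (hfullcc k2 hk2) hlm).choose_spec
      have e1 := hsp1.1.2.2
      have e2 := hsp2.1.2.2
      beta_reduce at heq
      rw [heq] at e1
      omega)
    (le_of_eq hcount.symm)
    i (by simp only [Finset.mem_filter, Finset.mem_range]; exact ⟨hin, hmax⟩)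
  have hvfull : contentCount α T (k + 1) = maxPart α := hfullcc k hkFull
  have hsp := (hrowOf (k + 1) (maxPart α - 1) hvfull hlm).choose_spec
  rw [← hik] at hsp
  obtain ⟨⟨_, hicell, hTi⟩, _⟩ := hsp
  -- `k + 1 ≤ i + 1` since entries in row `i` are at most `i + 1`
  have hub : T i (maxPart α - 1) ≤ i + 1 := hrowb i hin (maxPart α - 1) (by omega)
  -- the occurrence of `k+1` in column 0 is in row `k`
  obtain ⟨r0, ⟨hr0n, hr0c, hTr0⟩, _⟩ := hrowOf (k + 1) 0 hvfull hl1
  have hr0k : r0 = k := by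
    have := hfc r0 hr0n
    omega
  -- `i ≤ r0`
  have hir0 : i ≤ r0 := hchain (k + 1) hvfull 0 (maxPart α - 1) (by omega) hlm
    r0 i hr0n hr0c hTr0 hin hicell hTi
  have hik' : i = k := by omega
  -- now handle column j
  obtain ⟨rj, ⟨hrjn, hrjc, hTrj⟩, _⟩ := hrowOf (k + 1) j hvfull (by omega)
  have h1 : rj ≤ r0 := hchain (k + 1) hvfull 0 j (Nat.zero_le _) (by omega)
    r0 rj hr0n hr0c hTr0 hrjn hrjc hTrj
  have h2 : i ≤ rj := hchain (k + 1) hvfull j (maxPart α - 1) (by omega) hlm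
    rj i hrjn hrjc hTrj hin hicell hTi
  have hrji : rj = i := by omega
  rw [hrji] at hTrj
  omega
end

section
/- For each composition α, the unique composition tableau of shape α and content α is the filling in which every cell of row i contains the entry i; in particular K_{α,α} = 1, where K_{α,γ} counts composition tableaux of shape α and content γ. -/
/-- The super-standard filling of `α`: every cell of (0-indexed) row `i` contains `i+1`. -/
def superT (α : List ℕ) : ℕ → ℕ → ℕ := fun i j =>
  if i < α.length ∧ j < α.getD i 0 then i + 1 else 0

/-- For each composition `α`, the unique composition tableau of shape `α` and content `α`
is the filling in which every cell of row `i` contains the entry `i`; in particular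
`K_{α,α} = 1`. -/
theorem unique_tableau_shape_content (α : List ℕ) (hα : IsComposition α) :
    IsCompTableau α (superT α) ∧ HasContent α (superT α) α ∧
    ∀ T : ℕ → ℕ → ℕ, IsCompTableau α T → HasContent α T α → T = superT α := by
  have hpos : ∀ i, i < α.length → 0 < α.getD i 0 := by
    intro i hi
    rw [List.getD_eq_getElem α 0 hi]
    exact hα _ (List.getElem_mem hi)
  have hsup : ∀ i j, i < α.length → j < α.getD i 0 → superT α i j = i + 1 := by
    intro i j hi hj
    unfold superT
    exact if_pos ⟨hi, hj⟩
  refine ⟨⟨?_, ?_, ?_, ?_, ?_⟩, ?_, ?_⟩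
  · intro i j hi hj
    rw [hsup i j hi hj]
    omega
  · intro i j h
    unfold superT
    rw [if_neg]
    rintro ⟨h1, h2⟩; omega
  · intro i j hi hj
    rw [hsup i (j+1) hi hj, hsup i j hi (by omega)]
  · intro i₁ i₂ h12 h2
    have h1 : i₁ < α.length := lt_trans h12 h2
    rw [hsup i₁ 0 h1 (hpos _ h1), hsup i₂ 0 h2 (hpos _ h2)]
    omega
  · intro i j c hij hj hci hcj
    have hi : i < α.length := lt_trans hij hj
    constructor
    · intro _ hc
      right
      rw [hsup i (c-1) hi (lt_of_le_of_lt (Nat.sub_le _ _) hci), hsup j c hj hcj]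
      omega
    · intro hlt
      right
      rw [hsup i c hi hci, hsup j (c+1) hj (by omega)]
      omega
  · intro v hv
    unfold contentCount
    have hterm : ∀ i ∈ Finset.range α.length,
        ((Finset.range (α.getD i 0)).filter (fun j => superT α i j = v)).card
          = if i = v - 1 then α.getD i 0 else 0 := by
      intro i hi
      rw [Finset.mem_range] at hi
      by_cases h : i = v - 1
      · rw [if_pos h, Finset.filter_true_of_mem, Finset.card_range]
        intro k hk
        rw [Finset.mem_range] at hk
        rw [hsup i k hi hk]
        omega
      · rw [if_neg h, Finset.card_eq_zero, Finset.filter_eq_empty_iff]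
        intro k hk
        rw [Finset.mem_range] at hk
        rw [hsup i k hi hk]
        omega
    rw [Finset.sum_congr rfl hterm, Finset.sum_ite_eq' (Finset.range α.length) (v-1)
      (fun i => α.getD i 0)]
    by_cases h : v - 1 < α.length
    · simp [h]
    · rw [if_neg (by simpa using h), List.getD_eq_default _ _ (le_of_not_gt h)]
  · intro T hT hC
    obtain ⟨hTpos, hTzero, hRD, hFC, -⟩ := hT
    have hone : ∀ i j, i < α.length → j < α.getD i 0 → 1 ≤ contentCount α T (T i j) := by
      intro i j hi hj
      have h1 : 1 ≤ ((Finset.range (α.getD i 0)).filter (fun k => T i k = T i j)).card :=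
        Finset.card_pos.mpr ⟨j, Finset.mem_filter.mpr ⟨Finset.mem_range.mpr hj, rfl⟩⟩
      unfold contentCount
      exact le_trans h1
        (Finset.single_le_sum
          (f := fun k => ((Finset.range (α.getD k 0)).filter (fun m => T k m = T i j)).card)
          (fun k _ => Nat.zero_le _) (Finset.mem_range.mpr hi))
    have hle : ∀ i j, i < α.length → j < α.getD i 0 → T i j ≤ α.length := by
      intro i j hi hj
      by_contra h
      push_neg at h
      have hv : 1 ≤ T i j := hTpos i j hi hj
      have hc := hC (T i j) hv
      have hd : α.getD (T i j - 1) 0 = 0 := List.getD_eq_default _ _ (by omega)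
      have h1 := hone i j hi hj
      omega
    have hge0 : ∀ j, j < α.length → j + 1 ≤ T j 0 := by
      intro j
      induction j with
      | zero => intro h; exact hTpos 0 0 h (hpos 0 h)
      | succ k ih =>
        intro h
        have hk : k < α.length := by omega
        have h1 := hFC k (k+1) (by omega) h
        have h2 := ih hk
        omega
    have hchain : ∀ d j, j + d < α.length → T j 0 + d ≤ T (j + d) 0 := by
      intro d
      induction d with
      | zero => intro j h; simp
      | succ k ih =>
        intro j h
        have h1 := ih j (by omega)
        have h2 := hFC (j + k) (j + k + 1) (by omega) (by omega)
        have h3 : j + (k + 1) = j + k + 1 := by omega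
        rw [h3]
        omega
    have hcol0 : ∀ j, j < α.length → T j 0 = j + 1 := by
      intro j hj
      have h1 := hge0 j hj
      have hn : 0 < α.length := by omega
      have h2 := hchain (α.length - 1 - j) j (by omega)
      have h3 : T (j + (α.length - 1 - j)) 0 ≤ α.length := by
        have he : j + (α.length - 1 - j) = α.length - 1 := by omega
        rw [he]
        exact hle _ 0 (by omega) (hpos _ (by omega))
      omega
    have hrow : ∀ i c, i < α.length → c < α.getD i 0 → T i c ≤ i + 1 := by
      intro i c hi
      induction c with
      | zero => intro _; exact (hcol0 i hi).le
      | succ k ih =>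
        intro hc
        have h1 := hRD i k hi hc
        have h2 := ih (by omega)
        omega
    have main : ∀ i, ∀ c, i < α.length → c < α.getD i 0 → T i c = i + 1 := by
      intro i
      induction i using Nat.strong_induction_on with
      | _ i IH =>
        intro c hi hc
        by_contra hne
        have hub := hrow i c hi hc
        have hp := hTpos i c hi hc
        set u := T i c with hu
        have hum : u - 1 < i := by omega
        have hu1 : 1 ≤ u := hp
        have hfull : ((Finset.range (α.getD (u-1) 0)).filter (fun k => T (u-1) k = u)).card
            = α.getD (u-1) 0 := by
          rw [Finset.filter_true_of_mem, Finset.card_range]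
          intro k hk
          rw [Finset.mem_range] at hk
          have := IH (u-1) hum k (by omega) hk
          omega
        have hi1 : 1 ≤ ((Finset.range (α.getD i 0)).filter (fun k => T i k = u)).card :=
          Finset.card_pos.mpr ⟨c, Finset.mem_filter.mpr ⟨Finset.mem_range.mpr hc, rfl⟩⟩
        have hsub : ({u-1, i} : Finset ℕ) ⊆ Finset.range α.length := by
          intro x hx
          simp only [Finset.mem_insert, Finset.mem_singleton] at hx
          rw [Finset.mem_range]
          rcases hx with h | h <;> omega
        have hpair : α.getD (u-1) 0 + 1 ≤ contentCount α T u := by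
          have hne' : u - 1 ≠ i := by omega
          have hs : (∑ k ∈ ({u-1, i} : Finset ℕ),
              ((Finset.range (α.getD k 0)).filter (fun j => T k j = u)).card)
              ≤ ∑ k ∈ Finset.range α.length,
              ((Finset.range (α.getD k 0)).filter (fun j => T k j = u)).card :=
            Finset.sum_le_sum_of_subset hsub
          rw [Finset.sum_pair hne'] at hs
          unfold contentCount
          omega
        have hcu := hC u hu1
        omega
    funext i j
    by_cases h : i < α.length ∧ j < α.getD i 0
    · rw [main i j h.1 h.2, hsup i j h.1 h.2]
    · rw [hTzero i j (by omega)]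
      unfold superT
      rw [if_neg h]
end

section
/- For any composition β and partition λ, the super filling S(λ, β) is a filling of its shape satisfying the weakly-decreasing-rows condition and the triple rule, and its reading word (appended cells read top to bottom, column by column, right to left) is a reverse lattice word. -/
/-- The (0-indexed) rank of position `p` among the parts of `beta` (padded with zeros up to
length `m`), parts ordered decreasingly with earlier equal parts considered smaller. -/
def phiRank (beta : List ℕ) (m p : ℕ) : ℕ :=
  (List.range m).countP
    (fun q => decide (beta.getD p 0 < beta.getD q 0 ∨ (beta.getD q 0 = beta.getD p 0 ∧ p < q)))

/-- The map `φ`: add `λ_i` to the `i`-th largest part of `β` (padding `β` with zeros if `λ`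
is longer, deleting zero parts at the end). -/
def phiVal (lam beta : List ℕ) : List ℕ :=
  ((List.range (max beta.length lam.length)).map
    (fun p => beta.getD p 0 + lam.getD (phiRank beta (max beta.length lam.length) p) 0)).filter
    (fun x => decide (0 < x))

/-- The shape of the super filling `S(λ, β)`: append `λ_i` cells to the `i`-th longest row
of `β` (lower rows considered longer among equal lengths), padding `β` with zero rows if
`λ` is longer than `β`. -/
def sfShape (lam beta : List ℕ) : List ℕ :=
  (List.range (max beta.length lam.length)).map
    (fun p => beta.getD p 0 + lam.getD (phiRank beta (max beta.length lam.length) p) 0)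

/-- The super filling `S(λ, β)` (with `k = ℓ(λ)` and `m` rows): the cells of the `i`-th row
from the bottom of `β` contain `k + i`; the appended cells of the `j`-th longest row of the
resulting shape contain `k − j + 1` (among equal-length rows, the lower row receives the
lesser entries), so that the appended content is `λ^*`. -/
def superFill (lam beta : List ℕ) : ℕ → ℕ → ℕ := fun p j =>
  let k := lam.length
  let m := max beta.length k
  let a := sfShape lam beta
  if p < m ∧ j < a.getD p 0 then
    if j < beta.getD p 0 then k + (m - p)
    else k - (List.range m).countP
      (fun q => decide (a.getD p 0 < a.getD q 0 ∨ (a.getD q 0 = a.getD p 0 ∧ q < p)))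
  else 0

/-- The reading word of the appended cells of `S(λ, β)`: top to bottom, column by column,
from right to left. -/
def appendedReadingWord (lam beta : List ℕ) : List ℕ :=
  let m := max beta.length lam.length
  let a := sfShape lam beta
  ((List.range (maxPart a)).reverse).flatMap (fun c =>
    (List.range m).filterMap (fun p =>
      if beta.getD p 0 ≤ c ∧ c < a.getD p 0 then some (superFill lam beta p c) else none))

/-- A reverse lattice word (for values up to `k`): every prefix contains at least as many
`i`'s as `(i−1)`'s, for each `1 < i ≤ k`. -/
def IsReverseLattice (w : List ℕ) (k : ℕ) : Prop :=
  ∀ p, ∀ v, 1 < v → v ≤ k → (w.take p).count (v - 1) ≤ (w.take p).count v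


namespace SFLR

/-- countP over `List.range` as a Finset card. -/
lemma countP_range_eq_card (n : ℕ) (f : ℕ → Bool) :
    (List.range n).countP f = ((Finset.range n).filter (fun i => f i = true)).card := by
  induction n with
  | zero => simp
  | succ n ih =>
    rw [List.range_succ, List.countP_append, Finset.range_add_one, Finset.filter_insert]
    by_cases h : f n = true
    · rw [if_pos h, Finset.card_insert_of_notMem (by simp)]
      simp [ih, h]
    · rw [if_neg h]
      simp [ih, h]

/-- generic rank of `p` w.r.t. an injective key, among `range m`. -/
def rkOf (key : ℕ → ℕ) (m p : ℕ) : ℕ :=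
  ((Finset.range m).filter (fun q => key p < key q)).card

lemma rk_lt_of (key : ℕ → ℕ) (m : ℕ) {p q : ℕ} (hq : q < m) (h : key p < key q) :
    rkOf key m q < rkOf key m p := by
  apply Finset.card_lt_card
  constructor
  · intro x hx
    simp only [Finset.mem_filter, Finset.mem_range] at *
    exact ⟨hx.1, lt_trans h hx.2⟩
  · intro hsub
    have : q ∈ (Finset.range m).filter (fun x => key p < key x) := by
      simp [hq, h]
    have := hsub this
    simp at this


lemma rk_lt_m (key : ℕ → ℕ) {m p : ℕ} (hp : p < m) : rkOf key m p < m := by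
  have : ((Finset.range m).filter (fun q => key p < key q)) ⊂ Finset.range m := by
    constructor
    · exact Finset.filter_subset _ _
    · intro hsub
      have : p ∈ (Finset.range m).filter (fun q => key p < key q) :=
        hsub (by simp [hp])
      simp at this
  simpa [rkOf] using Finset.card_lt_card this

lemma rk_inj (key : ℕ → ℕ) {m p q : ℕ}
    (hinj : ∀ p' q', p' < m → q' < m → key p' = key q' → p' = q')
    (hp : p < m) (hq : q < m) (h : rkOf key m p = rkOf key m q) : p = q := by
  rcases lt_trichotomy (key p) (key q) with h'|h'|h'
  · have := rk_lt_of key m hq h'; omega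
  · exact hinj _ _ hp hq h'
  · have := rk_lt_of key m hp h'; omega

lemma rk_surj (key : ℕ → ℕ) {m : ℕ}
    (hinj : ∀ p' q', p' < m → q' < m → key p' = key q' → p' = q')
    {s : ℕ} (hs : s < m) : ∃ p, p < m ∧ rkOf key m p = s := by
  have himg : (Finset.range m).image (rkOf key m) = Finset.range m := by
    apply Finset.eq_of_subset_of_card_le
    · intro x hx
      simp only [Finset.mem_image, Finset.mem_range] at *
      obtain ⟨p, hp, rfl⟩ := hx
      exact rk_lt_m key hp
    · rw [Finset.card_image_of_injOn]
      intro p hp q hq h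
      simp only [Finset.coe_range, Set.mem_Iio] at hp hq
      exact rk_inj key hinj hp hq h
  have : s ∈ (Finset.range m).image (rkOf key m) := by rw [himg]; simp [hs]
  simp only [Finset.mem_image, Finset.mem_range] at this
  obtain ⟨p, hp, h⟩ := this
  exact ⟨p, hp, h⟩

lemma key_lemma {x y u v M : ℕ} (hu : u ≤ M) (hv : v ≤ M) :
    x * (M+1) + u < y * (M+1) + v ↔ (x < y ∨ (x = y ∧ u < v)) := by
  rcases lt_trichotomy x y with h|h|h
  · have h2 : x*(M+1) + (M+1) ≤ y*(M+1) := by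
      calc x*(M+1)+(M+1) = (x+1)*(M+1) := by ring
      _ ≤ y*(M+1) := Nat.mul_le_mul_right _ h
    constructor
    · intro _; exact Or.inl h
    · intro _; omega
  · subst h
    constructor
    · intro hlt; exact Or.inr ⟨rfl, by omega⟩
    · rintro (h|⟨-,h⟩) <;> omega
  · have h2 : y*(M+1) + (M+1) ≤ x*(M+1) := by
      calc y*(M+1)+(M+1) = (y+1)*(M+1) := by ring
      _ ≤ x*(M+1) := Nat.mul_le_mul_right _ h
    constructor
    · intro hlt; omega
    · rintro (h'|⟨h',-⟩) <;> omega

end SFLR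
namespace SFLR

section Main
variable (lam beta : List ℕ)

/-- number of rows -/
def mV : ℕ := max beta.length lam.length

/-- padded β part -/
def bV (p : ℕ) : ℕ := beta.getD p 0

/-- part of the shape α -/
def AV (p : ℕ) : ℕ := (sfShape lam beta).getD p 0

def keyB (p : ℕ) : ℕ := bV beta p * (mV lam beta + 1) + p

def keyA (p : ℕ) : ℕ := AV lam beta p * (mV lam beta + 1) + (mV lam beta - p)

/-- the rank r' used for appended entries -/
def rpV (p : ℕ) : ℕ :=
  (List.range (mV lam beta)).countP
    (fun q => decide ((sfShape lam beta).getD p 0 < (sfShape lam beta).getD q 0 ∨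
      ((sfShape lam beta).getD q 0 = (sfShape lam beta).getD p 0 ∧ q < p)))

lemma len_sfShape : (sfShape lam beta).length = mV lam beta := by
  simp [sfShape, mV]

lemma k_le_m : lam.length ≤ mV lam beta := le_max_right _ _

lemma AV_eq {p : ℕ} (hp : p < mV lam beta) :
    AV lam beta p = bV beta p + lam.getD (phiRank beta (mV lam beta) p) 0 := by
  simp only [AV, sfShape, bV, mV] at *
  rw [List.getD_eq_getElem?_getD, List.getElem?_map, List.getElem?_range hp]
  rfl

lemma AV_zero {p : ℕ} (hp : mV lam beta ≤ p) : AV lam beta p = 0 := by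
  simp only [AV]
  rw [List.getD_eq_default]
  rw [len_sfShape]; exact hp

lemma bV_le_AV {p : ℕ} (hp : p < mV lam beta) : bV beta p ≤ AV lam beta p := by
  rw [AV_eq lam beta hp]; omega

lemma lam_mono (hlam : List.Pairwise (· ≥ ·) lam) {i j : ℕ} (h : i ≤ j) :
    lam.getD j 0 ≤ lam.getD i 0 := by
  rcases eq_or_lt_of_le h with rfl|h
  · exact le_rfl
  by_cases hj : j < lam.length
  · have hi : i < lam.length := lt_trans h hj
    have := hlam.rel_get_of_lt (a := ⟨i, hi⟩) (b := ⟨j, hj⟩) h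
    rwa [List.getD_eq_getElem _ _ hj, List.getD_eq_getElem _ _ hi]
  · rw [List.getD_eq_default _ _ (le_of_not_gt hj)]
    exact Nat.zero_le _

lemma lam_pos_lt {s : ℕ} (h : 1 ≤ lam.getD s 0) : s < lam.length := by
  by_contra hc
  rw [List.getD_eq_default _ _ (le_of_not_gt hc)] at h
  omega

lemma keyB_lt_iff {p q : ℕ} (hp : p < mV lam beta) (hq : q < mV lam beta) :
    keyB lam beta p < keyB lam beta q ↔
      (bV beta p < bV beta q ∨ (bV beta p = bV beta q ∧ p < q)) :=
  key_lemma (le_of_lt hp) (le_of_lt hq)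

lemma keyA_lt_iff {p q : ℕ} (hp : p < mV lam beta) (hq : q < mV lam beta) :
    keyA lam beta p < keyA lam beta q ↔
      (AV lam beta p < AV lam beta q ∨ (AV lam beta p = AV lam beta q ∧ q < p)) := by
  rw [keyA, keyA, key_lemma (by omega) (by omega)]
  constructor
  · rintro (h|⟨h1,h2⟩)
    · exact Or.inl h
    · exact Or.inr ⟨h1, by omega⟩
  · rintro (h|⟨h1,h2⟩)
    · exact Or.inl h
    · exact Or.inr ⟨h1, by omega⟩

lemma keyB_inj : ∀ p q, p < mV lam beta → q < mV lam beta →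
    keyB lam beta p = keyB lam beta q → p = q := by
  intro p q hp hq h
  have h1 : ¬ (bV beta p < bV beta q ∨ (bV beta p = bV beta q ∧ p < q)) := by
    intro hc
    have := (keyB_lt_iff lam beta hp hq).2 hc
    omega
  have h2 : ¬ (bV beta q < bV beta p ∨ (bV beta q = bV beta p ∧ q < p)) := by
    intro hc
    have := (keyB_lt_iff lam beta hq hp).2 hc
    omega
  omega

lemma keyA_inj : ∀ p q, p < mV lam beta → q < mV lam beta →
    keyA lam beta p = keyA lam beta q → p = q := by
  intro p q hp hq h
  have h1 : ¬ (AV lam beta p < AV lam beta q ∨ (AV lam beta p = AV lam beta q ∧ q < p)) := by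
    intro hc
    have := (keyA_lt_iff lam beta hp hq).2 hc
    omega
  have h2 : ¬ (AV lam beta q < AV lam beta p ∨ (AV lam beta q = AV lam beta p ∧ p < q)) := by
    intro hc
    have := (keyA_lt_iff lam beta hq hp).2 hc
    omega
  omega

lemma rank_eq {p : ℕ} (hp : p < mV lam beta) :
    phiRank beta (mV lam beta) p = rkOf (keyB lam beta) (mV lam beta) p := by
  rw [phiRank, countP_range_eq_card, rkOf]
  congr 1
  apply Finset.filter_congr
  intro q hq
  simp only [Finset.mem_range] at hq
  simp only [decide_eq_true_eq]
  rw [keyB_lt_iff lam beta hp hq]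
  constructor
  · rintro (h|⟨h1,h2⟩)
    · exact Or.inl h
    · exact Or.inr ⟨h1.symm, h2⟩
  · rintro (h|⟨h1,h2⟩)
    · exact Or.inl h
    · exact Or.inr ⟨h1.symm, h2⟩

lemma rp_eq {p : ℕ} (hp : p < mV lam beta) :
    rpV lam beta p = rkOf (keyA lam beta) (mV lam beta) p := by
  rw [rpV, countP_range_eq_card, rkOf]
  congr 1
  apply Finset.filter_congr
  intro q hq
  simp only [Finset.mem_range] at hq
  simp only [decide_eq_true_eq]
  rw [keyA_lt_iff lam beta hp hq]
  have : (sfShape lam beta).getD p 0 = AV lam beta p := rfl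
  have : (sfShape lam beta).getD q 0 = AV lam beta q := rfl
  constructor
  · rintro (h|⟨h1,h2⟩)
    · exact Or.inl h
    · exact Or.inr ⟨h1.symm, h2⟩
  · rintro (h|⟨h1,h2⟩)
    · exact Or.inl h
    · exact Or.inr ⟨h1.symm, h2⟩

end Main
end SFLR
namespace SFLR
section Main
variable (lam beta : List ℕ)

lemma rank_lt_of_b_lt {p q : ℕ} (hp : p < mV lam beta) (hq : q < mV lam beta)
    (h : bV beta p < bV beta q) :
    phiRank beta (mV lam beta) q < phiRank beta (mV lam beta) p := by
  rw [rank_eq lam beta hp, rank_eq lam beta hq]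
  exact rk_lt_of _ _ hq ((keyB_lt_iff lam beta hp hq).2 (Or.inl h))

lemma AV_lt_of_b_lt (hlam : List.Pairwise (· ≥ ·) lam) {p q : ℕ}
    (hp : p < mV lam beta) (hq : q < mV lam beta)
    (h : bV beta p < bV beta q) : AV lam beta p < AV lam beta q := by
  have hr := rank_lt_of_b_lt lam beta hp hq h
  have hm := lam_mono lam hlam (le_of_lt hr)
  have h1 := AV_eq lam beta hp
  have h2 := AV_eq lam beta hq
  omega

lemma b_eq_of_AV_eq (hlam : List.Pairwise (· ≥ ·) lam) {p q : ℕ}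
    (hp : p < mV lam beta) (hq : q < mV lam beta)
    (h : AV lam beta p = AV lam beta q) : bV beta p = bV beta q := by
  rcases lt_trichotomy (bV beta p) (bV beta q) with hb|hb|hb
  · have := AV_lt_of_b_lt lam beta hlam hp hq hb; omega
  · exact hb
  · have := AV_lt_of_b_lt lam beta hlam hq hp hb; omega

lemma lam_rank_mono (hlam : List.Pairwise (· ≥ ·) lam) {p q : ℕ}
    (hp : p < mV lam beta) (hq : q < mV lam beta)
    (h : AV lam beta q < AV lam beta p) :
    lam.getD (phiRank beta (mV lam beta) q) 0 ≤ lam.getD (phiRank beta (mV lam beta) p) 0 := by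
  rcases lt_trichotomy (bV beta q) (bV beta p) with hb|hb|hb
  · exact lam_mono lam hlam (le_of_lt (rank_lt_of_b_lt lam beta hq hp hb))
  · have h1 := AV_eq lam beta hp
    have h2 := AV_eq lam beta hq
    omega
  · have := AV_lt_of_b_lt lam beta hlam hp hq hb; omega

/-- if row `p` has appended cells and `q` is "before" `p` in the r'-order,
then row `q` has appended cells. -/
lemma lam_rank_pos (hlam : List.Pairwise (· ≥ ·) lam) {p q : ℕ}
    (hp : p < mV lam beta) (hq : q < mV lam beta)
    (hcell : bV beta p < AV lam beta p)
    (h : AV lam beta p < AV lam beta q ∨ (AV lam beta q = AV lam beta p ∧ q < p)) :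
    1 ≤ lam.getD (phiRank beta (mV lam beta) q) 0 := by
  by_contra hc
  have hq0 : lam.getD (phiRank beta (mV lam beta) q) 0 = 0 := by omega
  have hAq : AV lam beta q = bV beta q := by rw [AV_eq lam beta hq]; omega
  have hAp := AV_eq lam beta hp
  have hLp : 1 ≤ lam.getD (phiRank beta (mV lam beta) p) 0 := by omega
  have hbq : bV beta p < bV beta q := by omega
  have hr := rank_lt_of_b_lt lam beta hp hq hbq
  have := lam_mono lam hlam (le_of_lt hr)
  omega

/-- r' of a row with appended cells is < k. -/
lemma rp_lt_k (hlam : List.Pairwise (· ≥ ·) lam) {p : ℕ}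
    (hp : p < mV lam beta) (hcell : bV beta p < AV lam beta p) :
    rpV lam beta p < lam.length := by
  have hrp : rpV lam beta p =
      ((Finset.range (mV lam beta)).filter
        (fun q => keyA lam beta p < keyA lam beta q)).card := rp_eq lam beta hp
  set S := (Finset.range (mV lam beta)).filter
      (fun q => keyA lam beta p < keyA lam beta q) with hS
  have hmem : ∀ q ∈ insert p S, phiRank beta (mV lam beta) q ∈ Finset.range lam.length := by
    intro q hq
    simp only [Finset.mem_insert, hS, Finset.mem_filter, Finset.mem_range] at hq
    simp only [Finset.mem_range]
    apply lam_pos_lt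
    rcases hq with rfl|⟨hqm, hkey⟩
    · have := AV_eq lam beta hp; omega
    · exact lam_rank_pos lam beta hlam hp hqm hcell
        (((keyA_lt_iff lam beta hp hqm).1 hkey).imp id (fun h => ⟨h.1.symm, h.2⟩))
  have hmq : ∀ x, (x = p ∨ x ∈ S) → x < mV lam beta := by
    intro x hx
    rcases hx with rfl|hx
    · exact hp
    · simp only [hS, Finset.mem_filter, Finset.mem_range] at hx
      exact hx.1
  have hinj : Set.InjOn (phiRank beta (mV lam beta)) (insert p S : Finset ℕ) := by
    intro x hx y hy hxy
    simp only [Finset.coe_insert, Set.mem_insert_iff, Finset.mem_coe] at hx hy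
    have hxm : x < mV lam beta := hmq x hx
    have hym : y < mV lam beta := hmq y hy
    rw [rank_eq lam beta hxm, rank_eq lam beta hym] at hxy
    exact rk_inj _ (keyB_inj lam beta) hxm hym hxy
  have hcard := Finset.card_le_card_of_injOn _ hmem hinj
  have hpS : p ∉ S := by simp [hS]
  rw [Finset.card_insert_of_notMem hpS, Finset.card_range] at hcard
  omega

lemma rp_lt_of {p q : ℕ} (hp : p < mV lam beta) (hq : q < mV lam beta)
    (h : AV lam beta p < AV lam beta q ∨ (AV lam beta p = AV lam beta q ∧ q < p)) :
    rpV lam beta q < rpV lam beta p := by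
  rw [rp_eq lam beta hp, rp_eq lam beta hq]
  exact rk_lt_of _ _ hq ((keyA_lt_iff lam beta hp hq).2 h)

lemma rp_inj {p q : ℕ} (hp : p < mV lam beta) (hq : q < mV lam beta)
    (h : rpV lam beta p = rpV lam beta q) : p = q := by
  rw [rp_eq lam beta hp, rp_eq lam beta hq] at h
  exact rk_inj _ (keyA_inj lam beta) hp hq h

lemma rp_surj {s : ℕ} (hs : s < mV lam beta) :
    ∃ p, p < mV lam beta ∧ rpV lam beta p = s := by
  obtain ⟨p, hp, h⟩ := rk_surj (keyA lam beta) (keyA_inj lam beta) hs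
  exact ⟨p, hp, by rw [rp_eq lam beta hp]; exact h⟩

/-- the r'-order comparison derived from r' values. -/
lemma keyA_lt_of_rp_lt {p q : ℕ} (hp : p < mV lam beta) (hq : q < mV lam beta)
    (h : rpV lam beta p < rpV lam beta q) :
    AV lam beta q < AV lam beta p ∨ (AV lam beta q = AV lam beta p ∧ p < q) := by
  rcases lt_trichotomy (keyA lam beta q) (keyA lam beta p) with hk|hk|hk
  · exact (keyA_lt_iff lam beta hq hp).1 hk
  · have := keyA_inj lam beta q p hq hp hk
    subst this; omega
  · have := rp_lt_of lam beta hp hq ((keyA_lt_iff lam beta hp hq).1 hk)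
    omega

/-- entries of β-cells. -/
lemma superFill_beta {p j : ℕ} (hp : p < mV lam beta) (hj : j < bV beta p) :
    superFill lam beta p j = lam.length + (mV lam beta - p) := by
  have hjA : j < (sfShape lam beta).getD p 0 := lt_of_lt_of_le hj (bV_le_AV lam beta hp)
  have hp' : p < max beta.length lam.length := hp
  have hj' : j < beta.getD p 0 := hj
  simp only [superFill]
  rw [if_pos ⟨hp', hjA⟩, if_pos hj']
  rfl

/-- entries of appended cells. -/
lemma superFill_app {p j : ℕ} (hp : p < mV lam beta) (hj1 : bV beta p ≤ j)
    (hj2 : j < AV lam beta p) :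
    superFill lam beta p j = lam.length - rpV lam beta p := by
  have hjA : j < (sfShape lam beta).getD p 0 := hj2
  have hp' : p < max beta.length lam.length := hp
  have hj' : ¬ j < beta.getD p 0 := not_lt.2 hj1
  simp only [superFill]
  rw [if_pos ⟨hp', hjA⟩, if_neg hj']
  rfl

end Main
end SFLR
namespace SFLR

lemma le_maxPart {l : List ℕ} {x : ℕ} (h : x ∈ l) : x ≤ maxPart l := by
  induction l with
  | nil => simp at h
  | cons y l ih =>
    rcases List.mem_cons.1 h with rfl|h
    · simp [maxPart]
    · have := ih h
      simp only [maxPart, List.foldr_cons] at *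
      omega

lemma getD_le_maxPart (l : List ℕ) (p : ℕ) : l.getD p 0 ≤ maxPart l := by
  by_cases hp : p < l.length
  · rw [List.getD_eq_getElem _ _ hp]
    exact le_maxPart (List.getElem_mem hp)
  · rw [List.getD_eq_default _ _ (le_of_not_gt hp)]
    exact Nat.zero_le _

/-- decomposition of a prefix of a flatMap -/
lemma take_flatMap (f : ℕ → List ℕ) :
    ∀ (L : List ℕ) (n : ℕ), ∃ i t, i ≤ L.length ∧ (i = L.length → t = 0) ∧
      (L.flatMap f).take n = (L.take i).flatMap f ++ (f (L.getD i 0)).take t := by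
  intro L
  induction L with
  | nil => intro n; exact ⟨0, 0, by simp, by simp, by simp⟩
  | cons x L ih =>
    intro n
    by_cases h : n ≤ (f x).length
    · refine ⟨0, n, by simp, by simp, ?_⟩
      simp only [List.flatMap_cons, List.take_zero, List.flatMap_nil, List.nil_append,
        List.getD_cons_zero]
      exact List.take_append_of_le_length h
    · obtain ⟨i, t, hi, hit, heq⟩ := ih (n - (f x).length)
      refine ⟨i + 1, t, by simpa using hi, by intro hh; exact hit (by simpa using hh), ?_⟩
      rw [List.flatMap_cons, List.take_append,
        List.take_of_length_le (by omega), List.take_succ_cons, List.flatMap_cons,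
        List.getD_cons_succ, List.append_assoc, heq]

/-- a prefix of a filterMap is a filterMap of a prefix -/
lemma take_filterMap (f : ℕ → Option ℕ) :
    ∀ (L : List ℕ) (n : ℕ), ∃ i, i ≤ L.length ∧
      (L.filterMap f).take n = (L.take i).filterMap f := by
  intro L
  induction L with
  | nil => intro n; exact ⟨0, by simp, by simp⟩
  | cons x L ih =>
    intro n
    cases hfx : f x with
    | none =>
      obtain ⟨i, hi, he⟩ := ih n
      exact ⟨i + 1, by simpa using hi,
        by simp only [List.filterMap_cons, hfx, List.take_succ_cons]; exact he⟩
    | some y =>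
      cases n with
      | zero => exact ⟨0, by simp, by simp⟩
      | succ n =>
        obtain ⟨i, hi, he⟩ := ih n
        refine ⟨i + 1, by simpa using hi, ?_⟩
        simp only [List.filterMap_cons, hfx, List.take_succ_cons, List.take_cons]
        rw [he]

lemma getD_reverse_range {Mx i : ℕ} (hi : i < Mx) :
    ((List.range Mx).reverse).getD i 0 = Mx - 1 - i := by
  rw [List.getD_eq_getElem?_getD, List.getElem?_reverse (by simpa using hi),
    List.length_range, List.getElem?_range (by omega)]
  rfl

end SFLR
namespace SFLR
section Count
variable (lam beta : List ℕ)

def colF (c p : ℕ) : Option ℕ :=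
  if beta.getD p 0 ≤ c ∧ c < (sfShape lam beta).getD p 0 then some (superFill lam beta p c)
  else none

def colL (c : ℕ) : List ℕ := (List.range (mV lam beta)).filterMap (colF lam beta c)

lemma arw_eq : appendedReadingWord lam beta
    = ((List.range (maxPart (sfShape lam beta))).reverse).flatMap (colL lam beta) := rfl

variable {u pu : ℕ}

lemma colF_eq_some (hu1 : 1 ≤ u) (hu2 : u ≤ lam.length)
    (hpu : pu < mV lam beta) (hr : rpV lam beta pu = lam.length - u)
    {c q : ℕ} (hq : q < mV lam beta) :
    colF lam beta c q = some u ↔ (q = pu ∧ bV beta pu ≤ c ∧ c < AV lam beta pu) := by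
  rw [colF]
  by_cases hcond : beta.getD q 0 ≤ c ∧ c < (sfShape lam beta).getD q 0
  · rw [if_pos hcond, superFill_app lam beta hq hcond.1 hcond.2, Option.some_inj]
    constructor
    · intro h
      have h5 : rpV lam beta q < lam.length := by omega
      have h6 : rpV lam beta q = rpV lam beta pu := by omega
      have h7 := rp_inj lam beta hq hpu h6
      subst h7
      exact ⟨rfl, hcond⟩
    · rintro ⟨rfl, -⟩
      omega
  · rw [if_neg hcond]
    constructor
    · intro h; exact absurd h (by simp)
    · rintro ⟨rfl, h1, h2⟩
      exact absurd ⟨h1, h2⟩ hcond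

lemma count_tail (hu1 : 1 ≤ u) (hu2 : u ≤ lam.length)
    (hpu : pu < mV lam beta) (hr : rpV lam beta pu = lam.length - u) : ∀ J, J ≤ mV lam beta → ∀ c,
    (((List.range J).filterMap (colF lam beta c)).count u)
      = if pu < J ∧ bV beta pu ≤ c ∧ c < AV lam beta pu then 1 else 0 := by
  intro J
  induction J with
  | zero => intro _ c; simp
  | succ J ih =>
    intro hJ c
    have hJm : J < mV lam beta := by omega
    rw [List.range_succ, List.filterMap_append, List.count_append,
      ih (by omega) c]
    have hsingle : (([J].filterMap (colF lam beta c)).count u)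
        = if J = pu ∧ bV beta pu ≤ c ∧ c < AV lam beta pu then 1 else 0 := by
      by_cases hs : colF lam beta c J = some u
      · have := (colF_eq_some lam beta hu1 hu2 hpu hr hJm).1 hs
        rw [if_pos this]
        simp [List.filterMap_cons, hs]
      · rw [if_neg (fun hc => hs ((colF_eq_some lam beta hu1 hu2 hpu hr hJm).2 hc))]
        cases hfx : colF lam beta c J with
        | none => simp [List.filterMap_cons, hfx]
        | some y =>
          simp only [List.filterMap_cons, hfx, List.filterMap_nil]
          rw [List.count_singleton]
          simp only [beq_iff_eq]
          rw [if_neg (by rintro rfl; exact hs hfx)]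
    rw [hsingle]
    by_cases hcell : bV beta pu ≤ c ∧ c < AV lam beta pu
    · rcases Nat.lt_trichotomy pu J with h|h|h
      · rw [if_pos ⟨h, hcell⟩, if_neg (by omega), if_pos ⟨by omega, hcell⟩]
      · rw [if_neg (by omega), if_pos ⟨by omega, hcell⟩, if_pos ⟨by omega, hcell⟩]
      · rw [if_neg (by omega), if_neg (by omega), if_neg (by omega)]
    · rw [if_neg (by tauto), if_neg (by tauto), if_neg (by tauto)]

lemma count_col (hu1 : 1 ≤ u) (hu2 : u ≤ lam.length)
    (hpu : pu < mV lam beta) (hr : rpV lam beta pu = lam.length - u) (c : ℕ) : ((colL lam beta c).count u)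
    = if bV beta pu ≤ c ∧ c < AV lam beta pu then 1 else 0 := by
  rw [colL, count_tail lam beta hu1 hu2 hpu hr (mV lam beta) le_rfl c]
  by_cases hcell : bV beta pu ≤ c ∧ c < AV lam beta pu
  · rw [if_pos ⟨hpu, hcell⟩, if_pos hcell]
  · rw [if_neg (by tauto), if_neg hcell]

lemma count_flat (hu1 : 1 ≤ u) (hu2 : u ≤ lam.length)
    (hpu : pu < mV lam beta) (hr : rpV lam beta pu = lam.length - u) : ∀ (M : List ℕ),
    ((M.flatMap (colL lam beta)).count u)
      = M.countP (fun c => decide (bV beta pu ≤ c ∧ c < AV lam beta pu)) := by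
  intro M
  induction M with
  | nil => simp
  | cons x M ih =>
    rw [List.flatMap_cons, List.count_append, ih, List.countP_cons,
      count_col lam beta hu1 hu2 hpu hr x]
    by_cases hcell : bV beta pu ≤ x ∧ x < AV lam beta pu
    · rw [if_pos hcell, if_pos (by simpa using hcell)]
      omega
    · rw [if_neg hcell, if_neg (by simpa using hcell)]
      omega

lemma count_full (hpu : pu < mV lam beta) : ∀ i, i ≤ maxPart (sfShape lam beta) →
    (((List.range (maxPart (sfShape lam beta))).reverse.take i).countP
        (fun c => decide (bV beta pu ≤ c ∧ c < AV lam beta pu)))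
      = (AV lam beta pu - bV beta pu)
        - ((maxPart (sfShape lam beta) - i) - bV beta pu) := by
  have hA : AV lam beta pu ≤ maxPart (sfShape lam beta) := getD_le_maxPart _ _
  have hbA : bV beta pu ≤ AV lam beta pu := bV_le_AV lam beta hpu
  intro i
  induction i with
  | zero => intro _; simp; omega
  | succ i ih =>
    intro hi
    have hiMx : i < maxPart (sfShape lam beta) := by omega
    rw [List.take_succ, List.countP_append, ih (by omega)]
    have hget : ((List.range (maxPart (sfShape lam beta))).reverse)[i]?
        = some (maxPart (sfShape lam beta) - 1 - i) := by
      rw [List.getElem?_reverse (by simpa using hiMx), List.length_range,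
        List.getElem?_range (by omega)]
    rw [hget]
    simp only [Option.toList_some, List.countP_cons, List.countP_nil, Nat.zero_add,
      decide_eq_true_eq]
    by_cases hcell : bV beta pu ≤ maxPart (sfShape lam beta) - 1 - i
        ∧ maxPart (sfShape lam beta) - 1 - i < AV lam beta pu
    · rw [if_pos hcell]; omega
    · rw [if_neg hcell]
      have : ¬ (bV beta pu ≤ maxPart (sfShape lam beta) - 1 - i)
          ∨ ¬ (maxPart (sfShape lam beta) - 1 - i < AV lam beta pu) := by tauto
      omega

end Count
end SFLR
/-- The super filling `S(λ, β)` satisfies the weakly-decreasing-rows condition and the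
triple rule, and its appended reading word is a reverse lattice word. -/
theorem superfill_is_LR (lam beta : List ℕ)
    (hlam : List.Pairwise (· ≥ ·) lam) (hlam' : IsComposition lam)
    (hbeta : IsComposition beta) :
    RowsDecrease (sfShape lam beta) (superFill lam beta) ∧
    TripleRule (sfShape lam beta) (superFill lam beta) ∧
    IsReverseLattice (appendedReadingWord lam beta) lam.length := by
  have hmlen : (sfShape lam beta).length = SFLR.mV lam beta := SFLR.len_sfShape lam beta
  refine ⟨?_, ?_, ?_⟩
  · -- RowsDecrease
    intro i j hi hj
    rw [hmlen] at hi
    have hj' : j + 1 < SFLR.AV lam beta i := hj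
    by_cases h1 : j + 1 < SFLR.bV beta i
    · rw [SFLR.superFill_beta lam beta hi h1, SFLR.superFill_beta lam beta hi (by omega)]
    · rw [SFLR.superFill_app lam beta hi (by omega) hj']
      by_cases h2 : j < SFLR.bV beta i
      · rw [SFLR.superFill_beta lam beta hi h2]; omega
      · rw [SFLR.superFill_app lam beta hi (by omega) (by omega)]
  · -- TripleRule
    intro i j c hij hjm hci hcj
    rw [hmlen] at hjm
    have him : i < SFLR.mV lam beta := lt_trans hij hjm
    have hci' : c < SFLR.AV lam beta i := hci
    have hcj' : c < SFLR.AV lam beta j := hcj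
    constructor
    · intro hAle _
      have hA : SFLR.AV lam beta j ≤ SFLR.AV lam beta i := hAle
      by_cases hbi : c < SFLR.bV beta i
      · by_cases hbj : c < SFLR.bV beta j
        · left
          rw [SFLR.superFill_beta lam beta him hbi, SFLR.superFill_beta lam beta hjm hbj]
          omega
        · left
          rw [SFLR.superFill_beta lam beta him hbi,
            SFLR.superFill_app lam beta hjm (by omega) hcj']
          omega
      · by_cases hbj : c < SFLR.bV beta j
        · exfalso
          have hblt : SFLR.bV beta i < SFLR.bV beta j := by omega
          have := SFLR.AV_lt_of_b_lt lam beta hlam him hjm hblt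
          omega
        · left
          have hri := SFLR.rp_lt_k lam beta hlam him (by omega)
          have hrij : SFLR.rpV lam beta i < SFLR.rpV lam beta j := by
            apply SFLR.rp_lt_of lam beta hjm him
            rcases eq_or_lt_of_le hA with he|hl
            · exact Or.inr ⟨he, hij⟩
            · exact Or.inl hl
          rw [SFLR.superFill_app lam beta him (by omega) hci',
            SFLR.superFill_app lam beta hjm (by omega) hcj']
          omega
    · intro hAlt
      have hA : SFLR.AV lam beta i < SFLR.AV lam beta j := hAlt
      by_cases hbi : c < SFLR.bV beta i
      · left
        by_cases hbj : c < SFLR.bV beta j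
        · rw [SFLR.superFill_beta lam beta him hbi, SFLR.superFill_beta lam beta hjm hbj]
          omega
        · rw [SFLR.superFill_beta lam beta him hbi,
            SFLR.superFill_app lam beta hjm (by omega) hcj']
          omega
      · right
        have hcelli : SFLR.bV beta i < SFLR.AV lam beta i := by omega
        have hri := SFLR.rp_lt_k lam beta hlam him hcelli
        rw [SFLR.superFill_app lam beta him (by omega) hci']
        by_cases hbj1 : c + 1 < SFLR.bV beta j
        · rw [SFLR.superFill_beta lam beta hjm hbj1]
          omega
        · have hbj2 : SFLR.bV beta j ≤ c + 1 := by omega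
          have hcj2 : c + 1 < SFLR.AV lam beta j := by omega
          rw [SFLR.superFill_app lam beta hjm hbj2 hcj2]
          have hcellj : SFLR.bV beta j < SFLR.AV lam beta j := by omega
          have hrj := SFLR.rp_lt_k lam beta hlam hjm hcellj
          have hrij : SFLR.rpV lam beta j < SFLR.rpV lam beta i :=
            SFLR.rp_lt_of lam beta him hjm (Or.inl hA)
          omega
  · -- IsReverseLattice
    intro n v hv1 hv2
    have hkm := SFLR.k_le_m lam beta
    obtain ⟨p, hpm, hrp⟩ := SFLR.rp_surj lam beta (s := lam.length - v) (by omega)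
    obtain ⟨p', hpm', hrp'⟩ := SFLR.rp_surj lam beta (s := lam.length - (v - 1)) (by omega)
    rw [SFLR.arw_eq lam beta]
    set Mx := maxPart (sfShape lam beta) with hMx
    obtain ⟨i, t, hi, hit, heq⟩ :=
      SFLR.take_flatMap (SFLR.colL lam beta) ((List.range Mx).reverse) n
    rw [List.length_reverse, List.length_range] at hi hit
    set cstar := ((List.range Mx).reverse).getD i 0 with hcstar
    obtain ⟨J, hJ, htl, hJ0⟩ : ∃ J, J ≤ SFLR.mV lam beta ∧
        (SFLR.colL lam beta cstar).take t
          = (List.range J).filterMap (SFLR.colF lam beta cstar) ∧ (i = Mx → J = 0) := by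
      by_cases hiMx : i = Mx
      · exact ⟨0, Nat.zero_le _, by simp [hit hiMx], fun _ => rfl⟩
      · obtain ⟨J0, hJ0, he⟩ :=
          SFLR.take_filterMap (SFLR.colF lam beta cstar) (List.range (SFLR.mV lam beta)) t
        rw [List.length_range] at hJ0
        refine ⟨J0, hJ0, ?_, fun h => absurd h hiMx⟩
        show ((List.range (SFLR.mV lam beta)).filterMap (SFLR.colF lam beta cstar)).take t = _
        rw [he, List.take_range, min_eq_left hJ0]
    have key : ∀ u pu, 1 ≤ u → u ≤ lam.length → pu < SFLR.mV lam beta →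
        SFLR.rpV lam beta pu = lam.length - u →
        ((((List.range Mx).reverse).flatMap (SFLR.colL lam beta)).take n).count u
          = ((SFLR.AV lam beta pu - SFLR.bV beta pu) - ((Mx - i) - SFLR.bV beta pu))
            + (if pu < J ∧ SFLR.bV beta pu ≤ cstar ∧ cstar < SFLR.AV lam beta pu
               then 1 else 0) := by
      intro u pu h1 h2 h3 h4
      rw [heq, List.count_append, SFLR.count_flat lam beta h1 h2 h3 h4, htl,
        SFLR.count_tail lam beta h1 h2 h3 h4 J hJ cstar,
        SFLR.count_full lam beta h3 i hi]
    rw [key (v - 1) p' (by omega) (by omega) hpm' (by omega),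
      key v p (by omega) hv2 hpm hrp]
    have hrplt : SFLR.rpV lam beta p < SFLR.rpV lam beta p' := by omega
    have horder := SFLR.keyA_lt_of_rp_lt lam beta hpm hpm' hrplt
    have hAb := SFLR.AV_eq lam beta hpm
    have hAb' := SFLR.AV_eq lam beta hpm'
    have hAMx : SFLR.AV lam beta p ≤ Mx := SFLR.getD_le_maxPart _ _
    have hAMx' : SFLR.AV lam beta p' ≤ Mx := SFLR.getD_le_maxPart _ _
    rcases horder with hAlt|⟨hAeq, hpp⟩
    · -- A p' < A p
      have hL := SFLR.lam_rank_mono lam beta hlam hpm hpm' hAlt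
      have haux : (p' < J ∧ SFLR.bV beta p' ≤ cstar ∧ cstar < SFLR.AV lam beta p') →
          cstar = Mx - 1 - i ∧ i < Mx := by
        intro h
        have hiMx : i < Mx := by
          rcases lt_or_eq_of_le hi with hh|hh
          · exact hh
          · exfalso
            have := hJ0 hh
            omega
        exact ⟨SFLR.getD_reverse_range hiMx, hiMx⟩
      split_ifs with h1 h2 h3
      · omega
      · obtain ⟨hcs, hiMx⟩ := haux h1
        omega
      · omega
      · omega
    · -- A p' = A p, p < p'
      have hbeq := SFLR.b_eq_of_AV_eq lam beta hlam hpm' hpm hAeq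
      split_ifs with h1 h2 h3
      · omega
      · exfalso
        exact h2 ⟨by omega, by omega, by omega⟩
      · omega
      · omega
end
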